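/- arXiv:1806.08459 — 6 statements merged into one kernel-verified Lean document; each statement's English description precedes it below -/
import Mathlib

section
/- Let ρ : ℝ → ℝ be globally Lipschitz continuous but not affine-linear, let S = (N_0, ..., N_{L-1}, 1) be a network architecture with L ≥ 2, N_0 = d, and N_1 ≥ 3, and let Ω ⊆ ℝ^d be bounded with nonempty interior. Then the realization map R_ρ^Ω, from the finite-dimensional normed space of neural networks with architecture S (with norm ‖Φ‖_total) onto its range inside C(Ω) with the sup-norm topology, is not a quotient map. -/
open scoped BigOperators ENNReal NNReal Pointwise
open Filter MeasureTheory Topology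

abbrev NNLayer (N : ℕ → ℕ) (ℓ : ℕ) : Type :=
  (Fin (N (ℓ + 1)) → Fin (N ℓ) → ℝ) × (Fin (N (ℓ + 1)) → ℝ)

abbrev NNParams (L : ℕ) (N : ℕ → ℕ) : Type :=
  (ℓ : Fin L) → NNLayer N ℓ.val

noncomputable def nnAffine {N : ℕ → ℕ} {ℓ : ℕ} (W : NNLayer N ℓ) (x : Fin (N ℓ) → ℝ) :
    Fin (N (ℓ + 1)) → ℝ :=
  fun i => (∑ j, W.1 i j * x j) + W.2 i

noncomputable def nnHidden (ρ : ℝ → ℝ) :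
    (L : ℕ) → (N : ℕ → ℕ) → NNParams L N → (Fin (N 0) → ℝ) → Fin (N L) → ℝ
  | 0, _, _, x => x
  | L + 1, N, Φ, x =>
      nnHidden ρ L (fun k => N (k + 1))
        (fun ℓ => Φ ⟨ℓ.val + 1, Nat.succ_lt_succ ℓ.isLt⟩)
        (fun i => ρ (nnAffine (Φ ⟨0, Nat.succ_pos L⟩) x i))

noncomputable def nnRealization (ρ : ℝ → ℝ) :
    (L : ℕ) → (N : ℕ → ℕ) → NNParams L N → (Fin (N 0) → ℝ) → Fin (N L) → ℝ
  | 0, _, _, x => x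
  | L + 1, N, Φ, x =>
      nnAffine (Φ ⟨L, Nat.lt_succ_self L⟩)
        (nnHidden ρ L N (fun ℓ => Φ ⟨ℓ.val, Nat.lt_succ_of_lt ℓ.isLt⟩) x)

noncomputable def nnRealizationScalar (ρ : ℝ → ℝ) (L : ℕ) (N : ℕ → ℕ) (h : N L = 1)
    (Φ : NNParams L N) (x : Fin (N 0) → ℝ) : ℝ :=
  nnRealization ρ L N Φ x ⟨0, by rw [h]; exact Nat.one_pos⟩

noncomputable def nnScalingNorm {L : ℕ} {N : ℕ → ℕ} (Φ : NNParams L N) : ℝ :=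
  ⨆ ℓ : Fin L, ‖(Φ ℓ).1‖

noncomputable def nnTotalNorm {L : ℕ} {N : ℕ → ℕ} (Φ : NNParams L N) : ℝ :=
  nnScalingNorm Φ + ⨆ ℓ : Fin L, ‖(Φ ℓ).2‖


/-- prepend a layer to a network -/
def consNet {N : ℕ → ℕ} {L : ℕ} (W : NNLayer N 0)
    (Ψ : NNParams L (fun k => N (k + 1))) : NNParams (L + 1) N :=
  fun ℓ => match ℓ with
  | ⟨0, _⟩ => W
  | ⟨k + 1, h⟩ => Ψ ⟨k, Nat.lt_of_succ_lt_succ h⟩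

lemma peel (ρ : ℝ → ℝ) (K : ℕ) (N : ℕ → ℕ) (W : NNLayer N 0)
    (Ψ : NNParams (K + 1) (fun k => N (k + 1))) (x : Fin (N 0) → ℝ) :
    nnRealization ρ (K + 2) N (consNet W Ψ) x =
      nnRealization ρ (K + 1) (fun k => N (k + 1)) Ψ (fun i => ρ (nnAffine W x i)) := rfl

/-- network: `m` repeater layers (scalar `v ↦ ρ (w v + b)` on neuron 0) followed by an
affine output layer reading neuron 0 with weight `ε`. -/
def repLast (N : ℕ → ℕ) (w b ε : ℝ) (m : ℕ) : NNParams (m + 1) N :=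
  fun ℓ =>
    if (ℓ : ℕ) = m then
      (fun _ j => if (j : ℕ) = 0 then ε else 0, fun _ => 0)
    else
      (fun i j => if (i : ℕ) = 0 ∧ (j : ℕ) = 0 then w else 0,
       fun i => if (i : ℕ) = 0 then b else 0)

lemma sum_singleI {n : ℕ} (h : 0 < n) (a : ℝ) (v : Fin n → ℝ) :
    ∑ j : Fin n, (if (j : ℕ) = 0 then a else 0) * v j = a * v ⟨0, h⟩ := by
  rw [Finset.sum_eq_single (⟨0, h⟩ : Fin n)]
  · simp
  · intro j _ hj
    have : (j : ℕ) ≠ 0 := fun hv => hj (Fin.ext hv)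
    simp [this]
  · simp

lemma repLast_eval (ρ : ℝ → ℝ) (w b ε : ℝ) :
    ∀ (m : ℕ) (N : ℕ → ℕ) (hpos : ∀ k, k ≤ m → 0 < N k) (x : Fin (N 0) → ℝ)
      (i : Fin (N (m + 1))),
      nnRealization ρ (m + 1) N (repLast N w b ε m) x i =
        ε * (fun v => ρ (w * v + b))^[m] (x ⟨0, hpos 0 (Nat.zero_le m)⟩) := by
  intro m
  induction m with
  | zero =>
      intro N hpos x i
      have h0 : 0 < N 0 := hpos 0 le_rfl
      show nnAffine _ _ i = _
      simp only [repLast, nnAffine, nnHidden, ite_true, Fin.isValue]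
      rw [sum_singleI h0]
      simp
  | succ m ih =>
      intro N hpos x i
      have hcons : repLast N w b ε (m + 1) =
          consNet (repLast N w b ε (m + 1) ⟨0, Nat.succ_pos _⟩)
            (repLast (fun k => N (k + 1)) w b ε m) := by
        funext ℓ
        match ℓ with
        | ⟨0, _⟩ => rfl
        | ⟨k + 1, hk⟩ =>
            show repLast N w b ε (m+1) ⟨k+1, hk⟩ = repLast (fun k => N (k+1)) w b ε m ⟨k, _⟩
            simp only [repLast]
            have : ((⟨k + 1, hk⟩ : Fin (m + 2)) : ℕ) = k + 1 := rfl
            by_cases hkm : k = m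
            · subst hkm; simp
            · have h1 : ¬ (k + 1 = m + 1) := fun hc => hkm (Nat.succ_injective hc)
              simp [h1, hkm]
      rw [hcons, peel]
      have hpos' : ∀ k, k ≤ m → 0 < N (k + 1) := fun k hk =>
        hpos (k + 1) (Nat.succ_le_succ hk)
      rw [ih (fun k => N (k + 1)) hpos']
      have hfl : (repLast N w b ε (m + 1) ⟨0, Nat.succ_pos _⟩) =
          ((fun (i : Fin (N 1)) (j : Fin (N 0)) => if (i : ℕ) = 0 ∧ (j : ℕ) = 0 then w else 0,
            fun i : Fin (N 1) => if (i : ℕ) = 0 then b else 0) : NNLayer N 0) := by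
        have : ((⟨0, Nat.succ_pos (m + 1)⟩ : Fin (m + 2)) : ℕ) ≠ m + 1 :=
          fun hc => Nat.succ_ne_zero m hc.symm
        simp [repLast, this]
      rw [hfl]
      have h0 : 0 < N 0 := hpos 0 (Nat.zero_le _)
      have : nnAffine (N := N) (ℓ := 0)
          ((fun (i : Fin (N 1)) (j : Fin (N 0)) => if (i : ℕ) = 0 ∧ (j : ℕ) = 0 then w else 0,
            fun i : Fin (N 1) => if (i : ℕ) = 0 then b else 0) : NNLayer N 0) x
            ⟨0, hpos' 0 (Nat.zero_le m)⟩ = w * x ⟨0, h0⟩ + b := by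
        simp only [nnAffine, Fin.isValue]
        have h00 : ((⟨0, hpos' 0 (Nat.zero_le m)⟩ : Fin (N 1)) : ℕ) = 0 := rfl
        simp only [h00, true_and, ite_true]
        rw [sum_singleI h0]
      rw [this, Function.iterate_succ_apply]

lemma hidden_lip (ρ : ℝ → ℝ) (M C NB : ℝ) (hM : 0 ≤ M) (hC : 0 ≤ C) (hNB : 0 ≤ NB)
    (hρ : ∀ a b : ℝ, |ρ a - ρ b| ≤ M * |a - b|) :
    ∀ (L : ℕ) (N : ℕ → ℕ) (Φ : NNParams L N) (e : ℝ), 0 ≤ e →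
      (∀ (ℓ : Fin L) i j, |(Φ ℓ).1 i j| ≤ C) → (∀ k, k ≤ L → (N k : ℝ) ≤ NB) →
      ∀ x y : Fin (N 0) → ℝ, (∀ j, |x j - y j| ≤ e) →
      ∀ i, |nnHidden ρ L N Φ x i - nnHidden ρ L N Φ y i| ≤ (M * (C * NB)) ^ L * e := by
  intro L
  induction L with
  | zero =>
      intro N Φ e he hent hwid x y hxy i
      simpa [nnHidden] using hxy i
  | succ L ih =>
      intro N Φ e he hent hwid x y hxy i
      have key : ∀ r : Fin (N 1),
          |ρ (nnAffine (Φ ⟨0, Nat.succ_pos L⟩) x r) - ρ (nnAffine (Φ ⟨0, Nat.succ_pos L⟩) y r)|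
            ≤ M * (C * NB) * e := by
        intro r
        have h1 : |nnAffine (Φ ⟨0, Nat.succ_pos L⟩) x r - nnAffine (Φ ⟨0, Nat.succ_pos L⟩) y r|
            ≤ C * NB * e := by
          have : nnAffine (Φ ⟨0, Nat.succ_pos L⟩) x r - nnAffine (Φ ⟨0, Nat.succ_pos L⟩) y r
              = ∑ j, (Φ ⟨0, Nat.succ_pos L⟩).1 r j * (x j - y j) := by
            simp [nnAffine, Finset.sum_sub_distrib, mul_sub]
          rw [this]
          calc |∑ j, (Φ ⟨0, Nat.succ_pos L⟩).1 r j * (x j - y j)|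
              ≤ ∑ j, |(Φ ⟨0, Nat.succ_pos L⟩).1 r j * (x j - y j)| := Finset.abs_sum_le_sum_abs _ _
            _ ≤ ∑ _j : Fin (N 0), C * e := by
                refine Finset.sum_le_sum fun j _ => ?_
                rw [abs_mul]
                exact mul_le_mul (hent _ r j) (hxy j) (abs_nonneg _) hC
            _ = (N 0 : ℝ) * (C * e) := by simp [mul_comm]
            _ ≤ NB * (C * e) := by
                exact mul_le_mul_of_nonneg_right (hwid 0 (Nat.zero_le _)) (mul_nonneg hC he)
            _ = C * NB * e := by ring
        calc |ρ (nnAffine (Φ ⟨0, Nat.succ_pos L⟩) x r) - ρ (nnAffine (Φ ⟨0, Nat.succ_pos L⟩) y r)|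
            ≤ M * |nnAffine (Φ ⟨0, Nat.succ_pos L⟩) x r - nnAffine (Φ ⟨0, Nat.succ_pos L⟩) y r| :=
              hρ _ _
          _ ≤ M * (C * NB * e) := mul_le_mul_of_nonneg_left h1 hM
          _ = M * (C * NB) * e := by ring
      have := ih (fun k => N (k + 1))
        (fun ℓ => Φ ⟨ℓ.val + 1, Nat.succ_lt_succ ℓ.isLt⟩)
        (M * (C * NB) * e)
        (by positivity)
        (fun ℓ i j => hent ⟨ℓ.val + 1, Nat.succ_lt_succ ℓ.isLt⟩ i j)
        (fun k hk => hwid (k + 1) (Nat.succ_le_succ hk))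
        (fun r => ρ (nnAffine (Φ ⟨0, Nat.succ_pos L⟩) x r))
        (fun r => ρ (nnAffine (Φ ⟨0, Nat.succ_pos L⟩) y r))
        key i
      have heq : (M * (C * NB)) ^ L * (M * (C * NB) * e) = (M * (C * NB)) ^ (L + 1) * e := by
        ring
      rw [heq] at this
      simpa [nnHidden] using this

lemma realization_lip (ρ : ℝ → ℝ) (M C NB : ℝ) (hM : 0 ≤ M) (hC : 0 ≤ C) (hNB : 0 ≤ NB)
    (hρ : ∀ a b : ℝ, |ρ a - ρ b| ≤ M * |a - b|)
    (K : ℕ) (N : ℕ → ℕ) (Φ : NNParams (K + 1) N) (e : ℝ) (he : 0 ≤ e)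
    (hent : ∀ (ℓ : Fin (K + 1)) i j, |(Φ ℓ).1 i j| ≤ C)
    (hwid : ∀ k, k ≤ K + 1 → (N k : ℝ) ≤ NB)
    (x y : Fin (N 0) → ℝ) (hxy : ∀ j, |x j - y j| ≤ e) (i : Fin (N (K + 1))) :
    |nnRealization ρ (K + 1) N Φ x i - nnRealization ρ (K + 1) N Φ y i|
      ≤ C * NB * ((M * (C * NB)) ^ K * e) := by
  have hhid := hidden_lip ρ M C NB hM hC hNB hρ K N
    (fun ℓ => Φ ⟨ℓ.val, Nat.lt_succ_of_lt ℓ.isLt⟩) e he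
    (fun ℓ i j => hent ⟨ℓ.val, Nat.lt_succ_of_lt ℓ.isLt⟩ i j)
    (fun k hk => hwid k (Nat.le_succ_of_le hk)) x y hxy
  show |nnAffine _ _ i - nnAffine _ _ i| ≤ _
  set hx := nnHidden ρ K N (fun ℓ => Φ ⟨ℓ.val, Nat.lt_succ_of_lt ℓ.isLt⟩) x with hhx
  set hy := nnHidden ρ K N (fun ℓ => Φ ⟨ℓ.val, Nat.lt_succ_of_lt ℓ.isLt⟩) y with hhy
  have : nnAffine (Φ ⟨K, Nat.lt_succ_self K⟩) hx i - nnAffine (Φ ⟨K, Nat.lt_succ_self K⟩) hy i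
      = ∑ j, (Φ ⟨K, Nat.lt_succ_self K⟩).1 i j * (hx j - hy j) := by
    simp [nnAffine, Finset.sum_sub_distrib, mul_sub]
  rw [this]
  calc |∑ j, (Φ ⟨K, Nat.lt_succ_self K⟩).1 i j * (hx j - hy j)|
      ≤ ∑ j, |(Φ ⟨K, Nat.lt_succ_self K⟩).1 i j * (hx j - hy j)| :=
        Finset.abs_sum_le_sum_abs _ _
    _ ≤ ∑ _j : Fin (N K), C * ((M * (C * NB)) ^ K * e) := by
        refine Finset.sum_le_sum fun j _ => ?_
        rw [abs_mul]
        exact mul_le_mul (hent _ i j) (hhid j) (abs_nonneg _) hC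
    _ = (N K : ℝ) * (C * ((M * (C * NB)) ^ K * e)) := by simp [mul_comm]
    _ ≤ NB * (C * ((M * (C * NB)) ^ K * e)) := by
        refine mul_le_mul_of_nonneg_right (hwid K (Nat.le_succ K)) (by positivity)
    _ = C * NB * ((M * (C * NB)) ^ K * e) := by ring

lemma hidden_cont (ρ : ℝ → ℝ) (hρc : Continuous ρ) :
    ∀ (L : ℕ) (N : ℕ → ℕ) (i : Fin (N L)),
      Continuous (fun P : NNParams L N × (Fin (N 0) → ℝ) => nnHidden ρ L N P.1 P.2 i) := by
  intro L
  induction L with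
  | zero =>
      intro N i
      exact (continuous_apply i).comp continuous_snd
  | succ L ih =>
      intro N i
      have step : Continuous (fun P : NNParams (L + 1) N × (Fin (N 0) → ℝ) =>
          ((fun ℓ : Fin L => P.1 ⟨ℓ.val + 1, Nat.succ_lt_succ ℓ.isLt⟩,
            fun r : Fin (N 1) => ρ (nnAffine (P.1 ⟨0, Nat.succ_pos L⟩) P.2 r)) :
            NNParams L (fun k => N (k + 1)) × (Fin (N 1) → ℝ))) := by
        refine Continuous.prodMk ?_ ?_
        · exact continuous_pi fun ℓ =>
            (continuous_apply (⟨ℓ.val + 1, Nat.succ_lt_succ ℓ.isLt⟩ : Fin (L + 1))).comp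
              continuous_fst
        · refine continuous_pi fun r => hρc.comp ?_
          simp only [nnAffine]
          refine Continuous.add ?_ ?_
          · refine continuous_finset_sum _ fun j _ => ?_
            have c1 : Continuous (fun P : NNParams (L + 1) N × (Fin (N 0) → ℝ) =>
                (P.1 ⟨0, Nat.succ_pos L⟩).1 r j) :=
              ((continuous_apply j).comp ((continuous_apply r).comp
                (continuous_fst.comp ((continuous_apply (⟨0, Nat.succ_pos L⟩ : Fin (L + 1))).comp
                  continuous_fst))))
            have c2 : Continuous (fun P : NNParams (L + 1) N × (Fin (N 0) → ℝ) => P.2 j) :=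
              (continuous_apply j).comp continuous_snd
            exact c1.mul c2
          · exact (continuous_apply r).comp
              (continuous_snd.comp ((continuous_apply (⟨0, Nat.succ_pos L⟩ : Fin (L + 1))).comp
                continuous_fst))
      exact (ih (fun k => N (k + 1)) i).comp step

lemma realization_cont (ρ : ℝ → ℝ) (hρc : Continuous ρ) (K : ℕ) (N : ℕ → ℕ)
    (z : Fin (N 0) → ℝ) (i : Fin (N (K + 1))) :
    Continuous (fun Φ : NNParams (K + 1) N => nnRealization ρ (K + 1) N Φ z i) := by
  show Continuous (fun Φ : NNParams (K + 1) N => nnAffine (Φ ⟨K, Nat.lt_succ_self K⟩)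
    (nnHidden ρ K N (fun ℓ => Φ ⟨ℓ.val, Nat.lt_succ_of_lt ℓ.isLt⟩) z) i)
  simp only [nnAffine]
  refine Continuous.add ?_ ?_
  · refine continuous_finset_sum _ fun j _ => ?_
    have c1 : Continuous (fun Φ : NNParams (K + 1) N => (Φ ⟨K, Nat.lt_succ_self K⟩).1 i j) :=
      (continuous_apply j).comp ((continuous_apply i).comp
        (continuous_fst.comp (continuous_apply (⟨K, Nat.lt_succ_self K⟩ : Fin (K + 1)))))
    have c2 : Continuous (fun Φ : NNParams (K + 1) N =>
        nnHidden ρ K N (fun ℓ => Φ ⟨ℓ.val, Nat.lt_succ_of_lt ℓ.isLt⟩) z j) := by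
      have := hidden_cont ρ hρc K N j
      exact this.comp (Continuous.prodMk
        (continuous_pi fun ℓ : Fin K =>
          continuous_apply (⟨ℓ.val, Nat.lt_succ_of_lt ℓ.isLt⟩ : Fin (K + 1)))
        continuous_const)
    exact c1.mul c2
  · exact (continuous_apply i).comp
      (continuous_snd.comp (continuous_apply (⟨K, Nat.lt_succ_self K⟩ : Fin (K + 1))))

lemma zero_net_eval (ρ : ℝ → ℝ) (K : ℕ) (N : ℕ → ℕ) (x : Fin (N 0) → ℝ) (i : Fin (N (K + 1))) :
    nnRealization ρ (K + 1) N (fun _ => (fun _ _ => (0 : ℝ), fun _ => (0 : ℝ))) x i = 0 := by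
  show nnAffine _ _ i = 0
  simp [nnAffine]

lemma aux_not_quotient
    (ρ : ℝ → ℝ) (M : ℝ) (hM : 0 ≤ M) (hρ : ∀ a b : ℝ, |ρ a - ρ b| ≤ M * |a - b|)
    (hρc : Continuous ρ)
    (K : ℕ) (N : ℕ → ℕ)
    (Ω : Set (Fin (N 0) → ℝ))
    (F : NNParams (K + 1) N → BoundedContinuousFunction Ω ℝ)
    (i0 : Fin (N (K + 1)))
    (hF : ∀ (Φ : NNParams (K + 1) N) (x : Ω), F Φ x = nnRealization ρ (K + 1) N Φ x.val i0)
    (net : ℕ → NNParams (K + 1) N)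
    (x1 : Fin (N 0) → ℝ) (x2 : ℕ → Fin (N 0) → ℝ) (hx1 : x1 ∈ Ω) (hx2 : ∀ n, x2 n ∈ Ω)
    (cs B D : ℝ) (hcs : 0 < cs) (hD : 0 ≤ D)
    (hsep : ∀ n : ℕ, cs / (n + 1) ≤ |F (net n) ⟨x1, hx1⟩ - F (net n) ⟨x2 n, hx2 n⟩|)
    (hcoord : ∀ (n : ℕ) (j : Fin (N 0)), |x1 j - x2 n j| ≤ D / ((n + 1) ^ 2))
    (hsup : ∀ (n : ℕ) (x : Ω), |F (net n) x| ≤ B / (n + 1)) :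
    ¬ IsQuotientMap (Set.rangeFactorization F) := by
  intro hq
  classical
  -- the zero network realizes the zero function
  set Z : NNParams (K + 1) N := (fun _ => (fun _ _ => 0, fun _ => 0)) with hZ
  have hFZ : F Z = 0 := by
    ext x
    rw [hF Z x, zero_net_eval]
    rfl
  -- the bad set
  set Mset : Set ↥(Set.range F) :=
    {y | ∃ n : ℕ, (y : BoundedContinuousFunction Ω ℝ) = F (net n)} with hMset
  have hpre : Set.rangeFactorization F ⁻¹' Mset = {Φ | ∃ n, F Φ = F (net n)} := rfl
  -- preimage is (sequentially) closed
  have hclosed : IsClosed {Φ : NNParams (K + 1) N | ∃ n, F Φ = F (net n)} := by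
    refine IsSeqClosed.isClosed ?_
    intro u p hu hup
    choose ns hns using hu
    -- uniform bound on the parameters of the sequence
    obtain ⟨C0, hC0⟩ : BddAbove (Set.range fun k => ‖u k‖) := hup.norm.bddAbove_range
    set C : ℝ := max C0 1 with hCdef
    have hC : (0 : ℝ) ≤ C := le_trans zero_le_one (le_max_right _ _)
    have hent : ∀ k (ℓ : Fin (K + 1)) i j, |(u k ℓ).1 i j| ≤ C := by
      intro k ℓ i j
      have h1 : ‖(u k ℓ).1 i j‖ ≤ ‖(u k ℓ).1 i‖ := norm_le_pi_norm _ j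
      have h2 : ‖(u k ℓ).1 i‖ ≤ ‖(u k ℓ).1‖ := norm_le_pi_norm _ i
      have h3 : ‖(u k ℓ).1‖ ≤ ‖u k ℓ‖ := norm_fst_le _
      have h4 : ‖u k ℓ‖ ≤ ‖u k‖ := norm_le_pi_norm _ ℓ
      have h5 : ‖u k‖ ≤ C0 := hC0 ⟨k, rfl⟩
      calc |(u k ℓ).1 i j| = ‖(u k ℓ).1 i j‖ := (Real.norm_eq_abs _).symm
        _ ≤ C0 := le_trans h1 (le_trans h2 (le_trans h3 (le_trans h4 h5)))
        _ ≤ C := le_max_left _ _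
    set NB : ℝ := (((Finset.range (K + 2)).sup N : ℕ) : ℝ) with hNBdef
    have hNB : (0 : ℝ) ≤ NB := Nat.cast_nonneg _
    have hwid : ∀ k, k ≤ K + 1 → (N k : ℝ) ≤ NB := by
      intro k hk
      exact_mod_cast Nat.cast_le.mpr (Finset.le_sup (f := N)
        (Finset.mem_range.mpr (Nat.lt_succ_of_le hk)))
    set A : ℝ := C * NB * ((M * (C * NB)) ^ K * D) with hAdef
    have hA : 0 ≤ A := by positivity
    -- each index is bounded
    have key : ∀ k, (ns k : ℝ) + 1 ≤ A / cs := by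
      intro k
      have h1 := hsep (ns k)
      rw [← hns k] at h1
      have e0 : (0:ℝ) < ((ns k : ℝ) + 1) := by positivity
      have hlip := realization_lip ρ M C NB hM hC hNB hρ K N (u k)
        (D / ((ns k + 1) ^ 2)) (by positivity) (hent k) hwid x1 (x2 (ns k))
        (hcoord (ns k)) i0
      have h2 : |F (u k) ⟨x1, hx1⟩ - F (u k) ⟨x2 (ns k), hx2 (ns k)⟩|
          ≤ C * NB * ((M * (C * NB)) ^ K * (D / ((ns k + 1) ^ 2))) := by
        rw [hF (u k) ⟨x1, hx1⟩, hF (u k) ⟨x2 (ns k), hx2 (ns k)⟩]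
        exact hlip
      have h3 : cs / ((ns k : ℝ) + 1) ≤ A / ((ns k : ℝ) + 1) ^ 2 := by
        refine le_trans h1 (le_trans h2 (le_of_eq ?_))
        rw [hAdef]
        ring
      have h4 : cs * ((ns k : ℝ) + 1) ≤ A := by
        have := (div_le_div_iff₀ e0 (by positivity : (0:ℝ) < ((ns k : ℝ) + 1) ^ 2)).mp h3
        nlinarith [this]
      rw [le_div_iff₀ hcs]
      linarith [h4]
    -- the indices take finitely many values
    set nstar : ℕ := Nat.floor (A / cs) with hnstar
    have hle : ∀ k, ns k ≤ nstar := by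
      intro k
      exact Nat.le_floor (by linarith [key k])
    have hfreq : ∃ n, n ≤ nstar ∧ ∃ᶠ k in atTop, ns k = n := by
      by_contra hno
      push_neg at hno
      have hev : ∀ᶠ k in atTop, ∀ n ∈ Finset.range (nstar + 1), ns k ≠ n := by
        rw [Filter.eventually_all_finset]
        intro n hn
        have := hno n (Nat.lt_succ_iff.mp (Finset.mem_range.mp hn))
        exact this
      obtain ⟨k, hk⟩ := hev.exists
      exact hk (ns k) (Finset.mem_range.mpr (Nat.lt_succ_of_le (hle k))) rfl
    obtain ⟨n, -, hfr⟩ := hfreq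
    refine ⟨n, ?_⟩
    ext z
    have hcz : Filter.Tendsto (fun k => nnRealization ρ (K + 1) N (u k) z.val i0) atTop
        (𝓝 (nnRealization ρ (K + 1) N p z.val i0)) :=
      ((realization_cont ρ hρc K N z.val i0).tendsto p).comp hup
    have hcz' : Filter.Tendsto (fun k => F (u k) z) atTop (𝓝 (F p z)) := by
      rw [hF p z]
      refine hcz.congr fun k => ?_
      rw [hF (u k) z]
    have hfr' : ∃ᶠ k in atTop, F (u k) z = F (net n) z :=
      hfr.mono fun k hk => by rw [hns k, hk]
    exact tendsto_nhds_unique_of_frequently_eq hcz' tendsto_const_nhds hfr'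
  -- Mset is closed since its preimage is
  have hMclosed : IsClosed Mset := (hq.isClosed_preimage).mp (by rw [hpre]; exact hclosed)
  -- but the zero function is in the closure of Mset and not in Mset
  have hB : 0 ≤ B := by
    have := hsup 0 ⟨x1, hx1⟩
    have h0 : (0:ℝ) ≤ B / (0 + 1) := le_trans (abs_nonneg _) (by simpa using this)
    simpa using h0
  have hy0c : (⟨F Z, ⟨Z, rfl⟩⟩ : ↥(Set.range F)) ∈ closure Mset := by
    refine mem_closure_of_tendsto (b := (atTop : Filter ℕ))
      (f := fun n : ℕ => (⟨F (net n), ⟨net n, rfl⟩⟩ : ↥(Set.range F)))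
      ?_ (Filter.Eventually.of_forall fun n => ⟨n, rfl⟩)
    rw [tendsto_subtype_rng]
    show Filter.Tendsto (fun n : ℕ => F (net n)) atTop (𝓝 (F Z))
    rw [hFZ]
    rw [tendsto_iff_norm_sub_tendsto_zero]
    simp only [sub_zero]
    have hbound : ∀ n : ℕ, ‖F (net n)‖ ≤ B / (n + 1) := by
      intro n
      refine (BoundedContinuousFunction.norm_le (by positivity)).mpr fun x => ?_
      rw [Real.norm_eq_abs]
      exact hsup n x
    refine squeeze_zero (fun n => norm_nonneg _) hbound ?_
    have h1 : Filter.Tendsto (fun n : ℕ => (n : ℝ) + 1) atTop atTop :=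
      Filter.tendsto_atTop_add_const_right atTop 1 tendsto_natCast_atTop_atTop
    exact Filter.Tendsto.div_atTop tendsto_const_nhds h1
  have hy0m : (⟨F Z, ⟨Z, rfl⟩⟩ : ↥(Set.range F)) ∉ Mset := by
    rintro ⟨n, hn⟩
    simp only at hn
    have h1 := hsep n
    rw [← hn, hFZ] at h1
    simp only [BoundedContinuousFunction.coe_zero, Pi.zero_apply, sub_zero, abs_zero] at h1
    have : (0:ℝ) < cs / (n + 1) := by positivity
    linarith
  exact hy0m (hMclosed.closure_subset hy0c)

lemma nonaffine_diff (ρ : ℝ → ℝ) (hc : Continuous ρ)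
    (haff : ¬ ∃ s t : ℝ, ∀ x : ℝ, ρ x = s * x + t) :
    ∃ δ p q : ℝ, (ρ (p + δ) - ρ p) ≠ (ρ (q + δ) - ρ q) := by
  by_contra hcon
  push_neg at hcon
  have hadd : ∀ x y : ℝ, ρ (x + y) - ρ 0 = (ρ x - ρ 0) + (ρ y - ρ 0) := by
    intro x y
    have h1 := hcon x y 0
    -- ρ (y + x) - ρ y = ρ (0 + x) - ρ 0
    have : ρ (y + x) - ρ y = ρ x - ρ 0 := by
      rw [h1]; ring_nf
    have hxy : ρ (x + y) = ρ x - ρ 0 + ρ y := by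
      rw [add_comm x y]
      linarith [this]
    rw [hxy]; ring
  set c : ℝ →+ ℝ :=
    { toFun := fun x => ρ x - ρ 0
      map_zero' := by simp
      map_add' := fun x y => hadd x y } with hcdef
  have hcc : Continuous c := by
    exact (hc.sub continuous_const : Continuous fun x => ρ x - ρ 0)
  set hlin := AddMonoidHom.toRealLinearMap c hcc with hlindef
  have hcoe : ∀ x : ℝ, hlin x = ρ x - ρ 0 := fun x => rfl
  have : ∀ x : ℝ, ρ x = (ρ 1 - ρ 0) * x + ρ 0 := by
    intro x
    have h1 : hlin x = x • hlin 1 := by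
      have := hlin.map_smul x (1 : ℝ)
      simpa using this
    rw [hcoe x, hcoe 1] at h1
    simp only [smul_eq_mul] at h1
    linarith [h1]
  exact haff ⟨ρ 1 - ρ 0, ρ 0, this⟩

lemma nonconst_of_nonaffine (ρ : ℝ → ℝ)
    (haff : ¬ ∃ s t : ℝ, ∀ x : ℝ, ρ x = s * x + t) :
    ∃ u v : ℝ, ρ u ≠ ρ v := by
  by_contra hcon
  push_neg at hcon
  exact haff ⟨0, ρ 0, fun x => by rw [hcon x 0]; ring⟩

lemma sum_pair {n : ℕ} (h : 1 < n) (a b : ℝ) (v : Fin n → ℝ) :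
    ∑ j : Fin n, (if (j : ℕ) = 0 then a else if (j : ℕ) = 1 then b else 0) * v j
      = a * v ⟨0, Nat.lt_of_lt_of_le Nat.one_pos (le_of_lt h)⟩ + b * v ⟨1, h⟩ := by
  classical
  have h0 : 0 < n := Nat.lt_of_lt_of_le Nat.one_pos (le_of_lt h)
  have key : ∀ j : Fin n,
      (if (j : ℕ) = 0 then a else if (j : ℕ) = 1 then b else 0) * v j
        = (if j = (⟨0, h0⟩ : Fin n) then a * v ⟨0, h0⟩ else 0)
          + (if j = (⟨1, h⟩ : Fin n) then b * v ⟨1, h⟩ else 0) := by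
    intro j
    by_cases hj0 : (j : ℕ) = 0
    · have hj : j = ⟨0, h0⟩ := Fin.ext hj0
      subst hj
      simp
    · by_cases hj1 : (j : ℕ) = 1
      · have hj : j = ⟨1, h⟩ := Fin.ext hj1
        subst hj
        simp
      · have hne0 : j ≠ ⟨0, h0⟩ := fun hc => hj0 (by rw [hc])
        have hne1 : j ≠ ⟨1, h⟩ := fun hc => hj1 (by rw [hc])
        simp [hj0, hj1, hne0, hne1]
  rw [Finset.sum_congr rfl fun j _ => key j, Finset.sum_add_distrib]
  rw [Finset.sum_ite_eq' Finset.univ (⟨0, h0⟩ : Fin n),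
    Finset.sum_ite_eq' Finset.univ (⟨1, h⟩ : Fin n)]
  simp

lemma iter_lip (ρ : ℝ → ℝ) (M : ℝ) (hM : 0 ≤ M)
    (hρ : ∀ a b : ℝ, |ρ a - ρ b| ≤ M * |a - b|) (w b : ℝ) :
    ∀ (m : ℕ) (s t : ℝ),
      |(fun v => ρ (w * v + b))^[m] s - (fun v => ρ (w * v + b))^[m] t|
        ≤ (M * |w|) ^ m * |s - t| := by
  intro m
  induction m with
  | zero => intro s t; simp
  | succ m ih =>
      intro s t
      rw [Function.iterate_succ_apply, Function.iterate_succ_apply]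
      calc |(fun v => ρ (w * v + b))^[m] (ρ (w * s + b)) -
            (fun v => ρ (w * v + b))^[m] (ρ (w * t + b))|
          ≤ (M * |w|) ^ m * |ρ (w * s + b) - ρ (w * t + b)| := ih _ _
        _ ≤ (M * |w|) ^ m * (M * |w| * |s - t|) := by
            refine mul_le_mul_of_nonneg_left ?_ (by positivity)
            calc |ρ (w * s + b) - ρ (w * t + b)| ≤ M * |w * s + b - (w * t + b)| := hρ _ _
              _ = M * |w| * |s - t| := by
                  rw [show w * s + b - (w * t + b) = w * (s - t) by ring, abs_mul]
                  ring
        _ = (M * |w|) ^ (m + 1) * |s - t| := by ring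

lemma sum_singleI' {n : ℕ} (h : 0 < n) (a : ℝ) (v : Fin n → ℝ) :
    ∑ j : Fin n, (if (j : ℕ) = 0 then a * v j else 0) = a * v ⟨0, h⟩ := by
  rw [Finset.sum_eq_single (⟨0, h⟩ : Fin n)]
  · simp
  · intro j _ hj
    have : (j : ℕ) ≠ 0 := fun hv => hj (Fin.ext hv)
    simp [this]
  · simp

lemma sum_pair_neg {n : ℕ} (h : 1 < n) (a : ℝ) (v : Fin n → ℝ) :
    ∑ j : Fin n, (if (j : ℕ) = 0 then a * v j else if (j : ℕ) = 1 then -(a * v j) else 0)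
      = a * v ⟨0, Nat.lt_of_lt_of_le Nat.one_pos (le_of_lt h)⟩ - a * v ⟨1, h⟩ := by
  classical
  have h0 : 0 < n := Nat.lt_of_lt_of_le Nat.one_pos (le_of_lt h)
  have key : ∀ j : Fin n,
      (if (j : ℕ) = 0 then a * v j else if (j : ℕ) = 1 then -(a * v j) else 0)
        = (if j = (⟨0, h0⟩ : Fin n) then a * v ⟨0, h0⟩ else 0)
          + (if j = (⟨1, h⟩ : Fin n) then -(a * v ⟨1, h⟩) else 0) := by
    intro j
    by_cases hj0 : (j : ℕ) = 0
    · have hj : j = ⟨0, h0⟩ := Fin.ext hj0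
      subst hj
      simp
    · by_cases hj1 : (j : ℕ) = 1
      · have hj : j = ⟨1, h⟩ := Fin.ext hj1
        subst hj
        simp
      · have hne0 : j ≠ ⟨0, h0⟩ := fun hc => hj0 (by rw [hc])
        have hne1 : j ≠ ⟨1, h⟩ := fun hc => hj1 (by rw [hc])
        simp [hj0, hj1, hne0, hne1]
  rw [Finset.sum_congr rfl fun j _ => key j, Finset.sum_add_distrib]
  rw [Finset.sum_ite_eq' Finset.univ (⟨0, h0⟩ : Fin n),
    Finset.sum_ite_eq' Finset.univ (⟨1, h⟩ : Fin n)]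
  simp
  ring

/-- Under the assumptions of the inverse-stability theorem, the realization
map (bundled as a map into the bounded continuous functions on `Ω`, with the sup-norm),
corestricted onto its range, is not a quotient map. -/
theorem stmt10 (L : ℕ) (hL : 2 ≤ L) (N : ℕ → ℕ) (hN : ∀ ℓ ≤ L, 0 < N ℓ) (hNL : N L = 1)
    (hN1 : 3 ≤ N 1)
    (Ω : Set (Fin (N 0) → ℝ)) (hbdd : Bornology.IsBounded Ω) (hint : (interior Ω).Nonempty)
    (ρ : ℝ → ℝ) (hρ : ∃ M : ℝ≥0, LipschitzWith M ρ)
    (haff : ¬ ∃ s t : ℝ, ∀ x : ℝ, ρ x = s * x + t)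
    (F : NNParams L N → BoundedContinuousFunction Ω ℝ)
    (hF : ∀ (Φ : NNParams L N) (x : Ω), F Φ x = nnRealizationScalar ρ L N hNL Φ x.val) :
    ¬ IsQuotientMap (Set.rangeFactorization F) := by
  classical
  obtain ⟨Mnn, hlipnn⟩ := hρ
  set M : ℝ := max (Mnn : ℝ) 1 with hMdef
  have hM : (0:ℝ) ≤ M := le_trans zero_le_one (le_max_right _ _)
  have hρab : ∀ a b : ℝ, |ρ a - ρ b| ≤ M * |a - b| := by
    intro a b
    have h1 := hlipnn.dist_le_mul a b
    rw [Real.dist_eq, Real.dist_eq] at h1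
    calc |ρ a - ρ b| ≤ (Mnn:ℝ) * |a - b| := h1
      _ ≤ M * |a - b| := mul_le_mul_of_nonneg_right (le_max_left _ _) (abs_nonneg _)
  have hρc : Continuous ρ := hlipnn.continuous
  obtain ⟨δ, p, q, hg⟩ := nonaffine_diff ρ hρc haff
  set g : ℝ → ℝ := fun t => ρ (t + δ) - ρ t with hgdef
  have hgpq : g p ≠ g q := hg
  have hgbd : ∀ t, |g t| ≤ M * |δ| := by
    intro t
    calc |g t| = |ρ (t + δ) - ρ t| := rfl
      _ ≤ M * |t + δ - t| := hρab _ _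
      _ = M * |δ| := by ring_nf
  obtain ⟨u', v', huv⟩ := nonconst_of_nonaffine ρ haff
  -- geometry of Ω
  obtain ⟨xb, hxb⟩ := hint
  have hx1Ω : xb ∈ Ω := interior_subset hxb
  obtain ⟨r, hr, hball⟩ := Metric.isOpen_iff.mp isOpen_interior xb hxb
  have hj0pos : 0 < N 0 := hN 0 (le_trans (by norm_num) hL)
  set j0 : Fin (N 0) := ⟨0, hj0pos⟩ with hj0def
  set κ : ℝ := |p - q| / r + 1 with hκdef
  have hκ : 0 < κ := by positivity
  set D : ℝ := |p - q| / κ with hDdef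
  have hD : 0 ≤ D := by positivity
  have hDr : D < r := by
    rw [hDdef, div_lt_iff₀ hκ, hκdef]
    have : r * (|p - q| / r + 1) = |p - q| + r := by field_simp
    nlinarith [this]
  set Kn : ℕ → ℝ := fun n => ((n:ℝ)+1)^2 * κ with hKndef
  have hKn : ∀ n, 0 < Kn n := fun n => by positivity
  set bn : ℕ → ℝ := fun n => p - Kn n * xb j0 with hbndef
  set εe : ℕ → ℝ := fun n => 1 / ((n:ℝ)+1) with hεedef
  have hεe : ∀ n, 0 < εe n := fun n => by positivity
  set x2 : ℕ → (Fin (N 0) → ℝ) :=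
    fun n => Function.update xb j0 (xb j0 + (q - p)/(Kn n)) with hx2def
  have hcoordb : ∀ (n : ℕ) (j : Fin (N 0)), |xb j - x2 n j| ≤ D / ((n:ℝ)+1)^2 := by
    intro n j
    by_cases hj : j = j0
    · subst hj
      rw [hx2def]
      simp only [Function.update_self]
      have h1 : xb j0 - (xb j0 + (q - p) / Kn n) = -((q - p) / Kn n) := by ring
      rw [h1, abs_neg, abs_div, abs_of_pos (hKn n), hKndef, hDdef, abs_sub_comm q p]
      refine le_of_eq ?_
      rw [div_div]
      ring_nf
    · rw [hx2def]
      simp only [Function.update_of_ne hj]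
      simp only [sub_self, abs_zero]
      positivity
  have hx2Ω : ∀ n, x2 n ∈ Ω := by
    intro n
    refine interior_subset (hball ?_)
    rw [Metric.mem_ball]
    have hdist : dist (x2 n) xb ≤ D := by
      rw [dist_pi_le_iff hD]
      intro j
      rw [Real.dist_eq]
      have h2 := hcoordb n j
      rw [abs_sub_comm] at h2
      refine le_trans h2 (div_le_self hD ?_)
      nlinarith [Nat.cast_nonneg (α := ℝ) n]
    exact lt_of_le_of_lt hdist hDr
  have hθ1 : ∀ n, Kn n * xb j0 + bn n = p := by
    intro n; rw [hbndef]; ring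
  have hθ2 : ∀ n, Kn n * (x2 n) j0 + bn n = q := by
    intro n
    rw [hx2def]
    simp only [Function.update_self]
    rw [hbndef]
    have hKne := ne_of_gt (hKn n)
    field_simp
    ring
  -- first layer
  set W0 : ℕ → NNLayer N 0 := fun n =>
    (fun i j => if ((i:ℕ) = 0 ∨ (i:ℕ) = 1) ∧ (j:ℕ) = 0 then Kn n else 0,
     fun i => if (i:ℕ) = 0 then bn n + δ else if (i:ℕ) = 1 then bn n else 0) with hW0def
  have h01 : 0 < N 1 := by omega
  have h11 : 1 < N 1 := by omega
  have haff0 : ∀ n x (i : Fin (N 1)), (i : ℕ) = 0 →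
      nnAffine (W0 n) x i = Kn n * x j0 + (bn n + δ) := by
    intro n x i hi
    simp only [nnAffine, hW0def, hi]
    norm_num
    rw [sum_singleI' hj0pos]
  have haff1 : ∀ n x (i : Fin (N 1)), (i : ℕ) = 1 →
      nnAffine (W0 n) x i = Kn n * x j0 + bn n := by
    intro n x i hi
    simp only [nnAffine, hW0def, hi]
    norm_num
    rw [sum_singleI' hj0pos]
  -- peel off the output dimension
  obtain ⟨K, rfl⟩ : ∃ K, L = K + 1 := ⟨L - 1, by omega⟩
  have hi0 : 0 < N (K + 1) := by rw [hNL]; exact Nat.one_pos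
  have hF' : ∀ (Φ : NNParams (K + 1) N) (x : Ω),
      F Φ x = nnRealization ρ (K + 1) N Φ x.val ⟨0, hi0⟩ := fun Φ x => hF Φ x
  have hcs2 : (0:ℝ) < |g p - g q| := abs_pos.mpr (sub_ne_zero.mpr hgpq)
  rcases K with _ | K
  · exact absurd hL (by norm_num)
  rcases K with _ | m
  · -- the case L = 2
    set last2 : ℕ → NNParams 1 (fun k => N (k + 1)) := fun n => fun _ =>
      (fun _ j => if (j : ℕ) = 0 then εe n else if (j : ℕ) = 1 then -(εe n) else 0,
       fun _ => 0) with hlast2def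
    set netf : ℕ → NNParams 2 N := fun n => consNet (W0 n) (last2 n) with hnetfdef
    have heval : ∀ n x (i : Fin (N 2)),
        nnRealization ρ 2 N (netf n) x i = εe n * g (Kn n * x j0 + bn n) := by
      intro n x i
      have e1 := congrFun (peel ρ 0 N (W0 n) (last2 n) x) i
      refine e1.trans ?_
      set y : Fin (N 1) → ℝ := fun r => ρ (nnAffine (W0 n) x r) with hydef
      show nnAffine ((last2 n) ⟨0, Nat.lt_succ_self 0⟩) y i = _
      simp only [hlast2def, nnAffine]
      rw [sum_pair h11]
      have hy0 : y ⟨0, Nat.lt_of_lt_of_le Nat.one_pos (le_of_lt h11)⟩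
          = ρ (Kn n * x j0 + (bn n + δ)) := by
        rw [hydef]
        exact congrArg ρ (haff0 n x _ rfl)
      have hy1 : y ⟨1, h11⟩ = ρ (Kn n * x j0 + bn n) := by
        rw [hydef]
        exact congrArg ρ (haff1 n x _ rfl)
      rw [hy0, hy1]
      simp only [hgdef]
      ring_nf
    have hsep : ∀ n : ℕ, |g p - g q| / ((n:ℝ) + 1) ≤
        |F (netf n) ⟨xb, hx1Ω⟩ - F (netf n) ⟨x2 n, hx2Ω n⟩| := by
      intro n
      rw [hF' (netf n) ⟨xb, hx1Ω⟩, hF' (netf n) ⟨x2 n, hx2Ω n⟩]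
      rw [heval n xb _, heval n (x2 n) _, hθ1 n, hθ2 n]
      rw [← mul_sub, abs_mul, abs_of_pos (hεe n), hεedef]
      refine le_of_eq ?_
      field_simp
    have hsup : ∀ (n : ℕ) (x : Ω), |F (netf n) x| ≤ (M * |δ|) / ((n:ℝ) + 1) := by
      intro n x
      rw [hF' (netf n) x, heval n x.val _]
      rw [abs_mul, abs_of_pos (hεe n), hεedef]
      calc 1 / ((n:ℝ) + 1) * |g (Kn n * x.val j0 + bn n)|
          ≤ 1 / ((n:ℝ) + 1) * (M * |δ|) := by
            refine mul_le_mul_of_nonneg_left (hgbd _) (by positivity)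
        _ = (M * |δ|) / ((n:ℝ) + 1) := by ring
    exact aux_not_quotient ρ M hM hρab hρc 1 N Ω F ⟨0, hi0⟩ hF' netf xb x2 hx1Ω hx2Ω
      (|g p - g q|) (M * |δ|) D hcs2 hD hsep hcoordb hsup
  · -- the case L = m + 3
    have hρuv : ρ u' - ρ v' ≠ 0 := sub_ne_zero.mpr huv
    have hgpqne : g p - g q ≠ 0 := sub_ne_zero.mpr hgpq
    set w2 : ℝ := (u' - v') / (g p - g q) with hw2def
    set b2 : ℝ := u' - w2 * g p with hb2def
    set wst : ℝ := (u' - v') / (ρ u' - ρ v') with hwstdef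
    set bst : ℝ := u' - wst * ρ u' with hbstdef
    have hmap2p : w2 * g p + b2 = u' := by rw [hb2def]; ring
    have hmap2q : w2 * g q + b2 = v' := by
      rw [hb2def, hw2def]; field_simp; ring
    have hfixu : wst * ρ u' + bst = u' := by rw [hbstdef]; ring
    have hfixv : wst * ρ v' + bst = v' := by
      rw [hbstdef, hwstdef]; field_simp; ring
    have hTu : ∀ k : ℕ, (fun v => ρ (wst * v + bst))^[k] (ρ u') = ρ u' := by
      intro k
      refine Function.iterate_fixed ?_ k
      show ρ (wst * ρ u' + bst) = ρ u'
      rw [hfixu]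
    have hTv : ∀ k : ℕ, (fun v => ρ (wst * v + bst))^[k] (ρ v') = ρ v' := by
      intro k
      refine Function.iterate_fixed ?_ k
      show ρ (wst * ρ v' + bst) = ρ v'
      rw [hfixv]
    set N2 : ℕ → ℕ := fun k => N (k + 2) with hN2def
    have hpos2 : ∀ k, k ≤ m → 0 < N2 k := fun k hk => hN (k + 2) (by omega)
    have h02 : 0 < N 2 := hN 2 (by omega)
    set combL : NNLayer (fun k => N (k + 1)) 0 :=
      (fun i j => if (i : ℕ) = 0 then
          (if (j : ℕ) = 0 then w2 else if (j : ℕ) = 1 then -w2 else 0) else 0,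
       fun i => if (i : ℕ) = 0 then b2 else 0) with hcombdef
    have haffc : ∀ (yy : Fin (N 1) → ℝ) (i2 : Fin (N 2)), (i2 : ℕ) = 0 →
        nnAffine combL yy i2 =
          w2 * yy ⟨0, Nat.lt_of_lt_of_le Nat.one_pos (le_of_lt h11)⟩ - w2 * yy ⟨1, h11⟩ + b2 := by
      intro yy i2 hi
      simp only [nnAffine, hcombdef, hi]
      norm_num
      rw [sum_pair_neg h11]
    set netf : ℕ → NNParams (m + 3) N := fun n =>
      consNet (W0 n) (consNet combL (repLast N2 wst bst (εe n) m)) with hnetfdef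
    have heval : ∀ n x (i : Fin (N (m + 3))),
        nnRealization ρ (m + 3) N (netf n) x i
          = εe n * (fun v => ρ (wst * v + bst))^[m]
              (ρ (w2 * g (Kn n * x j0 + bn n) + b2)) := by
      intro n x i
      have e1 := congrFun
        (peel ρ (m + 1) N (W0 n) (consNet combL (repLast N2 wst bst (εe n) m)) x) i
      set y : Fin (N 1) → ℝ := fun r => ρ (nnAffine (W0 n) x r) with hydef
      have e2 := congrFun (peel ρ m (fun k => N (k + 1)) combL
        (repLast N2 wst bst (εe n) m) y) i
      set z : Fin (N 2) → ℝ := fun r => ρ (nnAffine combL y r) with hzdef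
      have e3 := repLast_eval ρ wst bst (εe n) m N2 hpos2 z i
      refine e1.trans (e2.trans (e3.trans ?_))
      congr 1
      have hz0 : z ⟨0, hpos2 0 (Nat.zero_le m)⟩
          = ρ (w2 * g (Kn n * x j0 + bn n) + b2) := by
        rw [hzdef]
        refine congrArg ρ ?_
        rw [haffc y _ rfl]
        have hy0 : y ⟨0, Nat.lt_of_lt_of_le Nat.one_pos (le_of_lt h11)⟩
            = ρ (Kn n * x j0 + (bn n + δ)) := by
          rw [hydef]
          exact congrArg ρ (haff0 n x _ rfl)
        have hy1 : y ⟨1, h11⟩ = ρ (Kn n * x j0 + bn n) := by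
          rw [hydef]
          exact congrArg ρ (haff1 n x _ rfl)
        rw [hy0, hy1]
        simp only [hgdef]
        ring_nf
      rw [hz0]
    have hcs3 : (0:ℝ) < |ρ u' - ρ v'| := abs_pos.mpr hρuv
    set Bco : ℝ := (M * |wst|) ^ m * (M * |w2| * (2 * (M * |δ|))) + |ρ u'| with hBcodef
    have hsep : ∀ n : ℕ, |ρ u' - ρ v'| / ((n:ℝ) + 1) ≤
        |F (netf n) ⟨xb, hx1Ω⟩ - F (netf n) ⟨x2 n, hx2Ω n⟩| := by
      intro n
      rw [hF' (netf n) ⟨xb, hx1Ω⟩, hF' (netf n) ⟨x2 n, hx2Ω n⟩]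
      rw [heval n xb _, heval n (x2 n) _, hθ1 n, hθ2 n, hmap2p, hmap2q, hTu m, hTv m]
      rw [← mul_sub, abs_mul, abs_of_pos (hεe n), hεedef]
      refine le_of_eq ?_
      field_simp
    have hsup : ∀ (n : ℕ) (x : Ω), |F (netf n) x| ≤ Bco / ((n:ℝ) + 1) := by
      intro n x
      rw [hF' (netf n) x, heval n x.val _]
      rw [abs_mul, abs_of_pos (hεe n), hεedef]
      have harg : |(fun v => ρ (wst * v + bst))^[m]
          (ρ (w2 * g (Kn n * x.val j0 + bn n) + b2))| ≤ Bco := by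
        set a : ℝ := ρ (w2 * g (Kn n * x.val j0 + bn n) + b2) with hadef
        have hd : |a - ρ u'| ≤ M * |w2| * (2 * (M * |δ|)) := by
          rw [hadef]
          calc |ρ (w2 * g (Kn n * x.val j0 + bn n) + b2) - ρ u'|
              = |ρ (w2 * g (Kn n * x.val j0 + bn n) + b2) - ρ (w2 * g p + b2)| := by
                rw [hmap2p]
            _ ≤ M * |w2 * g (Kn n * x.val j0 + bn n) + b2 - (w2 * g p + b2)| := hρab _ _
            _ = M * (|w2| * |g (Kn n * x.val j0 + bn n) - g p|) := by
                rw [show w2 * g (Kn n * x.val j0 + bn n) + b2 - (w2 * g p + b2)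
                  = w2 * (g (Kn n * x.val j0 + bn n) - g p) by ring, abs_mul]
            _ ≤ M * (|w2| * (2 * (M * |δ|))) := by
                refine mul_le_mul_of_nonneg_left (mul_le_mul_of_nonneg_left ?_ (abs_nonneg _)) hM
                calc |g (Kn n * x.val j0 + bn n) - g p|
                    ≤ |g (Kn n * x.val j0 + bn n)| + |g p| := abs_sub _ _
                  _ ≤ M * |δ| + M * |δ| := add_le_add (hgbd _) (hgbd _)
                  _ = 2 * (M * |δ|) := by ring
            _ = M * |w2| * (2 * (M * |δ|)) := by ring
        have hiter := iter_lip ρ M hM hρab wst bst m a (ρ u')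
        calc |(fun v => ρ (wst * v + bst))^[m] a|
            = |((fun v => ρ (wst * v + bst))^[m] a
                - (fun v => ρ (wst * v + bst))^[m] (ρ u'))
                + (fun v => ρ (wst * v + bst))^[m] (ρ u')| := by
              rw [sub_add_cancel]
          _ ≤ |(fun v => ρ (wst * v + bst))^[m] a
                - (fun v => ρ (wst * v + bst))^[m] (ρ u')|
                + |(fun v => ρ (wst * v + bst))^[m] (ρ u')| := abs_add_le _ _
          _ ≤ (M * |wst|) ^ m * |a - ρ u'| + |ρ u'| := by
              refine add_le_add hiter (le_of_eq ?_)
              rw [hTu m]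
          _ ≤ (M * |wst|) ^ m * (M * |w2| * (2 * (M * |δ|))) + |ρ u'| := by
              refine add_le_add (mul_le_mul_of_nonneg_left hd (by positivity)) le_rfl
          _ = Bco := by rw [hBcodef]
      calc 1 / ((n:ℝ) + 1) * |(fun v => ρ (wst * v + bst))^[m]
            (ρ (w2 * g (Kn n * x.val j0 + bn n) + b2))|
          ≤ 1 / ((n:ℝ) + 1) * Bco := by
            refine mul_le_mul_of_nonneg_left harg (by positivity)
        _ = Bco / ((n:ℝ) + 1) := by ring
    exact aux_not_quotient ρ M hM hρab hρc (m + 2) N Ω F ⟨0, hi0⟩ hF' netf xb x2 hx1Ω hx2Ω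
      (|ρ u' - ρ v'|) Bco D hcs3 hD hsep hcoordb hsup
end

section
/- Let S = (d, N_1, ..., N_L) be a neural network architecture with N_0 := d, let M ∈ ℕ, let ρ : ℝ → ℝ be locally Lipschitz continuous, let Ω ⊆ ℝ^d be compact, and let Λ : C(Ω; ℝ^{N_L}) → ℝ^M be locally Lipschitz continuous with respect to the sup norm on C(Ω; ℝ^{N_L}). If M > Σ_{ℓ=1}^L (N_{ℓ-1} + 1) N_ℓ, then the image Λ(RNN_ρ^Ω(S)) ⊆ ℝ^M is a set of Lebesgue measure zero. -/
open scoped BigOperators ENNReal NNReal Pointwise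
open Filter MeasureTheory Topology

set_option maxHeartbeats 2000000

/- ### Auxiliary lemmas -/

lemma pi_locallyLipschitz {α : Type*} [PseudoEMetricSpace α] {ι : Type*} [Fintype ι]
    {π : ι → Type*} [∀ i, PseudoEMetricSpace (π i)] {f : α → ∀ i, π i}
    (h : ∀ i, LocallyLipschitz fun a => f a i) : LocallyLipschitz f := by
  classical
  intro x
  choose K t ht hK using fun i => h i x
  refine ⟨Finset.univ.sup K, ⋂ i, t i, (Filter.iInter_mem).2 ht, fun a ha b hb => ?_⟩
  rw [edist_pi_def]
  refine Finset.sup_le fun i _ => ?_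
  calc edist (f a i) (f b i) ≤ K i * edist a b :=
        hK i (Set.mem_iInter.1 ha i) (Set.mem_iInter.1 hb i)
    _ ≤ Finset.univ.sup K * edist a b := by
        gcongr
        exact_mod_cast Finset.le_sup (Finset.mem_univ i)

lemma ll_comp_fused {α β γ : Type*} [PseudoEMetricSpace α] [PseudoEMetricSpace β]
    [PseudoEMetricSpace γ] {f : β → γ} {g : α → β}
    (hf : LocallyLipschitz f) (hg : LocallyLipschitz g) :
    LocallyLipschitz fun a => f (g a) :=
  hf.comp hg

lemma ll_comp₂ {α β γ δ : Type*} [PseudoEMetricSpace α] [PseudoEMetricSpace β]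
    [PseudoEMetricSpace γ] [PseudoEMetricSpace δ] {f : β × γ → δ} {g : α → β} {h : α → γ}
    (hf : LocallyLipschitz f) (hg : LocallyLipschitz g) (hh : LocallyLipschitz h) :
    LocallyLipschitz fun a => f (g a, h a) :=
  hf.comp (hg.prodMk hh)

lemma ll_eval {ι : Type*} [Fintype ι] {π : ι → Type*} [∀ i, PseudoEMetricSpace (π i)]
    {α : Type*} [PseudoEMetricSpace α] {g : α → ∀ j, π j} (hg : LocallyLipschitz g) (i : ι) :
    LocallyLipschitz fun a => g a i :=
  ll_comp_fused ((LipschitzWith.eval i).locallyLipschitz) hg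

lemma affine_locallyLipschitz (N : ℕ → ℕ) (ℓ : ℕ) :
    LocallyLipschitz (fun p : NNLayer N ℓ × (Fin (N ℓ) → ℝ) => nnAffine p.1 p.2) := by
  have h : ContDiff ℝ 1 (fun p : NNLayer N ℓ × (Fin (N ℓ) → ℝ) => nnAffine p.1 p.2) := by
    rw [contDiff_pi]
    intro i
    unfold nnAffine
    refine ContDiff.add (ContDiff.sum fun j _ => ContDiff.mul ?_ ?_) ?_ <;> fun_prop
  exact h.locallyLipschitz

lemma affine_comp {α : Type*} [PseudoEMetricSpace α] (N : ℕ → ℕ) (ℓ : ℕ)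
    {W : α → NNLayer N ℓ} {x : α → Fin (N ℓ) → ℝ}
    (hW : LocallyLipschitz W) (hx : LocallyLipschitz x) :
    LocallyLipschitz fun a => nnAffine (W a) (x a) :=
  ll_comp₂ (affine_locallyLipschitz N ℓ) hW hx

lemma hidden_comp (ρ : ℝ → ℝ) (hρ : LocallyLipschitz ρ) :
    ∀ (L : ℕ) (N : ℕ → ℕ) {α : Type} [PseudoEMetricSpace α]
      {Φ : α → NNParams L N} {x : α → Fin (N 0) → ℝ},
      LocallyLipschitz Φ → LocallyLipschitz x →
      LocallyLipschitz fun a => nnHidden ρ L N (Φ a) (x a)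
  | 0, N, α, _, Φ, x, hΦ, hx => by
      simp only [nnHidden]
      exact hx
  | L + 1, N, α, _, Φ, x, hΦ, hx => by
      simp only [nnHidden]
      have hΦ' : LocallyLipschitz fun a =>
          (fun ℓ : Fin L => Φ a ⟨ℓ.val + 1, Nat.succ_lt_succ ℓ.isLt⟩) :=
        pi_locallyLipschitz fun ℓ => ll_eval hΦ _
      have hact : LocallyLipschitz fun a =>
          (fun i => ρ (nnAffine (Φ a ⟨0, Nat.succ_pos L⟩) (x a) i)) := by
        refine pi_locallyLipschitz fun i => ?_
        exact ll_comp_fused hρ (ll_eval (affine_comp N 0 (ll_eval hΦ _) hx) i)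
      exact hidden_comp ρ hρ L (fun k => N (k + 1)) hΦ' hact

lemma realization_comp (ρ : ℝ → ℝ) (hρ : LocallyLipschitz ρ) (L : ℕ) (N : ℕ → ℕ)
    {α : Type} [PseudoEMetricSpace α] {Φ : α → NNParams L N} {x : α → Fin (N 0) → ℝ}
    (hΦ : LocallyLipschitz Φ) (hx : LocallyLipschitz x) :
    LocallyLipschitz fun a => nnRealization ρ L N (Φ a) (x a) := by
  cases L with
  | zero =>
      simp only [nnRealization]
      exact hx
  | succ L =>
      simp only [nnRealization]
      have hinit : LocallyLipschitz fun a =>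
          (fun ℓ : Fin L => Φ a ⟨ℓ.val, Nat.lt_succ_of_lt ℓ.isLt⟩) :=
        pi_locallyLipschitz fun ℓ => ll_eval hΦ _
      exact affine_comp N L (ll_eval hΦ _) (hidden_comp ρ hρ L N hinit hx)

lemma realization_locallyLipschitz (ρ : ℝ → ℝ) (hρ : LocallyLipschitz ρ) (L : ℕ) (N : ℕ → ℕ) :
    LocallyLipschitz (fun p : NNParams L N × (Fin (N 0) → ℝ) => nnRealization ρ L N p.1 p.2) :=
  realization_comp ρ hρ L N LipschitzWith.prod_fst.locallyLipschitz
    LipschitzWith.prod_snd.locallyLipschitz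

lemma nnparams_finrank (L : ℕ) (N : ℕ → ℕ) :
    Module.finrank ℝ (NNParams L N) = ∑ ℓ ∈ Finset.range L, (N ℓ + 1) * N (ℓ + 1) := by
  have hlayer : ∀ ℓ : ℕ, Module.finrank ℝ (NNLayer N ℓ) = (N ℓ + 1) * N (ℓ + 1) := by
    intro ℓ
    have h1 : Module.finrank ℝ (NNLayer N ℓ) =
        Module.finrank ℝ (Fin (N (ℓ + 1)) → Fin (N ℓ) → ℝ) +
        Module.finrank ℝ (Fin (N (ℓ + 1)) → ℝ) := Module.finrank_prod
    have h2 : Module.finrank ℝ (Fin (N (ℓ + 1)) → Fin (N ℓ) → ℝ) = N (ℓ + 1) * N ℓ := by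
      rw [Module.finrank_pi_fintype]
      simp [Module.finrank_fintype_fun_eq_card]
    have h3 : Module.finrank ℝ (Fin (N (ℓ + 1)) → ℝ) = N (ℓ + 1) := by
      simp [Module.finrank_fintype_fun_eq_card]
    rw [h1, h2, h3]
    ring
  have h0 : Module.finrank ℝ (NNParams L N) = ∑ ℓ : Fin L, Module.finrank ℝ (NNLayer N ℓ.val) :=
    Module.finrank_pi_fintype ℝ
  rw [h0, ← Fin.sum_univ_eq_sum_range (fun ℓ => (N ℓ + 1) * N (ℓ + 1)) L]
  exact Finset.sum_congr rfl fun ℓ _ => hlayer ℓ.val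

/-- If `Λ : C(Ω; ℝ^{N L}) → ℝ^M` is locally Lipschitz (w.r.t. the sup norm)
and `M` exceeds the number of network parameters, then the image under `Λ` of the set of
realizations is a Lebesgue null set. -/
theorem stmt12 (L M : ℕ) (hL : 1 ≤ L) (N : ℕ → ℕ) (hN : ∀ ℓ ≤ L, 0 < N ℓ)
    (ρ : ℝ → ℝ) (hρ : LocallyLipschitz ρ)
    (Ω : Set (Fin (N 0) → ℝ)) (hΩ : IsCompact Ω)
    (hM : (∑ ℓ ∈ Finset.range L, (N ℓ + 1) * N (ℓ + 1)) < M) :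
    haveI : CompactSpace Ω := isCompact_iff_compactSpace.mp hΩ
    ∀ Λ : C(Ω, Fin (N L) → ℝ) → (Fin M → ℝ), LocallyLipschitz Λ →
      MeasureTheory.volume
        (Λ '' {f : C(Ω, Fin (N L) → ℝ) |
            ∃ Φ : NNParams L N, ∀ x : Ω, f x = nnRealization ρ L N Φ x.val}) = 0 := by
  haveI : CompactSpace Ω := isCompact_iff_compactSpace.mp hΩ
  intro Λ hΛ
  set G : NNParams L N × (Fin (N 0) → ℝ) → (Fin (N L) → ℝ) :=
    fun p => nnRealization ρ L N p.1 p.2 with hGdef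
  have hG : LocallyLipschitz G := realization_locallyLipschitz ρ hρ L N
  set F : NNParams L N → C(Ω, Fin (N L) → ℝ) := fun Φ =>
    ⟨fun x => G (Φ, x.val),
      hG.continuous.comp (continuous_const.prodMk continuous_subtype_val)⟩ with hFdef
  -- F is locally Lipschitz
  have hF : LocallyLipschitz F := by
    intro Φ₀
    have key : ∀ x : Fin (N 0) → ℝ, x ∈ Ω →
        ∃ (K : ℝ≥0) (U : Set (NNParams L N)) (V : Set (Fin (N 0) → ℝ)),
          U ∈ 𝓝 Φ₀ ∧ V ∈ 𝓝 x ∧ LipschitzOnWith K G (U ×ˢ V) := by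
      intro x _
      obtain ⟨K, t, ht, hK⟩ := hG (Φ₀, x)
      rcases mem_nhds_prod_iff.1 ht with ⟨U, hU, V, hV, hUV⟩
      exact ⟨K, U, V, hU, hV, hK.mono hUV⟩
    choose K U V hU hV hLip using key
    obtain ⟨s, hs⟩ := hΩ.elim_nhds_subcover' (fun x hx => V x hx) (fun x hx => hV x hx)
    classical
    refine ⟨s.sup (fun i => K i.val i.2), ⋂ i ∈ s, U i.val i.2,
      (Filter.biInter_finset_mem s).2 fun i _ => hU i.val i.2, ?_⟩
    rw [lipschitzOnWith_iff_dist_le_mul]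
    intro Φ hΦ Ψ hΨ
    have hC0 : (0 : ℝ) ≤ ((s.sup fun i => K i.val i.2 : ℝ≥0) : ℝ) * dist Φ Ψ :=
      mul_nonneg (NNReal.coe_nonneg _) dist_nonneg
    rw [ContinuousMap.dist_le hC0]
    intro x
    obtain ⟨i, hi, hxV⟩ := Set.mem_iUnion₂.1 (hs x.2)
    have hΦU : Φ ∈ U i.val i.2 := Set.mem_iInter₂.1 hΦ i hi
    have hΨU : Ψ ∈ U i.val i.2 := Set.mem_iInter₂.1 hΨ i hi
    have := (lipschitzOnWith_iff_dist_le_mul.1 (hLip i.val i.2)) (Φ, x.val)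
      ⟨hΦU, hxV⟩ (Ψ, x.val) ⟨hΨU, hxV⟩
    have hdist : dist ((Φ, x.val) : NNParams L N × (Fin (N 0) → ℝ)) (Ψ, x.val) = dist Φ Ψ := by
      rw [Prod.dist_eq]
      simp [dist_nonneg]
    rw [hdist] at this
    refine this.trans ?_
    have hKle : ((K i.val i.2 : ℝ≥0) : ℝ) ≤ ((s.sup fun i => K i.val i.2 : ℝ≥0) : ℝ) := by
      exact_mod_cast Finset.le_sup (f := fun i : {x // x ∈ Ω} => K i.val i.2) hi
    exact mul_le_mul_of_nonneg_right hKle dist_nonneg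
  -- the set of realizations is the range of F
  have hset : {f : C(Ω, Fin (N L) → ℝ) |
      ∃ Φ : NNParams L N, ∀ x : Ω, f x = nnRealization ρ L N Φ x.val} = Set.range F := by
    ext f
    constructor
    · rintro ⟨Φ, hΦ⟩
      exact ⟨Φ, (ContinuousMap.ext fun x => (hΦ x).symm)⟩
    · rintro ⟨Φ, rfl⟩
      exact ⟨Φ, fun x => rfl⟩
  rw [hset, ← Set.range_comp]
  -- Hausdorff dimension bound
  have hcomp : LocallyLipschitz (Λ ∘ F) := hΛ.comp hF
  have hdim : dimH (Set.range (Λ ∘ F)) ≤ dimH (Set.univ : Set (NNParams L N)) :=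
    dimH_range_le_of_locally_lipschitzOn fun x => hcomp x
  have hfr : dimH (Set.univ : Set (NNParams L N)) =
      (Module.finrank ℝ (NNParams L N) : ℝ≥0∞) :=
    Real.dimH_univ_eq_finrank (NNParams L N)
  have hlt : dimH (Set.range (Λ ∘ F)) < ((M : ℝ≥0) : ℝ≥0∞) := by
    have h1 : dimH (Set.range (Λ ∘ F)) ≤
        ((∑ ℓ ∈ Finset.range L, (N ℓ + 1) * N (ℓ + 1) : ℕ) : ℝ≥0∞) := by
      rw [← nnparams_finrank L N, ← hfr]
      exact hdim
    refine lt_of_le_of_lt h1 ?_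
    norm_cast
  have hac : (volume : Measure (Fin M → ℝ)) ≪ μH[((M : ℝ≥0) : ℝ)] := by
    have : ((M : ℝ≥0) : ℝ) = ((Fintype.card (Fin M) : ℕ) : ℝ) := by simp
    rw [this, hausdorffMeasure_pi_real]
  exact measure_zero_of_dimH_lt hac hlt
end

section
/- Let S = (d, N_1, ..., N_L) be a neural network architecture with N_0 := d, let Ω ⊆ ℝ^d, and let ρ : ℝ → ℝ be locally Lipschitz continuous. Then every family of linearly independent functions in RNN_ρ^Ω(S), each of which is a center of the star-shaped set RNN_ρ^Ω(S), has at most Σ_{ℓ=1}^L (N_{ℓ-1} + 1) N_ℓ elements. -/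
open scoped BigOperators ENNReal NNReal Pointwise
open Filter MeasureTheory Topology

/-- The set of realizations of networks with architecture `(N 0, …, N L)`
and activation `ρ`, as functions on `Ω`. -/
def RNNset (ρ : ℝ → ℝ) (L : ℕ) (N : ℕ → ℕ) (Ω : Set (Fin (N 0) → ℝ)) :
    Set (Ω → Fin (N L) → ℝ) :=
  {f | ∃ Φ : NNParams L N, ∀ x : Ω, f x = nnRealization ρ L N Φ x.val}

/-- `f` is a center of the set `A`: segments from `f` to any point of `A` stay in `A`. -/
def IsCenter {F : Type*} [AddCommMonoid F] [Module ℝ F] (A : Set F) (f : F) : Prop :=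
  f ∈ A ∧ ∀ g ∈ A, ∀ t : ℝ, 0 ≤ t → t ≤ 1 → t • f + (1 - t) • g ∈ A

/-! ### Auxiliary lemmas: local Lipschitz continuity of the realization map -/

lemma LocallyLipschitz.pi'' {α : Type*} [PseudoEMetricSpace α] {ι : Type*} [Fintype ι]
    {E : ι → Type*} [∀ i, PseudoEMetricSpace (E i)] {f : α → ∀ i, E i}
    (h : ∀ i, LocallyLipschitz fun a => f a i) : LocallyLipschitz f := by
  intro x
  choose K t ht hlip using fun i => h i x
  refine ⟨Finset.univ.sup K, ⋂ i, t i, Filter.iInter_mem.2 ht, ?_⟩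
  intro a ha b hb
  refine edist_pi_le_iff.2 fun i => ?_
  exact le_trans (hlip i (Set.mem_iInter.1 ha i) (Set.mem_iInter.1 hb i))
    (mul_le_mul_left (ENNReal.coe_le_coe.2 (Finset.le_sup (Finset.mem_univ i))) _)

lemma nnAffine_loclip {N : ℕ → ℕ} {ℓ : ℕ} {α : Type*} [NormedAddCommGroup α] [NormedSpace ℝ α]
    {W : α → NNLayer N ℓ} {x : α → Fin (N ℓ) → ℝ} (hW : ContDiff ℝ 1 W) (hx : ContDiff ℝ 1 x)
    (i : Fin (N (ℓ+1))) : LocallyLipschitz (fun a => nnAffine (W a) (x a) i) := by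
  have : ContDiff ℝ 1 (fun a => nnAffine (W a) (x a) i) := by
    unfold nnAffine
    apply ContDiff.add
    · apply ContDiff.sum; intro j _; fun_prop
    · fun_prop
  exact this.locallyLipschitz

lemma nnHidden_loclip (ρ : ℝ → ℝ) (hρ : LocallyLipschitz ρ) :
    ∀ (L : ℕ) (N : ℕ → ℕ),
      LocallyLipschitz (fun p : NNParams L N × (Fin (N 0) → ℝ) => nnHidden ρ L N p.1 p.2)
  | 0, N => by
      simpa [nnHidden] using (LipschitzWith.prod_snd (α := NNParams 0 N)).locallyLipschitz
  | L + 1, N => by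
      have IH := nnHidden_loclip ρ hρ L (fun k => N (k + 1))
      have h1 : LocallyLipschitz (fun p : NNParams (L+1) N × (Fin (N 0) → ℝ) =>
          (fun ℓ : Fin L => p.1 ⟨ℓ.val + 1, Nat.succ_lt_succ ℓ.isLt⟩ :
            NNParams L (fun k => N (k+1)))) :=
        LocallyLipschitz.pi'' fun ℓ =>
          ((LipschitzWith.eval _).comp LipschitzWith.prod_fst).locallyLipschitz
      have h2 : LocallyLipschitz (fun p : NNParams (L+1) N × (Fin (N 0) → ℝ) =>
          (fun i => ρ (nnAffine (p.1 ⟨0, Nat.succ_pos L⟩) p.2 i))) := by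
        refine LocallyLipschitz.pi'' fun i => hρ.comp ?_
        have hW : ContDiff ℝ 1 (fun p : NNParams (L+1) N × (Fin (N 0) → ℝ) =>
            p.1 ⟨0, Nat.succ_pos L⟩) :=
          (ContinuousLinearMap.proj (R := ℝ) (φ := fun ℓ : Fin (L+1) => NNLayer N ℓ.val)
            (⟨0, Nat.succ_pos L⟩ : Fin (L+1))).contDiff.comp
            contDiff_fst
        exact nnAffine_loclip hW contDiff_snd i
      simp only [nnHidden]
      exact IH.comp (h1.prodMk h2)

set_option maxHeartbeats 1000000 in
lemma nnRealization_loclip (ρ : ℝ → ℝ) (hρ : LocallyLipschitz ρ) (M : ℕ) (N : ℕ → ℕ)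
    (x : Fin (N 0) → ℝ) (i : Fin (N (M+1))) :
    LocallyLipschitz (fun Φ : NNParams (M+1) N => nnRealization ρ (M+1) N Φ x i) := by
  simp only [nnRealization]
  have sLL : LocallyLipschitz (fun q : NNLayer N M × (Fin (N M) → ℝ) => nnAffine q.1 q.2 i) :=
    nnAffine_loclip contDiff_fst contDiff_snd i
  have q1 : LocallyLipschitz (fun Φ : NNParams (M+1) N => Φ ⟨M, Nat.lt_succ_self M⟩) :=
    (LipschitzWith.eval _).locallyLipschitz
  have tailLL : LocallyLipschitz (fun Φ : NNParams (M+1) N =>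
      (fun ℓ : Fin M => Φ ⟨ℓ.val, Nat.lt_succ_of_lt ℓ.isLt⟩ : NNParams M N)) :=
    LocallyLipschitz.pi'' fun ℓ => (LipschitzWith.eval _).locallyLipschitz
  have q2 : LocallyLipschitz (fun Φ : NNParams (M+1) N =>
      nnHidden ρ M N (fun ℓ => Φ ⟨ℓ.val, Nat.lt_succ_of_lt ℓ.isLt⟩) x) :=
    (nnHidden_loclip ρ hρ M N).comp (tailLL.prodMk (LocallyLipschitz.const x))
  exact sLL.comp (q1.prodMk q2)

/-! ### Auxiliary lemmas: algebraic structure of the set of realizations -/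

lemma nnRealization_smul (ρ : ℝ → ℝ) (M : ℕ) (N : ℕ → ℕ) (c : ℝ) (Φ : NNParams (M+1) N) :
    ∃ Φ' : NNParams (M+1) N,
      ∀ x, nnRealization ρ (M+1) N Φ' x = c • nnRealization ρ (M+1) N Φ x := by
  classical
  set Φ' : NNParams (M+1) N :=
    fun ℓ => if h : ℓ.val = M then (c • (Φ ℓ).1, c • (Φ ℓ).2) else Φ ℓ with hΦ'
  refine ⟨Φ', fun x => ?_⟩
  have htail : (fun ℓ : Fin M => Φ' ⟨ℓ.val, Nat.lt_succ_of_lt ℓ.isLt⟩)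
      = fun ℓ : Fin M => Φ ⟨ℓ.val, Nat.lt_succ_of_lt ℓ.isLt⟩ := by
    funext ℓ
    simp only [hΦ', dif_neg (Nat.ne_of_lt ℓ.isLt)]
  have hlast : Φ' ⟨M, Nat.lt_succ_self M⟩
      = (c • (Φ ⟨M, Nat.lt_succ_self M⟩).1, c • (Φ ⟨M, Nat.lt_succ_self M⟩).2) := by
    simp only [hΦ', dif_pos rfl]
  simp only [nnRealization, htail, hlast]
  funext i
  simp [nnAffine, Finset.mul_sum, mul_add, Pi.smul_apply, smul_eq_mul, mul_assoc]

lemma nnRealization_zero (ρ : ℝ → ℝ) (M : ℕ) (N : ℕ → ℕ) (x : Fin (N 0) → ℝ) :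
    nnRealization ρ (M+1) N (fun _ => (0, 0)) x = 0 := by
  funext i
  simp [nnRealization, nnAffine]

/-! ### Auxiliary lemma: evaluation points for linearly independent functions -/

lemma exists_eval_points {X : Type*} :
    ∀ {n : ℕ} (f : Fin n → X → ℝ), LinearIndependent ℝ f →
      ∃ x : Fin n → X, LinearIndependent ℝ (fun i => (fun j => f i (x j) : Fin n → ℝ)) := by
  intro n
  induction n with
  | zero => exact fun f _ => ⟨Fin.elim0, linearIndependent_empty_type⟩
  | succ n IH =>
    intro f hf
    have hsnoc : f = Fin.snoc (fun i : Fin n => f i.castSucc) (f (Fin.last n)) := by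
      funext i
      refine Fin.lastCases ?_ ?_ i <;> simp
    obtain ⟨x, hx⟩ := IH (fun i => f i.castSucc) (hf.comp Fin.castSucc (Fin.castSucc_injective n))
    set V : Fin n → (Fin n → ℝ) := fun i j => f i.castSucc (x j) with hV
    have hspan : Submodule.span ℝ (Set.range V) = ⊤ :=
      hx.span_eq_top_of_card_eq_finrank' (by simp)
    set w : Fin n → ℝ := fun j => f (Fin.last n) (x j) with hw
    obtain ⟨c, hc⟩ : ∃ c : Fin n → ℝ, ∑ i, c i • V i = w := by
      have : w ∈ Submodule.span ℝ (Set.range V) := hspan ▸ Submodule.mem_top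
      exact (Submodule.mem_span_range_iff_exists_fun ℝ).1 this
    set h : X → ℝ := fun y => f (Fin.last n) y - ∑ i, c i * f i.castSucc y with hh
    have hx0 : ∀ j, ∑ i, c i * f i.castSucc (x j) = f (Fin.last n) (x j) := by
      intro j
      have := congrFun hc j
      simpa [hV, hw, Finset.sum_apply] using this
    have hne : h ≠ 0 := by
      intro h0
      have heq : f (Fin.last n) = ∑ i, c i • f i.castSucc := by
        funext y
        have := congrFun h0 y
        simp only [hh, Pi.zero_apply, sub_eq_zero] at this
        simpa [Finset.sum_apply] using this
      have hmem : f (Fin.last n) ∈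
          Submodule.span ℝ (Set.range fun i : Fin n => f i.castSucc) := by
        rw [heq]
        exact Submodule.sum_mem _ fun i _ =>
          Submodule.smul_mem _ _ (Submodule.subset_span ⟨i, rfl⟩)
      exact (linearIndependent_fin_snoc.mp (hsnoc ▸ hf)).2 hmem
    obtain ⟨y, hy⟩ : ∃ y, h y ≠ 0 := by
      by_contra hcon
      push_neg at hcon
      exact hne (funext hcon)
    refine ⟨Fin.snoc (α := fun _ => X) x y, ?_⟩
    rw [Fintype.linearIndependent_iff]
    intro a ha
    have haj : ∀ j : Fin (n+1), ∑ i, a i * f i (Fin.snoc (α := fun _ => X) x y j) = 0 := by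
      intro j
      have := congrFun ha j
      simpa [Finset.sum_apply] using this
    have key : ∀ i : Fin n, a i.castSucc = - (a (Fin.last n) * c i) := by
      have hsum : ∑ i : Fin n, (a i.castSucc + a (Fin.last n) * c i) • V i = 0 := by
        funext j
        have h1 := haj j.castSucc
        rw [Fin.sum_univ_castSucc] at h1
        simp only [Fin.snoc_castSucc, Fin.snoc_last] at h1
        have h2 := hx0 j
        simp only [Finset.sum_apply, Pi.smul_apply, smul_eq_mul, hV, Pi.zero_apply]
        calc ∑ i : Fin n, (a i.castSucc + a (Fin.last n) * c i) * f i.castSucc (x j)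
            = (∑ i : Fin n, a i.castSucc * f i.castSucc (x j))
              + a (Fin.last n) * ∑ i : Fin n, c i * f i.castSucc (x j) := by
              rw [Finset.mul_sum, ← Finset.sum_add_distrib]
              exact Finset.sum_congr rfl fun i _ => by ring
          _ = 0 := by rw [h2]; linarith [h1]
      intro i
      have := (Fintype.linearIndependent_iff.mp hx) _ hsum i
      linarith [this]
    have hlast : a (Fin.last n) = 0 := by
      have h1 := haj (Fin.last n)
      rw [Fin.sum_univ_castSucc] at h1
      simp only [Fin.snoc_last, Fin.snoc_castSucc] at h1
      have hS : ∑ i : Fin n, a i.castSucc * f i.castSucc y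
          = - (a (Fin.last n) * ∑ i : Fin n, c i * f i.castSucc y) := by
        have e : ∀ i : Fin n, a i.castSucc * f i.castSucc y
            = -(a (Fin.last n) * (c i * f i.castSucc y)) := by
          intro i; rw [key i]; ring
        rw [Finset.sum_congr rfl fun i _ => e i]
        rw [Finset.mul_sum]
        rw [← Finset.sum_neg_distrib]
      rw [hS] at h1
      have hmul : a (Fin.last n) * h y = 0 := by
        simp only [hh]
        rw [mul_sub]
        linarith [h1]
      rcases mul_eq_zero.mp hmul with h' | h'
      · exact h'
      · exact absurd h' hy
    intro i
    refine Fin.lastCases hlast (fun i => ?_) i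
    rw [key i, hlast]
    ring

/-! ### Auxiliary lemmas: set-level closure properties -/

section SetLemmas

variable {M : ℕ} {N : ℕ → ℕ} {Ω : Set (Fin (N 0) → ℝ)} {ρ : ℝ → ℝ}

lemma RNNset_smul (c : ℝ) {g : Ω → Fin (N (M+1)) → ℝ} (hg : g ∈ RNNset ρ (M+1) N Ω) :
    c • g ∈ RNNset ρ (M+1) N Ω := by
  obtain ⟨Φ, hΦ⟩ := hg
  obtain ⟨Φ', hΦ'⟩ := nnRealization_smul ρ M N c Φ
  exact ⟨Φ', fun x => by rw [hΦ' x.val, ← hΦ x]; rfl⟩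

lemma RNNset_zero : (0 : Ω → Fin (N (M+1)) → ℝ) ∈ RNNset ρ (M+1) N Ω :=
  ⟨fun _ => (0, 0), fun x => (nnRealization_zero ρ M N x.val).symm⟩

lemma RNNset_center_neg {g : Ω → Fin (N (M+1)) → ℝ}
    (hg : IsCenter (RNNset ρ (M+1) N Ω) g) : IsCenter (RNNset ρ (M+1) N Ω) (-g) := by
  constructor
  · simpa using RNNset_smul (-1) hg.1
  · intro u hu t ht0 ht1
    have hu' : (-1 : ℝ) • u ∈ RNNset ρ (M+1) N Ω := RNNset_smul _ hu
    have h := hg.2 _ hu' t ht0 ht1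
    have h2 := RNNset_smul (-1) h
    convert h2 using 1
    module

lemma RNNset_center_smul_add {g : Ω → Fin (N (M+1)) → ℝ}
    (hg : IsCenter (RNNset ρ (M+1) N Ω) g) {u : Ω → Fin (N (M+1)) → ℝ}
    (hu : u ∈ RNNset ρ (M+1) N Ω) (c : ℝ) : c • g + u ∈ RNNset ρ (M+1) N Ω := by
  have main : ∀ (g' : Ω → Fin (N (M+1)) → ℝ), IsCenter (RNNset ρ (M+1) N Ω) g' →
      ∀ c' : ℝ, 0 ≤ c' → c' • g' + u ∈ RNNset ρ (M+1) N Ω := by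
    intro g' hg' c' hc'
    have hnz : (0 : ℝ) < 1 + c' := by linarith
    have ht0 : (0 : ℝ) ≤ c' / (1 + c') := div_nonneg hc' hnz.le
    have ht1 : c' / (1 + c') ≤ 1 := by
      rw [div_le_one hnz]; linarith
    have h := hg'.2 u hu (c' / (1 + c')) ht0 ht1
    have h2 := RNNset_smul (1 + c') h
    have e1 : (1 + c') * (c' / (1 + c')) = c' := by field_simp
    have e2 : (1 + c') * (1 - c' / (1 + c')) = 1 := by field_simp; ring
    have e : (1 + c') • ((c' / (1 + c')) • g' + (1 - c' / (1 + c')) • u) = c' • g' + u := by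
      rw [smul_add, smul_smul, smul_smul, e1, e2, one_smul]
    rwa [e] at h2
  rcases le_or_gt 0 c with h | h
  · exact main g hg c h
  · have h2 := main (-g) (RNNset_center_neg hg) (-c) (by linarith)
    have e : (-c) • (-g) + u = c • g + u := by module
    rwa [e] at h2

end SetLemmas

/-- Any linearly independent family of centers of the set of realizations
has at most `∑_{ℓ=1}^L (N_{ℓ-1} + 1) * N_ℓ` elements. -/
theorem stmt14 (L : ℕ) (hL : 1 ≤ L) (N : ℕ → ℕ) (hN : ∀ ℓ ≤ L, 0 < N ℓ)
    (Ω : Set (Fin (N 0) → ℝ)) (ρ : ℝ → ℝ) (hρ : LocallyLipschitz ρ)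
    (n : ℕ) (f : Fin n → (Ω → Fin (N L) → ℝ))
    (hcenter : ∀ i, IsCenter (RNNset ρ L N Ω) (f i))
    (hli : LinearIndependent ℝ f) :
    n ≤ ∑ ℓ ∈ Finset.range L, (N ℓ + 1) * N (ℓ + 1) := by
  classical
  obtain ⟨M, rfl⟩ : ∃ M, L = M + 1 := ⟨L - 1, (Nat.succ_pred_eq_of_pos hL).symm⟩
  -- Step A: all linear combinations of the `f i` belong to the set of realizations
  have hspanmem : ∀ c : Fin n → ℝ, (∑ i, c i • f i) ∈ RNNset ρ (M+1) N Ω := by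
    intro c
    have : ∀ s : Finset (Fin n), (∑ i ∈ s, c i • f i) ∈ RNNset ρ (M+1) N Ω := by
      intro s
      induction s using Finset.induction with
      | empty => simpa using (RNNset_zero (M := M) (N := N) (Ω := Ω) (ρ := ρ))
      | insert _ _ hnot ih =>
        rw [Finset.sum_insert hnot]
        exact RNNset_center_smul_add (hcenter _) ih _
    exact this Finset.univ
  -- Step B: flatten and choose evaluation points
  set X := Ω × Fin (N (M+1)) with hX
  set f' : Fin n → X → ℝ := fun i p => f i p.1 p.2 with hf'
  have hli' : LinearIndependent ℝ f' := by
    rw [Fintype.linearIndependent_iff]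
    intro a ha
    refine (Fintype.linearIndependent_iff.mp hli) a ?_
    funext p
    funext q
    have := congrFun ha (p, q)
    simpa [hf', Finset.sum_apply] using this
  obtain ⟨pts, hpts⟩ := exists_eval_points f' hli'
  set V : Fin n → (Fin n → ℝ) := fun i j => f' i (pts j) with hV
  have hspanV : Submodule.span ℝ (Set.range V) = ⊤ :=
    hpts.span_eq_top_of_card_eq_finrank' (by simp)
  -- Step C: the parametrization map
  set G : NNParams (M+1) N → (Fin n → ℝ) :=
    fun Φ j => nnRealization ρ (M+1) N Φ (pts j).1.val (pts j).2 with hG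
  have hGlip : LocallyLipschitz G :=
    LocallyLipschitz.pi'' fun j => nnRealization_loclip ρ hρ M N _ _
  have hGsurj : Function.Surjective G := by
    intro v
    obtain ⟨c, hc⟩ : ∃ c : Fin n → ℝ, ∑ i, c i • V i = v := by
      have : v ∈ Submodule.span ℝ (Set.range V) := hspanV ▸ Submodule.mem_top
      exact (Submodule.mem_span_range_iff_exists_fun ℝ).1 this
    obtain ⟨Φ, hΦ⟩ := hspanmem c
    refine ⟨Φ, ?_⟩
    funext j
    have h1 : (∑ i, c i • f i) (pts j).1 = nnRealization ρ (M+1) N Φ ((pts j).1 : Fin (N 0) → ℝ) :=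
      hΦ (pts j).1
    have h2 := congrFun h1 (pts j).2
    have h3 := congrFun hc j
    simp only [Finset.sum_apply, Pi.smul_apply, smul_eq_mul] at h2 h3
    rw [hG]
    dsimp only
    rw [← h2, ← h3]
  -- Step D: Hausdorff dimension comparison
  have hdim : (n : ℝ≥0∞) ≤ (Module.finrank ℝ (NNParams (M+1) N) : ℝ≥0∞) := by
    calc (n : ℝ≥0∞) = dimH (Set.univ : Set (Fin n → ℝ)) := (Real.dimH_univ_pi_fin n).symm
      _ = dimH (Set.range G) := by rw [Set.range_eq_univ.2 hGsurj]
      _ ≤ dimH (Set.univ : Set (NNParams (M+1) N)) :=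
          dimH_range_le_of_locally_lipschitzOn fun x => hGlip x
      _ = (Module.finrank ℝ (NNParams (M+1) N) : ℝ≥0∞) :=
          Real.dimH_univ_eq_finrank _
  -- Step E: compute the dimension of the parameter space
  have hlayer : ∀ ℓ : ℕ, Module.finrank ℝ (NNLayer N ℓ) = (N ℓ + 1) * N (ℓ + 1) := by
    intro ℓ
    rw [Module.finrank_prod, Module.finrank_pi_fintype, Module.finrank_pi]
    simp [Module.finrank_pi]
    ring
  have hrank : Module.finrank ℝ (NNParams (M+1) N)
      = ∑ ℓ ∈ Finset.range (M+1), (N ℓ + 1) * N (ℓ + 1) := by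
    rw [Module.finrank_pi_fintype]
    rw [← Fin.sum_univ_eq_sum_range (fun ℓ => (N ℓ + 1) * N (ℓ + 1)) (M+1)]
    exact Finset.sum_congr rfl fun ℓ _ => hlayer ℓ.val
  rw [hrank] at hdim
  exact_mod_cast hdim
end

section
/- Let S = (d, N_1, ..., N_L) be a neural network architecture with L ≥ 2, let ρ : ℝ → ℝ be continuous and differentiable at some x_0 ∈ ℝ with ρ'(x_0) ≠ 0, and let Ω ⊆ ℝ^d have nonempty interior. If RNN_ρ^Ω(S) does not contain an infinite linearly independent family of functions (equivalently, RNN_ρ^Ω(S) is contained in a finite-dimensional subspace of the functions Ω → ℝ^{N_L}), then ρ is a polynomial. -/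
open scoped BigOperators ENNReal NNReal Pointwise
open Filter MeasureTheory Topology

noncomputable section

set_option maxHeartbeats 1000000
namespace S15
open Polynomial


def Zset (ρ : ℝ → ℝ) : Set (ℝ → ℝ) := {f | ∃ a b : ℝ, f = fun t => ρ (a * t + b)}

def Zmod (ρ : ℝ → ℝ) : Submodule ℝ (ℝ → ℝ) := Submodule.span ℝ (Zset ρ)

variable {ρ : ℝ → ℝ}

lemma rho_mem : ρ ∈ Zmod ρ := by
  refine Submodule.subset_span ⟨1, 0, ?_⟩
  funext t; simp

lemma contZ (hcont : Continuous ρ) {f} (hf : f ∈ Zmod ρ) : Continuous f := by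
  induction hf using Submodule.span_induction with
  | mem g hg =>
      obtain ⟨a, b, rfl⟩ := hg
      exact hcont.comp ((continuous_const.mul continuous_id).add continuous_const)
  | zero => exact continuous_const
  | add x y hx hy hx' hy' => exact hx'.add hy'
  | smul a x hx hx' => exact hx'.const_smul a

/-- Precomposition with an affine map, as a linear map on functions. -/
def affL (a b : ℝ) : (ℝ → ℝ) →ₗ[ℝ] (ℝ → ℝ) where
  toFun f := fun t => f (a * t + b)
  map_add' _ _ := rfl
  map_smul' _ _ := rfl

lemma affL_mem (a b : ℝ) {f} (hf : f ∈ Zmod ρ) : affL a b f ∈ Zmod ρ := by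
  induction hf using Submodule.span_induction with
  | mem g hg =>
      obtain ⟨a', b', rfl⟩ := hg
      refine Submodule.subset_span ⟨a' * a, a' * b + b', ?_⟩
      funext t; simp only [affL, LinearMap.coe_mk, AddHom.coe_mk]
      ring_nf
  | zero => simpa using (Zmod ρ).zero_mem
  | add x y hx hy hx' hy' => rw [map_add]; exact (Zmod ρ).add_mem hx' hy'
  | smul a x hx hx' => rw [_root_.map_smul]; exact (Zmod ρ).smul_mem _ hx'

def shiftZ (s : ℝ) : Zmod ρ →ₗ[ℝ] Zmod ρ :=
  (affL 1 s).restrict (fun f hf => affL_mem 1 s hf)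

lemma shiftZ_apply (s : ℝ) (f : Zmod ρ) (t : ℝ) :
    (shiftZ s f : ℝ → ℝ) t = (f : ℝ → ℝ) (t + s) := by
  simp [shiftZ, affL, LinearMap.restrict_apply]

lemma shiftZ_zero (f : Zmod ρ) : shiftZ 0 f = f := by
  ext t
  rw [shiftZ_apply, add_zero]

lemma cont_shift_param (hcont : Continuous ρ) (f : Zmod ρ) :
    Continuous fun s => (shiftZ s f : Zmod ρ) := by
  refine Continuous.subtype_mk ?_ _
  refine continuous_pi fun t => ?_
  have : (fun s => ((shiftZ s f : Zmod ρ) : ℝ → ℝ) t) = fun s => (f : ℝ → ℝ) (t + s) := by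
    funext s; rw [shiftZ_apply]
  exact this ▸ (contZ hcont f.2).comp (continuous_const.add continuous_id)



section FD

variable (ρ) [FiniteDimensional ℝ (Zmod ρ)]

def nZ : ℕ := Module.finrank ℝ (Zmod ρ)

def bZ : Module.Basis (Fin (nZ ρ)) ℝ (Zmod ρ) := Module.finBasis ℝ _

variable {ρ}

lemma cont_coord (hcont : Continuous ρ) (f : Zmod ρ) (i : Fin (nZ ρ)) :
    Continuous fun s => (bZ ρ).equivFun (shiftZ s f) i := by
  have h1 : Continuous ((bZ ρ).equivFun.toLinearMap) :=
    LinearMap.continuous_of_finiteDimensional _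
  exact (continuous_apply i).comp (h1.comp (cont_shift_param hcont f))

/-- The averaging operator on `Zmod ρ`. -/
def avgL (hcont : Continuous ρ) (h : ℝ) : Zmod ρ →ₗ[ℝ] Zmod ρ where
  toFun f := (bZ ρ).equivFun.symm
      (fun i => h⁻¹ * ∫ s in (0:ℝ)..h, (bZ ρ).equivFun (shiftZ s f) i)
  map_add' f g := by
    have key : (fun i => h⁻¹ * ∫ s in (0:ℝ)..h, (bZ ρ).equivFun (shiftZ s (f + g)) i)
        = (fun i => h⁻¹ * ∫ s in (0:ℝ)..h, (bZ ρ).equivFun (shiftZ s f) i)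
          + (fun i => h⁻¹ * ∫ s in (0:ℝ)..h, (bZ ρ).equivFun (shiftZ s g) i) := by
      funext i
      have e1 : ∀ s : ℝ, (bZ ρ).equivFun (shiftZ s (f + g)) i
          = (bZ ρ).equivFun (shiftZ s f) i + (bZ ρ).equivFun (shiftZ s g) i := by
        intro s; rw [map_add, map_add]; rfl
      simp only [e1, Pi.add_apply]
      rw [intervalIntegral.integral_add ((cont_coord hcont f i).intervalIntegrable _ _)
        ((cont_coord hcont g i).intervalIntegrable _ _)]
      ring
    show (bZ ρ).equivFun.symm _ = (bZ ρ).equivFun.symm _ + (bZ ρ).equivFun.symm _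
    rw [key, map_add]
  map_smul' a f := by
    have key : (fun i => h⁻¹ * ∫ s in (0:ℝ)..h, (bZ ρ).equivFun (shiftZ s (a • f)) i)
        = a • (fun i => h⁻¹ * ∫ s in (0:ℝ)..h, (bZ ρ).equivFun (shiftZ s f) i) := by
      funext i
      have e1 : ∀ s : ℝ, (bZ ρ).equivFun (shiftZ s (a • f)) i
          = a * (bZ ρ).equivFun (shiftZ s f) i := by
        intro s; rw [_root_.map_smul, _root_.map_smul]; rfl
      simp only [e1, Pi.smul_apply, smul_eq_mul]
      rw [intervalIntegral.integral_const_mul]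
      ring
    show (bZ ρ).equivFun.symm _ = a • (bZ ρ).equivFun.symm _
    rw [key, _root_.map_smul]

lemma ftcR (f : ℝ → ℝ) (hf : Continuous f) (y : ℝ) :
    HasDerivAt (fun u => ∫ s in (0:ℝ)..u, f s) (f y) y :=
  (hf.integral_hasStrictDerivAt 0 y).hasDerivAt

lemma avg_apply (hcont : Continuous ρ) (h : ℝ) (f : Zmod ρ) (t : ℝ) :
    (avgL hcont h f : ℝ → ℝ) t = h⁻¹ * ∫ s in (0:ℝ)..h, (f : ℝ → ℝ) (t + s) := by
  have hrepr : (avgL hcont h f : Zmod ρ)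
      = ∑ i, (h⁻¹ * ∫ s in (0:ℝ)..h, (bZ ρ).equivFun (shiftZ s f) i) • (bZ ρ) i := by
    exact (bZ ρ).equivFun_symm_apply _
  have h2 : (avgL hcont h f : ℝ → ℝ) t
      = ∑ i, (h⁻¹ * ∫ s in (0:ℝ)..h, (bZ ρ).equivFun (shiftZ s f) i) * ((bZ ρ) i : ℝ → ℝ) t := by
    rw [hrepr]
    push_cast
    rw [Finset.sum_apply]
    rfl
  rw [h2]
  have h3 : ∀ i : Fin (nZ ρ), (h⁻¹ * ∫ s in (0:ℝ)..h, (bZ ρ).equivFun (shiftZ s f) i)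
        * ((bZ ρ) i : ℝ → ℝ) t
      = h⁻¹ * ∫ s in (0:ℝ)..h, ((bZ ρ).equivFun (shiftZ s f) i * ((bZ ρ) i : ℝ → ℝ) t) := by
    intro i
    rw [intervalIntegral.integral_mul_const]
    ring
  rw [Finset.sum_congr rfl (fun i _ => h3 i), ← Finset.mul_sum,
    ← intervalIntegral.integral_finset_sum]
  · congr 1
    apply intervalIntegral.integral_congr
    intro s _
    have : ∑ i, (bZ ρ).equivFun (shiftZ s f) i • ((bZ ρ) i) = shiftZ s f :=
      (bZ ρ).sum_equivFun (shiftZ s f)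
    calc (∑ i, (bZ ρ).equivFun (shiftZ s f) i * ((bZ ρ) i : ℝ → ℝ) t)
        = ((∑ i, (bZ ρ).equivFun (shiftZ s f) i • ((bZ ρ) i) : Zmod ρ) : ℝ → ℝ) t := by
          push_cast; rw [Finset.sum_apply]; rfl
      _ = (f : ℝ → ℝ) (t + s) := by rw [this, shiftZ_apply]
  · intro i _
    exact ((cont_coord hcont f i).mul continuous_const).intervalIntegrable _ _


lemma avg_hasDeriv (hcont : Continuous ρ) (h : ℝ) (f : Zmod ρ) (t : ℝ) :
    HasDerivAt (avgL hcont h f : ℝ → ℝ)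
      (h⁻¹ * ((f : ℝ → ℝ) (t + h) - (f : ℝ → ℝ) t)) t := by
  have hfc : Continuous (f : ℝ → ℝ) := contZ hcont f.2
  have hrw : (avgL hcont h f : ℝ → ℝ)
      = fun u => h⁻¹ * ((∫ s in (0:ℝ)..(u + h), (f : ℝ → ℝ) s)
          - ∫ s in (0:ℝ)..u, (f : ℝ → ℝ) s) := by
    funext u
    rw [avg_apply hcont h f u]
    congr 1
    have h1 : (∫ s in (0:ℝ)..h, (f : ℝ → ℝ) (u + s)) = ∫ s in (u+0)..(u+h), (f : ℝ → ℝ) s :=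
      intervalIntegral.integral_comp_add_left _ u
    have h2 : (∫ s in (0:ℝ)..(u+h), (f : ℝ → ℝ) s) - (∫ s in (0:ℝ)..u, (f : ℝ → ℝ) s)
        = ∫ s in u..(u+h), (f : ℝ → ℝ) s :=
      intervalIntegral.integral_interval_sub_left (hfc.intervalIntegrable _ _)
        (hfc.intervalIntegrable _ _)
    rw [h1]; rw [show u + (0:ℝ) = u from add_zero u, ← h2]
  rw [hrw]
  have hF : ∀ y : ℝ, HasDerivAt (fun u => ∫ s in (0:ℝ)..u, (f : ℝ → ℝ) s)
      ((f : ℝ → ℝ) y) y := fun y => ftcR _ hfc y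
  have hG : HasDerivAt (fun u => ∫ s in (0:ℝ)..(u + h), (f : ℝ → ℝ) s)
      ((f : ℝ → ℝ) (t + h)) t := by
    have := (hF (t + h)).comp t ((hasDerivAt_id t).add_const h)
    simpa [Function.comp_def] using this
  exact ((hG.sub (hF t)).const_mul _)

lemma avg_matrix_tendsto (hcont : Continuous ρ) :
    Tendsto (fun m : ℕ => LinearMap.toMatrix (bZ ρ) (bZ ρ) (avgL hcont (1 / (m + 1 : ℝ))))
      atTop (𝓝 1) := by
  refine tendsto_pi_nhds.2 ?_
  intro i
  rw [tendsto_pi_nhds]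
  intro j
  -- entry (i, j)
  have hφc : Continuous fun s => (bZ ρ).equivFun (shiftZ s ((bZ ρ) j)) i := cont_coord hcont _ i
  have hΨ : HasDerivAt (fun y => ∫ s in (0:ℝ)..y, (bZ ρ).equivFun (shiftZ s ((bZ ρ) j)) i)
      ((bZ ρ).equivFun (shiftZ 0 ((bZ ρ) j)) i) 0 := ftcR _ hφc 0
  have hslope := hasDerivAt_iff_tendsto_slope.1 hΨ
  have hu : Tendsto (fun m : ℕ => 1 / (m + 1 : ℝ)) atTop (𝓝[≠] 0) := by
    rw [tendsto_nhdsWithin_iff]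
    refine ⟨tendsto_one_div_add_atTop_nhds_zero_nat, ?_⟩
    filter_upwards with m
    simp only [Set.mem_compl_iff, Set.mem_singleton_iff]
    positivity
  have hcomp := hslope.comp hu
  have hval : (bZ ρ).equivFun (shiftZ 0 ((bZ ρ) j)) i = (1 : Matrix (Fin (nZ ρ)) (Fin (nZ ρ)) ℝ) i j := by
    rw [shiftZ_zero, Module.Basis.equivFun_self, Matrix.one_apply]
    simp [eq_comm]
  have hentry : ∀ m : ℕ,
      (slope (fun y => ∫ s in (0:ℝ)..y, (bZ ρ).equivFun (shiftZ s ((bZ ρ) j)) i) 0)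
        (1 / (m + 1 : ℝ))
      = LinearMap.toMatrix (bZ ρ) (bZ ρ) (avgL hcont (1 / (m + 1 : ℝ))) i j := by
    intro m
    rw [slope_def_field]
    rw [LinearMap.toMatrix_apply]
    have : (bZ ρ).repr (avgL hcont (1 / (m + 1 : ℝ)) ((bZ ρ) j)) i
        = (bZ ρ).equivFun (avgL hcont (1 / (m + 1 : ℝ)) ((bZ ρ) j)) i := rfl
    rw [this]
    show _ = (bZ ρ).equivFun ((bZ ρ).equivFun.symm _) i
    rw [LinearEquiv.apply_symm_apply]
    rw [intervalIntegral.integral_same, sub_zero, sub_zero, div_eq_inv_mul]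
  rw [← hval]
  exact Tendsto.congr hentry hcomp

lemma exists_good_h (hcont : Continuous ρ) :
    ∃ h : ℝ, h ≠ 0 ∧ Function.Surjective (avgL hcont h) := by
  have hdet : Tendsto
      (fun m : ℕ => (LinearMap.toMatrix (bZ ρ) (bZ ρ) (avgL hcont (1 / (m + 1 : ℝ)))).det)
      atTop (𝓝 1) := by
    have hc : Continuous fun M : Matrix (Fin (nZ ρ)) (Fin (nZ ρ)) ℝ => M.det :=
      continuous_id.matrix_det
    have h2 := (hc.tendsto 1).comp (avg_matrix_tendsto hcont)
    rw [Matrix.det_one] at h2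
    exact h2
  have hne : ∀ᶠ m : ℕ in atTop,
      (LinearMap.toMatrix (bZ ρ) (bZ ρ) (avgL hcont (1 / (m + 1 : ℝ)))).det ≠ 0 :=
    hdet.eventually_ne one_ne_zero
  obtain ⟨m, hm⟩ := hne.exists
  refine ⟨1 / (m + 1 : ℝ), by positivity, ?_⟩
  intro y
  set M := LinearMap.toMatrix (bZ ρ) (bZ ρ) (avgL hcont (1 / (m + 1 : ℝ))) with hM
  have hinv : M * M⁻¹ = 1 := Matrix.mul_nonsing_inv M (isUnit_iff_ne_zero.2 hm)
  refine ⟨Matrix.toLin (bZ ρ) (bZ ρ) M⁻¹ y, ?_⟩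
  have hA : avgL hcont (1 / (m + 1 : ℝ)) = Matrix.toLin (bZ ρ) (bZ ρ) M :=
    (Matrix.toLin_toMatrix (bZ ρ) (bZ ρ) _).symm
  rw [hA]
  have hco := Matrix.toLin_mul (bZ ρ) (bZ ρ) (bZ ρ) M M⁻¹
  have : Matrix.toLin (bZ ρ) (bZ ρ) (M * M⁻¹) y
      = Matrix.toLin (bZ ρ) (bZ ρ) M (Matrix.toLin (bZ ρ) (bZ ρ) M⁻¹ y) := by
    rw [hco]; rfl
  rw [← this, hinv, Matrix.toLin_one]
  rfl

lemma exists_hasDeriv (hcont : Continuous ρ) (f : Zmod ρ) :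
    ∃ g : Zmod ρ, ∀ t, HasDerivAt (f : ℝ → ℝ) ((g : ℝ → ℝ) t) t := by
  obtain ⟨h, hh, hsurj⟩ := exists_good_h (ρ := ρ) hcont
  obtain ⟨g0, rfl⟩ := hsurj f
  refine ⟨h⁻¹ • (shiftZ h g0 - g0), fun t => ?_⟩
  have := avg_hasDeriv hcont h g0 t
  have hval : ((h⁻¹ • (shiftZ h g0 - g0) : Zmod ρ) : ℝ → ℝ) t
      = h⁻¹ * ((g0 : ℝ → ℝ) (t + h) - (g0 : ℝ → ℝ) t) := by
    push_cast
    simp only [Pi.smul_apply, Pi.sub_apply, smul_eq_mul]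
    rw [shiftZ_apply]
  rw [hval]
  exact this

lemma diffZ (hcont : Continuous ρ) (f : Zmod ρ) (t : ℝ) : DifferentiableAt ℝ (f : ℝ → ℝ) t := by
  obtain ⟨g, hg⟩ := exists_hasDeriv hcont f
  exact (hg t).differentiableAt

lemma derivZ_mem (hcont : Continuous ρ) (f : Zmod ρ) : deriv (f : ℝ → ℝ) ∈ Zmod ρ := by
  obtain ⟨g, hg⟩ := exists_hasDeriv hcont f
  have : deriv (f : ℝ → ℝ) = (g : ℝ → ℝ) := funext fun t => (hg t).deriv
  rw [this]; exact g.2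

/-- Differentiation as a linear endomorphism of `Zmod ρ`. -/
def Dmap (hcont : Continuous ρ) : Zmod ρ →ₗ[ℝ] Zmod ρ where
  toFun f := ⟨deriv (f : ℝ → ℝ), derivZ_mem hcont f⟩
  map_add' f g := by
    ext t
    show deriv (((f + g : Zmod ρ) : ℝ → ℝ)) t = deriv (f : ℝ → ℝ) t + deriv (g : ℝ → ℝ) t
    have : ((f + g : Zmod ρ) : ℝ → ℝ) = fun u => (f : ℝ → ℝ) u + (g : ℝ → ℝ) u := rfl
    rw [this, deriv_fun_add (diffZ hcont f t) (diffZ hcont g t)]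
  map_smul' a f := by
    ext t
    show deriv (((a • f : Zmod ρ) : ℝ → ℝ)) t = a * deriv (f : ℝ → ℝ) t
    have : ((a • f : Zmod ρ) : ℝ → ℝ) = fun u => a * (f : ℝ → ℝ) u := rfl
    rw [this, deriv_const_mul a (diffZ hcont f t)]

lemma Dmap_apply (hcont : Continuous ρ) (f : Zmod ρ) :
    (Dmap hcont f : ℝ → ℝ) = deriv (f : ℝ → ℝ) := rfl


def dilL (a : ℝ) : Zmod ρ →ₗ[ℝ] Zmod ρ :=
  (affL a 0).restrict (fun f hf => affL_mem a 0 hf)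

lemma dilL_apply (a : ℝ) (f : Zmod ρ) (t : ℝ) :
    (dilL a f : ℝ → ℝ) t = (f : ℝ → ℝ) (a * t) := by
  simp [dilL, affL, LinearMap.restrict_apply]

lemma dil_relation (hcont : Continuous ρ) :
    (Dmap hcont).comp (dilL 2) = (2:ℝ) • ((dilL (ρ := ρ) 2).comp (Dmap hcont)) := by
  apply LinearMap.ext
  intro f
  ext t
  have hd2 : HasDerivAt (fun u => (f : ℝ → ℝ) (2 * u)) (deriv (f : ℝ → ℝ) (2 * t) * 2) t := by
    have hf : HasDerivAt (f : ℝ → ℝ) (deriv (f : ℝ → ℝ) (2 * t)) (2 * t) :=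
      (diffZ hcont f (2 * t)).hasDerivAt
    have hg : HasDerivAt (fun u : ℝ => 2 * u) 2 t := by
      simpa using (hasDerivAt_id t).const_mul (2:ℝ)
    exact hf.comp t hg
  have hLHS : ((Dmap hcont).comp (dilL 2) f : ℝ → ℝ) t = deriv (fun u => (f : ℝ → ℝ) (2 * u)) t := by
    show (Dmap hcont (dilL 2 f) : ℝ → ℝ) t = _
    rw [Dmap_apply]
    congr 1
    funext u
    exact dilL_apply 2 f u
  have hRHS : (((2:ℝ) • ((dilL (ρ := ρ) 2).comp (Dmap hcont))) f : ℝ → ℝ) t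
      = 2 * deriv (f : ℝ → ℝ) (2 * t) := by
    show ((2:ℝ) • (dilL 2 (Dmap hcont f)) : Zmod ρ).val t = _
    have : ((2:ℝ) • (dilL 2 (Dmap hcont f)) : Zmod ρ).val t
        = 2 * (dilL 2 (Dmap hcont f) : ℝ → ℝ) t := rfl
    rw [this, dilL_apply, Dmap_apply]
  show ((Dmap hcont).comp (dilL 2) f : ℝ → ℝ) t = (((2:ℝ) • ((dilL (ρ := ρ) 2).comp (Dmap hcont))) f : ℝ → ℝ) t
  rw [hLHS, hRHS, hd2.deriv]
  ring

lemma dil_inv : (dilL (ρ := ρ) (1/2)).comp (dilL 2) = LinearMap.id := by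
  apply LinearMap.ext
  intro f
  ext t
  show (dilL (1/2) (dilL 2 f) : ℝ → ℝ) t = (f : ℝ → ℝ) t
  rw [dilL_apply, dilL_apply]
  congr 1
  ring

lemma dil_inv' : (dilL (ρ := ρ) 2).comp (dilL (1/2)) = LinearMap.id := by
  apply LinearMap.ext
  intro f
  ext t
  show (dilL 2 (dilL (1/2) f) : ℝ → ℝ) t = (f : ℝ → ℝ) t
  rw [dilL_apply, dilL_apply]
  congr 1
  ring

/-- The coefficient identity for composing with `C a * X`. -/
lemma coeff_comp_C_mul_X (p : Polynomial ℝ) (a : ℝ) (k : ℕ) :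
    (p.comp (C a * X)).coeff k = p.coeff k * a ^ k := by
  induction p using Polynomial.induction_on' with
  | add p q hp hq => simp [add_comp, hp, hq, add_mul]
  | monomial m b =>
      rw [monomial_comp]
      have : (C b) * (C a * X) ^ m = C (b * a ^ m) * X ^ m := by
        rw [mul_pow, ← C_pow, ← mul_assoc, ← C_mul]
      rw [this, coeff_C_mul, coeff_X_pow, coeff_monomial]
      by_cases h : m = k
      · subst h; simp [mul_comm]
      · rw [if_neg (fun hh => h hh.symm), if_neg h, mul_zero, zero_mul]

lemma Dpow_nilpotent (hcont : Continuous ρ) : (Dmap hcont) ^ (nZ ρ) = 0 := by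
  set n := nZ ρ
  set M := LinearMap.toMatrix (bZ ρ) (bZ ρ) (Dmap hcont) with hMdef
  set P := LinearMap.toMatrix (bZ ρ) (bZ ρ) (dilL (ρ := ρ) 2) with hPdef
  set Q := LinearMap.toMatrix (bZ ρ) (bZ ρ) (dilL (ρ := ρ) (1/2)) with hQdef
  have hQP : Q * P = 1 := by
    rw [hQdef, hPdef, ← LinearMap.toMatrix_comp, dil_inv, LinearMap.toMatrix_id]
  have hPQ : P * Q = 1 := by
    rw [hQdef, hPdef, ← LinearMap.toMatrix_comp, dil_inv', LinearMap.toMatrix_id]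
  have hMP : M * P = (2:ℝ) • (P * M) := by
    rw [hMdef, hPdef, ← LinearMap.toMatrix_comp, dil_relation hcont]
    rw [_root_.map_smul, LinearMap.toMatrix_comp (bZ ρ) (bZ ρ) (bZ ρ)]
  have hQMP : Q * M * P = (2:ℝ) • M := by
    rw [mul_assoc, hMP, Matrix.mul_smul, ← mul_assoc, hQP, one_mul]
  -- determinant identity
  have hdet1 : ∀ y : ℝ, (y • (1 : Matrix (Fin n) (Fin n) ℝ) - (2:ℝ) • M).det
      = (y • (1 : Matrix (Fin n) (Fin n) ℝ) - M).det := by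
    intro y
    have hconj : y • (1 : Matrix (Fin n) (Fin n) ℝ) - (2:ℝ) • M
        = Q * (y • (1 : Matrix (Fin n) (Fin n) ℝ) - M) * P := by
      rw [Matrix.mul_sub, Matrix.sub_mul]
      rw [Matrix.mul_smul, Matrix.smul_mul, mul_one, hQP, hQMP]
    rw [hconj, Matrix.det_mul, Matrix.det_mul]
    have : Q.det * P.det = 1 := by
      rw [← Matrix.det_mul, hQP, Matrix.det_one]
    calc Q.det * (y • (1 : Matrix (Fin n) (Fin n) ℝ) - M).det * P.det
        = (y • (1 : Matrix (Fin n) (Fin n) ℝ) - M).det * (Q.det * P.det) := by ring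
      _ = _ := by rw [this, mul_one]
  have hdet2 : ∀ y : ℝ, ((2 * y) • (1 : Matrix (Fin n) (Fin n) ℝ) - (2:ℝ) • M).det
      = 2 ^ n * (y • (1 : Matrix (Fin n) (Fin n) ℝ) - M).det := by
    intro y
    have : (2 * y) • (1 : Matrix (Fin n) (Fin n) ℝ) - (2:ℝ) • M
        = (2:ℝ) • (y • (1 : Matrix (Fin n) (Fin n) ℝ) - M) := by
      rw [smul_sub, smul_smul]
    rw [this, Matrix.det_smul]
    simp [Fintype.card_fin]
  -- the charpoly evaluates to these determinants
  have heval : ∀ y : ℝ, (M.charpoly).eval y = (y • (1 : Matrix (Fin n) (Fin n) ℝ) - M).det := by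
    intro y
    rw [Matrix.charpoly, ← Polynomial.coe_evalRingHom, RingHom.map_det]
    congr 1
    ext i j
    by_cases h : i = j
    · subst h
      simp [Matrix.charmatrix_apply_eq, Matrix.smul_apply, Matrix.one_apply, Matrix.sub_apply]
    · simp [Matrix.charmatrix_apply_ne _ _ _ h, Matrix.smul_apply, Matrix.one_apply_ne h,
        Matrix.sub_apply, h]
  -- scaling identity for the charpoly
  have hscale : ∀ y : ℝ, (M.charpoly).eval (2 * y) = 2 ^ n * (M.charpoly).eval y := by
    intro y
    rw [heval, heval]
    have h1 := hdet1 (2 * y)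
    have h2 := hdet2 y
    rw [← h1, h2]
  have hcomp : M.charpoly.comp (C 2 * X) = C ((2:ℝ) ^ n) * M.charpoly := by
    apply Polynomial.funext
    intro r
    rw [eval_comp, eval_mul, eval_C, eval_mul, eval_C, eval_X]
    exact hscale r
  have hdeg : M.charpoly.natDegree = n := by
    rw [Matrix.charpoly_natDegree_eq_dim, Fintype.card_fin]
  have hXn : M.charpoly = X ^ n := by
    apply Polynomial.ext
    intro k
    have hk := congrArg (fun p => Polynomial.coeff p k) hcomp
    simp only [coeff_comp_C_mul_X, coeff_C_mul] at hk
    rw [coeff_X_pow]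
    by_cases h : k = n
    · subst h
      rw [if_pos rfl]
      have := Matrix.charpoly_monic M
      rw [← hdeg]
      exact this.coeff_natDegree
    · rw [if_neg h]
      by_cases hkn : k < n
      · by_contra hne
        have hk' : M.charpoly.coeff k * (2:ℝ) ^ k = M.charpoly.coeff k * (2:ℝ) ^ n :=
          hk.trans (mul_comm _ _)
        have h2 : (2:ℝ) ^ k = 2 ^ n := mul_left_cancel₀ hne hk'
        have h3 : (2:ℕ) ^ k = 2 ^ n := by exact_mod_cast h2
        exact h (Nat.pow_right_injective (le_refl 2) h3)
      · push_neg at hkn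
        have : n < k := lt_of_le_of_ne hkn (Ne.symm h)
        exact Polynomial.coeff_eq_zero_of_natDegree_lt (hdeg ▸ this)
  have hCH := Matrix.aeval_self_charpoly M
  rw [hXn] at hCH
  have hMn : M ^ n = 0 := by
    rw [Polynomial.aeval_X_pow] at hCH
    exact hCH
  -- transfer back
  have hpow : ∀ k : ℕ, LinearMap.toMatrix (bZ ρ) (bZ ρ) ((Dmap hcont) ^ k) = M ^ k := by
    intro k
    induction k with
    | zero =>
        rw [pow_zero, pow_zero, show (1 : Zmod ρ →ₗ[ℝ] Zmod ρ) = LinearMap.id from rfl,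
          LinearMap.toMatrix_id]
    | succ k ih =>
        rw [pow_succ, pow_succ, ← ih]
        rw [← LinearMap.toMatrix_comp (bZ ρ) (bZ ρ) (bZ ρ)]
        rfl
  apply (LinearMap.toMatrix (bZ ρ) (bZ ρ)).injective
  rw [hpow n, hMn, LinearEquiv.map_zero]


lemma Dpow_val (hcont : Continuous ρ) (k : ℕ) (f : Zmod ρ) :
    (((Dmap hcont) ^ k) f : ℝ → ℝ) = deriv^[k] (f : ℝ → ℝ) := by
  induction k generalizing f with
  | zero => rfl
  | succ k ih =>
      rw [Function.iterate_succ_apply]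
      have : ((Dmap hcont) ^ (k+1)) f = ((Dmap hcont) ^ k) (Dmap hcont f) := by
        rw [pow_succ]
        rfl
      rw [this, ih (Dmap hcont f), Dmap_apply]

lemma iter_deriv_zero (hcont : Continuous ρ) :
    deriv^[nZ ρ] ρ = 0 := by
  have h1 : (((Dmap hcont) ^ (nZ ρ)) ⟨ρ, rho_mem⟩ : ℝ → ℝ) = deriv^[nZ ρ] ρ :=
    Dpow_val hcont (nZ ρ) ⟨ρ, rho_mem⟩
  rw [Dpow_nilpotent hcont] at h1
  rw [← h1]
  rfl

lemma iter_deriv_mem (hcont : Continuous ρ) (k : ℕ) : deriv^[k] ρ ∈ Zmod ρ := by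
  have h1 : (((Dmap hcont) ^ k) ⟨ρ, rho_mem⟩ : ℝ → ℝ) = deriv^[k] ρ :=
    Dpow_val hcont k ⟨ρ, rho_mem⟩
  rw [← h1]
  exact (((Dmap hcont) ^ k) ⟨ρ, rho_mem⟩).2

end FD

/-- Every real polynomial has a polynomial antiderivative. -/
lemma exists_antideriv (p : Polynomial ℝ) : ∃ P : Polynomial ℝ, P.derivative = p := by
  induction p using Polynomial.induction_on' with
  | add p q hp hq =>
      obtain ⟨P, hP⟩ := hp
      obtain ⟨Q, hQ⟩ := hq
      exact ⟨P + Q, by rw [derivative_add, hP, hQ]⟩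
  | monomial m b =>
      refine ⟨Polynomial.monomial (m + 1) (b / (m + 1)), ?_⟩
      rw [Polynomial.derivative_monomial]
      congr 1
      push_cast
      field_simp

/-- If all iterated derivatives up to order `n` exist (differentiably) and the `n`-th
iterated derivative vanishes, the function is a polynomial. -/
lemma poly_of_iter_deriv : ∀ (n : ℕ) (f : ℝ → ℝ),
    (∀ k, k < n → Differentiable ℝ (deriv^[k] f)) → deriv^[n] f = 0 →
    ∃ p : Polynomial ℝ, ∀ x, f x = p.eval x := by
  intro n
  induction n with
  | zero =>
      intro f _ h0
      exact ⟨0, fun x => by simpa using congrFun h0 x⟩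
  | succ n ih =>
      intro f hdiff h0
      obtain ⟨p, hp⟩ := ih (deriv f)
        (fun k hk => by
          have := hdiff (k + 1) (Nat.succ_lt_succ hk)
          rwa [Function.iterate_succ_apply] at this)
        (by rwa [← Function.iterate_succ_apply])
      obtain ⟨P, hP⟩ := exists_antideriv p
      have hfd : Differentiable ℝ f := by
        have := hdiff 0 (Nat.succ_pos n)
        simpa using this
      have hconst : ∀ x : ℝ, f x - P.eval x = f 0 - P.eval 0 := by
        intro x
        have hdiffg : Differentiable ℝ (fun x => f x - P.eval x) :=
          hfd.sub (Polynomial.differentiable P)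
        have hderiv0 : ∀ x, deriv (fun x => f x - P.eval x) x = 0 := by
          intro x
          rw [deriv_fun_sub (hfd x) (Polynomial.differentiable P x)]
          rw [Polynomial.deriv, hP, hp x, sub_self]
        exact is_const_of_deriv_eq_zero hdiffg hderiv0 x 0
      refine ⟨P + Polynomial.C (f 0 - P.eval 0), fun x => ?_⟩
      rw [Polynomial.eval_add, Polynomial.eval_C]
      have := hconst x
      linarith

/-- Main analytic step: a continuous activation whose affine orbit spans a
finite-dimensional space is a polynomial. -/
theorem poly_of_fd (ρ : ℝ → ℝ) (hcont : Continuous ρ)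
    (hfd : FiniteDimensional ℝ (Zmod ρ)) : ∃ p : Polynomial ℝ, ∀ x, ρ x = p.eval x := by
  apply poly_of_iter_deriv (nZ ρ) ρ
  · intro k _
    intro t
    exact diffZ hcont ⟨deriv^[k] ρ, iter_deriv_mem hcont k⟩ t
  · exact iter_deriv_zero hcont


/-! ### Part 1: reduction from neural networks -/

/-- Evaluation on a finite set detects zero in a finite-dimensional space of functions. -/
lemma exists_finset_eval {X : Type*} (V : Submodule ℝ (X → ℝ)) [FiniteDimensional ℝ V] :
    ∃ T : Finset X, ∀ f ∈ V, (∀ x ∈ T, f x = 0) → f = 0 := by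
  classical
  let K : Finset X → Submodule ℝ (X → ℝ) := fun T =>
    V ⊓ ⨅ x ∈ T, LinearMap.ker (LinearMap.proj (R := ℝ) (φ := fun _ : X => ℝ) x)
  have hKle : ∀ T, K T ≤ V := fun T => inf_le_left
  have hfd : ∀ T : Finset X, FiniteDimensional ℝ (K T) := fun T =>
    Submodule.finiteDimensional_of_le (hKle T)
  have hmemK : ∀ (T : Finset X) (f : X → ℝ), f ∈ K T ↔ (f ∈ V ∧ ∀ x ∈ T, f x = 0) := by
    intro T f
    constructor
    · rintro ⟨h1, h2⟩
      refine ⟨h1, fun x hx => ?_⟩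
      have := Submodule.mem_iInf _ |>.1 h2 x
      have := Submodule.mem_iInf _ |>.1 this hx
      simpa using this
    · rintro ⟨h1, h2⟩
      refine ⟨h1, ?_⟩
      refine Submodule.mem_iInf _ |>.2 fun x => Submodule.mem_iInf _ |>.2 fun hx => ?_
      simpa using h2 x hx
  let S : Set ℕ := {m | ∃ T : Finset X, Module.finrank ℝ (K T) = m}
  have hS : S.Nonempty := ⟨Module.finrank ℝ (K ∅), ∅, rfl⟩
  obtain ⟨T₀, hT₀⟩ : ∃ T₀ : Finset X, Module.finrank ℝ (K T₀) = sInf S := Nat.sInf_mem hS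
  refine ⟨T₀, fun f hf h0 => ?_⟩
  have hfK : f ∈ K T₀ := (hmemK T₀ f).2 ⟨hf, h0⟩
  by_contra hne
  obtain ⟨y, hy⟩ : ∃ y, f y ≠ 0 := by
    by_contra hall
    push_neg at hall
    exact hne (funext hall)
  have hle1 : K (insert y T₀) ≤ K T₀ := by
    intro g hg
    rw [hmemK] at hg ⊢
    exact ⟨hg.1, fun x hx => hg.2 x (Finset.mem_insert_of_mem hx)⟩
  have hlt : K (insert y T₀) < K T₀ := by
    refine lt_of_le_of_ne hle1 (fun heq => ?_)
    have hf2 : f ∈ K (insert y T₀) := by rw [heq]; exact hfK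
    rw [hmemK] at hf2
    exact hy (hf2.2 y (Finset.mem_insert_self y T₀))
  have := Submodule.finrank_lt_finrank_of_lt (K := ℝ) hlt
  have hmem : Module.finrank ℝ (K (insert y T₀)) ∈ S := ⟨_, rfl⟩
  have := Nat.sInf_le hmem
  omega

/-- The single layer used in the construction. -/
def layerSpec (N : ℕ → ℕ) (L : ℕ) (ρ : ℝ → ℝ) (x₀ c ε : ℝ) (w : Fin (N 0) → ℝ) (b : ℝ)
    (k : ℕ) : (Fin (N (k + 1)) → Fin (N k) → ℝ) × (Fin (N (k + 1)) → ℝ) :=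
  if h0 : k = 0 then
    (fun _ j => w (Fin.cast (congrArg N h0) j), fun _ => b)
  else if k + 1 = L then
    (if L = 2 then ((fun _ j => if (j : ℕ) = 0 then 1 else 0), fun _ => 0)
     else ((fun _ j => if (j : ℕ) = 0 then 1 / (c * ε) else 0), fun _ => -ρ x₀ / (c * ε)))
  else if k = 1 then
    ((fun _ j => if (j : ℕ) = 0 then ε else 0), fun _ => x₀)
  else
    ((fun _ j => if (j : ℕ) = 0 then 1 / c else 0), fun _ => x₀ - ρ x₀ / c)

def Φnet (N : ℕ → ℕ) (L : ℕ) (ρ : ℝ → ℝ) (x₀ c ε : ℝ) (w : Fin (N 0) → ℝ) (b : ℝ) :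
    NNParams L N := fun ℓ => layerSpec N L ρ x₀ c ε w b ℓ.val

lemma sum_ind {n : ℕ} (hn : 0 < n) (α : ℝ) (x : Fin n → ℝ) :
    (∑ j : Fin n, (if (j : ℕ) = 0 then α else 0) * x j) = α * x ⟨0, hn⟩ := by
  rw [Finset.sum_eq_single (⟨0, hn⟩ : Fin n)]
  · simp
  · intro j _ hj
    have : ¬((j : ℕ) = 0) := fun h => hj (Fin.ext h)
    simp [this]
  · intro h; exact absurd (Finset.mem_univ _) h

lemma hidden_const (ρ : ℝ → ℝ) : ∀ (m : ℕ) (N : ℕ → ℕ) (Φ : NNParams m N) (α β : ℝ),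
    (∀ k, k ≤ m → 0 < N k) →
    (∀ (ℓ : Fin m) (i : Fin (N (ℓ.val + 1))) (j : Fin (N ℓ.val)),
        (Φ ℓ).1 i j = if (j : ℕ) = 0 then α else 0) →
    (∀ (ℓ : Fin m) (i : Fin (N (ℓ.val + 1))), (Φ ℓ).2 i = β) →
    ∀ (x : Fin (N 0) → ℝ) (s : ℝ), (∀ j, x j = s) →
    ∀ (i : Fin (N m)), nnHidden ρ m N Φ x i = (fun v => ρ (α * v + β))^[m] s := by
  intro m
  induction m with
  | zero =>
      intro N Φ α β hpos hW hB x s hx i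
      exact hx i
  | succ m ih =>
      intro N Φ α β hpos hW hB x s hx i
      have hunfold : nnHidden ρ (m + 1) N Φ x
          = nnHidden ρ m (fun k => N (k + 1))
              (fun ℓ => Φ ⟨ℓ.val + 1, Nat.succ_lt_succ ℓ.isLt⟩)
              (fun i => ρ (nnAffine (Φ ⟨0, Nat.succ_pos m⟩) x i)) := rfl
      rw [hunfold]
      have hx' : ∀ j : Fin (N 1), ρ (nnAffine (Φ ⟨0, Nat.succ_pos m⟩) x j) = ρ (α * s + β) := by
        intro j
        congr 1
        show (∑ j', (Φ ⟨0, Nat.succ_pos m⟩).1 j j' * x j') + (Φ ⟨0, Nat.succ_pos m⟩).2 j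
            = α * s + β
        rw [hB ⟨0, Nat.succ_pos m⟩ j]
        congr 1
        have : ∀ j' : Fin (N 0), (Φ ⟨0, Nat.succ_pos m⟩).1 j j' * x j'
            = (if (j' : ℕ) = 0 then α else 0) * x j' := by
          intro j'; rw [hW ⟨0, Nat.succ_pos m⟩ j j']
        rw [Finset.sum_congr rfl fun j' _ => this j', sum_ind (hpos 0 (Nat.zero_le _)) α x,
          hx ⟨0, hpos 0 (Nat.zero_le _)⟩]
      have := ih (fun k => N (k + 1))
        (fun ℓ => Φ ⟨ℓ.val + 1, Nat.succ_lt_succ ℓ.isLt⟩) α β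
        (fun k hk => hpos (k + 1) (Nat.succ_le_succ hk))
        (fun ℓ i j => hW ⟨ℓ.val + 1, Nat.succ_lt_succ ℓ.isLt⟩ i j)
        (fun ℓ i => hB ⟨ℓ.val + 1, Nat.succ_lt_succ ℓ.isLt⟩ i)
        (fun i => ρ (nnAffine (Φ ⟨0, Nat.succ_pos m⟩) x i)) (ρ (α * s + β))
        hx' i
      rw [this, Function.iterate_succ_apply]

lemma pipe_alg (ρ : ℝ → ℝ) (x₀ c ε : ℝ) (hc : c ≠ 0) (hε : ε ≠ 0) :
    ∀ (M : ℕ) (s : ℝ),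
      (1 / (c * ε)) * (fun v => ρ ((1 / c) * v + (x₀ - ρ x₀ / c)))^[M] (ρ (ε * s + x₀))
          + (-ρ x₀ / (c * ε))
        = (fun v => (ρ (ε * v + x₀) - ρ x₀) / (c * ε))^[M + 1] s := by
  intro M
  induction M with
  | zero =>
      intro s
      simp only [Function.iterate_zero, id_eq, Function.iterate_one]
      show _ = (ρ (ε * s + x₀) - ρ x₀) / (c * ε)
      field_simp
      try ring
  | succ M ih =>
      intro s
      have harg : (1 / c) * (ρ (ε * s + x₀)) + (x₀ - ρ x₀ / c)
          = ε * ((ρ (ε * s + x₀) - ρ x₀) / (c * ε)) + x₀ := by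
        field_simp
        try ring
      have hstep : (fun v => ρ ((1 / c) * v + (x₀ - ρ x₀ / c)))^[M + 1] (ρ (ε * s + x₀))
          = (fun v => ρ ((1 / c) * v + (x₀ - ρ x₀ / c)))^[M]
              (ρ (ε * ((ρ (ε * s + x₀) - ρ x₀) / (c * ε)) + x₀)) := by
        rw [Function.iterate_succ_apply]
        congr 1
        show ρ ((1 / c) * (ρ (ε * s + x₀)) + (x₀ - ρ x₀ / c)) = _
        rw [harg]
      rw [hstep, ih ((ρ (ε * s + x₀) - ρ x₀) / (c * ε))]
      rw [← Function.iterate_succ_apply (fun v => (ρ (ε * v + x₀) - ρ x₀) / (c * ε))]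

lemma fin_cast_triv {n : ℕ} : ∀ (pf : n = n) (j : Fin n), Fin.cast pf j = j := by
  intro pf j
  exact Fin.ext (by simp)

lemma sum_ind0 {n : ℕ} (hn : 0 < n) (α : ℝ) (A : ℝ) :
    (∑ j : Fin n, (if (j : ℕ) = 0 then α else 0) * A) = α * A := by
  exact sum_ind hn α (fun _ => A)

lemma layerSpec_zero (N : ℕ → ℕ) (L : ℕ) (ρ : ℝ → ℝ) (x₀ c ε : ℝ)
    (w : Fin (N 0) → ℝ) (b : ℝ) :
    layerSpec N L ρ x₀ c ε w b 0 = (fun _ j => w j, fun _ => b) := by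
  rw [layerSpec, dif_pos rfl]
  refine Prod.ext ?_ rfl
  funext ii jj
  simp only [fin_cast_triv]

lemma realization_eq (M : ℕ) (N : ℕ → ℕ) (hN : ∀ ℓ ≤ M + 2, 0 < N ℓ)
    (ρ : ℝ → ℝ) (x₀ c ε : ℝ) (hc : c ≠ 0) (hε : ε ≠ 0) (w : Fin (N 0) → ℝ) (b : ℝ)
    (x : Fin (N 0) → ℝ) (i : Fin (N (M + 2))) :
    nnRealization ρ (M + 2) N (Φnet N (M + 2) ρ x₀ c ε w b) x i
      = (fun v => (ρ (ε * v + x₀) - ρ x₀) / (c * ε))^[M] (ρ ((∑ j, w j * x j) + b)) := by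
  rcases M with _ | M'
  · -- L = 2
    set Φ := Φnet N 2 ρ x₀ c ε w b with hΦdef
    set s₁ := ρ ((∑ j, w j * x j) + b) with hs₁
    have hΦ0 : Φ ⟨0, by omega⟩ = ((fun _ j => w j, fun _ => b) : NNLayer N 0) :=
      layerSpec_zero N 2 ρ x₀ c ε w b
    have hfirst : ∀ (h : (0:ℕ) < 2) (j : Fin (N 1)),
        ρ (nnAffine (Φ ⟨0, h⟩) x j) = s₁ := by
      intro h j
      rw [hs₁]
      congr 1
    have hΦ1 : Φ ⟨1, by omega⟩
        = (((fun _ j => if (j : ℕ) = 0 then 1 else 0), fun _ => 0) : NNLayer N 1) := by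
      show layerSpec N 2 ρ x₀ c ε w b 1 = _
      rw [layerSpec, dif_neg (by omega), if_pos rfl, if_pos rfl]
    have hreal : nnRealization ρ 2 N Φ x
        = nnAffine (Φ ⟨1, by omega⟩)
            (nnHidden ρ 1 N (fun ℓ => Φ ⟨ℓ.val, by omega⟩) x) := rfl
    have hhid : nnHidden ρ 1 N (fun ℓ => Φ ⟨ℓ.val, by omega⟩) x
        = (fun j => ρ (nnAffine (Φ ⟨0, by omega⟩) x j)) := rfl
    rw [hreal, hhid]
    show (∑ j : Fin (N 1), (Φ ⟨1, by omega⟩).1 i j * (ρ (nnAffine (Φ ⟨0, by omega⟩) x j)))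
        + (Φ ⟨1, by omega⟩).2 i = _
    rw [hΦ1]
    have hcong := Finset.sum_congr (rfl : (Finset.univ : Finset (Fin (N 1))) = Finset.univ)
      fun (j : Fin (N 1)) _ =>
      congrArg (fun z => (if ((j : Fin (N 1)) : ℕ) = 0 then (1:ℝ) else 0) * z)
        (hfirst (by omega) j)
    rw [hcong, sum_ind0 (hN 1 (by omega)) 1 s₁, one_mul]
    show s₁ + 0 = s₁
    rw [add_zero]
  · -- L = M' + 3
    set Φ := Φnet N (M' + 3) ρ x₀ c ε w b with hΦdef
    set s₁ := ρ ((∑ j, w j * x j) + b) with hs₁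
    have hΦ0 : Φ ⟨0, by omega⟩ = ((fun _ j => w j, fun _ => b) : NNLayer N 0) :=
      layerSpec_zero N (M' + 3) ρ x₀ c ε w b
    have hfirst : ∀ (h : (0:ℕ) < M' + 3) (j : Fin (N 1)),
        ρ (nnAffine (Φ ⟨0, h⟩) x j) = s₁ := by
      intro h j
      rw [hs₁]
      congr 1
    have hreal : nnRealization ρ (M' + 3) N Φ x
        = nnAffine (Φ ⟨M' + 2, by omega⟩)
            (nnHidden ρ (M' + 2) N (fun ℓ => Φ ⟨ℓ.val, by omega⟩) x) := rfl
    have hhid1 : nnHidden ρ (M' + 2) N (fun ℓ => Φ ⟨ℓ.val, by omega⟩) x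
        = nnHidden ρ (M' + 1) (fun k => N (k + 1)) (fun ℓ => Φ ⟨ℓ.val + 1, by omega⟩)
            (fun j => ρ (nnAffine (Φ ⟨0, by omega⟩) x j)) := rfl
    have hhid2 : nnHidden ρ (M' + 1) (fun k => N (k + 1)) (fun ℓ => Φ ⟨ℓ.val + 1, by omega⟩)
          (fun j => ρ (nnAffine (Φ ⟨0, by omega⟩) x j))
        = nnHidden ρ M' (fun k => N (k + 2)) (fun ℓ => Φ ⟨ℓ.val + 2, by omega⟩)
          (fun j => ρ (nnAffine (Φ ⟨1, by omega⟩)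
            (fun j' => ρ (nnAffine (Φ ⟨0, by omega⟩) x j')) j)) := rfl
    have hΦ1 : Φ ⟨1, by omega⟩
        = (((fun _ j => if (j : ℕ) = 0 then ε else 0), fun _ => x₀) : NNLayer N 1) := by
      show layerSpec N (M' + 3) ρ x₀ c ε w b 1 = _
      rw [layerSpec, dif_neg (by omega), if_neg (by omega), if_pos rfl]
    have hsecond : ∀ j : Fin (N 2),
        ρ (nnAffine (Φ ⟨1, by omega⟩) (fun j' => ρ (nnAffine (Φ ⟨0, by omega⟩) x j')) j)
          = ρ (ε * s₁ + x₀) := by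
      intro j
      congr 1
      show (∑ j' : Fin (N 1), (Φ ⟨1, by omega⟩).1 j j' * (ρ (nnAffine (Φ ⟨0, by omega⟩) x j')))
          + (Φ ⟨1, by omega⟩).2 j = ε * s₁ + x₀
      rw [hΦ1]
      have hcong := Finset.sum_congr (rfl : (Finset.univ : Finset (Fin (N 1))) = Finset.univ)
        fun (j' : Fin (N 1)) _ =>
        congrArg (fun z => (if ((j' : Fin (N 1)) : ℕ) = 0 then ε else 0) * z)
          (hfirst (by omega) j')
      rw [hcong, sum_ind0 (hN 1 (by omega)) ε s₁]
    have hmid : ∀ (i' : Fin (N (M' + 2))),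
        nnHidden ρ M' (fun k => N (k + 2)) (fun ℓ => Φ ⟨ℓ.val + 2, by omega⟩)
          (fun j => ρ (nnAffine (Φ ⟨1, by omega⟩)
            (fun j' => ρ (nnAffine (Φ ⟨0, by omega⟩) x j')) j)) i'
          = (fun v => ρ ((1 / c) * v + (x₀ - ρ x₀ / c)))^[M'] (ρ (ε * s₁ + x₀)) := by
      intro i'
      apply hidden_const ρ M' (fun k => N (k + 2)) (fun ℓ => Φ ⟨ℓ.val + 2, by omega⟩)
        (1 / c) (x₀ - ρ x₀ / c)
        (fun k hk => hN (k + 2) (by omega))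
      · intro ℓ ii jj
        show (layerSpec N (M' + 3) ρ x₀ c ε w b (ℓ.val + 2)).1 ii jj = _
        rw [layerSpec, dif_neg (by omega), if_neg (by omega), if_neg (by omega)]
      · intro ℓ ii
        show (layerSpec N (M' + 3) ρ x₀ c ε w b (ℓ.val + 2)).2 ii = _
        rw [layerSpec, dif_neg (by omega), if_neg (by omega), if_neg (by omega)]
      · exact hsecond
    have hΦout : Φ ⟨M' + 2, by omega⟩
        = (((fun _ j => if (j : ℕ) = 0 then 1 / (c * ε) else 0), fun _ => -ρ x₀ / (c * ε))
            : NNLayer N (M' + 2)) := by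
      show layerSpec N (M' + 3) ρ x₀ c ε w b (M' + 2) = _
      rw [layerSpec, dif_neg (by omega), if_pos rfl, if_neg (by omega)]
    rw [hreal, hhid1, hhid2]
    show (∑ j : Fin (N (M' + 2)), (Φ ⟨M' + 2, by omega⟩).1 i j
          * (nnHidden ρ M' (fun k => N (k + 2)) (fun ℓ => Φ ⟨ℓ.val + 2, by omega⟩)
            (fun j => ρ (nnAffine (Φ ⟨1, by omega⟩)
              (fun j' => ρ (nnAffine (Φ ⟨0, by omega⟩) x j')) j)) j))
        + (Φ ⟨M' + 2, by omega⟩).2 i = _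
    rw [hΦout]
    have hcong := Finset.sum_congr
      (rfl : (Finset.univ : Finset (Fin (N (M' + 2)))) = Finset.univ)
      fun (j : Fin (N (M' + 2))) _ =>
      congrArg (fun z => (if ((j : Fin (N (M' + 2))) : ℕ) = 0 then 1 / (c * ε) else 0) * z)
        (hmid j)
    rw [hcong, sum_ind0 (hN (M' + 2) (by omega)) (1 / (c * ε))
      ((fun v => ρ ((1 / c) * v + (x₀ - ρ x₀ / c)))^[M'] (ρ (ε * s₁ + x₀)))]
    exact pipe_alg ρ x₀ c ε hc hε M' s₁

lemma key_limit {ρ : ℝ → ℝ} {x₀ c : ℝ} (hd : HasDerivAt ρ c x₀) (hc : c ≠ 0)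
    {u : ℕ → ℝ} {v : ℝ} (hu : Tendsto u atTop (𝓝 v)) :
    Tendsto (fun m : ℕ => (ρ ((1 / (m + 1 : ℝ)) * u m + x₀) - ρ x₀) / (c * (1 / (m + 1 : ℝ))))
      atTop (𝓝 v) := by
  set ε : ℕ → ℝ := fun m => 1 / (m + 1 : ℝ) with hε
  have hε0 : ∀ m, ε m ≠ 0 := fun m => by positivity
  have hεlim : Tendsto ε atTop (𝓝 0) := tendsto_one_div_add_atTop_nhds_zero_nat
  set h : ℕ → ℝ := fun m => ε m * u m with hh
  have hhlim : Tendsto h atTop (𝓝 0) := by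
    have := hεlim.mul hu
    rwa [zero_mul] at this
  set r : ℕ → ℝ := fun m => ρ (x₀ + h m) - ρ x₀ - h m * c with hr
  have hlo := hasDerivAt_iff_isLittleO_nhds_zero.1 hd
  have hdecomp : ∀ m, (ρ ((ε m) * u m + x₀) - ρ x₀) / (c * ε m) = r m / (c * ε m) + u m := by
    intro m
    rw [hr]
    have h1 : ε m * u m + x₀ = x₀ + h m := by rw [hh]; ring
    rw [h1]
    simp only [hh]; field_simp [hε0 m]
    ring
  have hr0 : Tendsto (fun m => r m / (c * ε m)) atTop (𝓝 0) := by
    rw [NormedAddCommGroup.tendsto_nhds_zero]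
    intro η hη
    have hb : ∀ᶠ m in atTop, |u m| < |v| + 1 :=
      (hu.abs).eventually_lt_const (lt_add_one _)
    have hδpos : 0 < η * |c| / (2 * (|v| + 1)) := by positivity
    have hsmall := hlo.def hδpos
    have hev := hhlim.eventually hsmall
    filter_upwards [hb, hev] with m hbm hevm
    have hnorm : |r m| ≤ (η * |c| / (2 * (|v| + 1))) * (|ε m| * |u m|) := by
      have : ‖ρ (x₀ + h m) - ρ x₀ - h m • c‖ ≤ (η * |c| / (2 * (|v| + 1))) * ‖h m‖ := hevm
      rw [hh] at this
      simp only [smul_eq_mul, Real.norm_eq_abs, abs_mul] at this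
      calc |r m| = |ρ (x₀ + ε m * u m) - ρ x₀ - (ε m * u m) * c| := by rw [hr, hh]
        _ ≤ (η * |c| / (2 * (|v| + 1))) * (|ε m| * |u m|) := this
    have hcεpos : 0 < |c| * |ε m| := by
      have := hε0 m
      have h1 : |c| > 0 := abs_pos.2 hc
      have h2 : |ε m| > 0 := abs_pos.2 this
      positivity
    have : ‖r m / (c * ε m)‖ = |r m| / (|c| * |ε m|) := by
      rw [Real.norm_eq_abs, abs_div, abs_mul]
    rw [this]
    have hle : |r m| / (|c| * |ε m|)
        ≤ ((η * |c| / (2 * (|v| + 1))) * (|ε m| * |u m|)) / (|c| * |ε m|) := by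
      gcongr
    have heq : ((η * |c| / (2 * (|v| + 1))) * (|ε m| * |u m|)) / (|c| * |ε m|)
        = η * |u m| / (2 * (|v| + 1)) := by
      field_simp [abs_ne_zero.2 (hε0 m)]
    rw [heq] at hle
    have hfinal : η * |u m| / (2 * (|v| + 1)) < η := by
      rw [div_lt_iff₀ (by positivity)]
      have h1 : |u m| < |v| + 1 := hbm
      nlinarith [abs_nonneg (u m), abs_nonneg v, hη]
    exact lt_of_le_of_lt hle hfinal
  have := hr0.add hu
  rw [zero_add] at this
  apply this.congr
  intro m
  rw [← hdecomp m]

lemma iter_limit {ρ : ℝ → ℝ} {x₀ c : ℝ} (hd : HasDerivAt ρ c x₀) (hc : c ≠ 0)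
    (k : ℕ) (s : ℝ) :
    Tendsto (fun m : ℕ =>
        (fun v => (ρ ((1 / (m + 1 : ℝ)) * v + x₀) - ρ x₀) / (c * (1 / (m + 1 : ℝ))))^[k] s)
      atTop (𝓝 s) := by
  induction k with
  | zero => simpa using tendsto_const_nhds
  | succ k ih =>
      have : ∀ m : ℕ,
          (fun v => (ρ ((1 / (m + 1 : ℝ)) * v + x₀) - ρ x₀) / (c * (1 / (m + 1 : ℝ))))^[k+1] s
          = (ρ ((1 / (m + 1 : ℝ)) *
              ((fun v => (ρ ((1 / (m + 1 : ℝ)) * v + x₀) - ρ x₀) / (c * (1 / (m + 1 : ℝ))))^[k] s)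
              + x₀) - ρ x₀) / (c * (1 / (m + 1 : ℝ))) := by
        intro m
        rw [Function.iterate_succ_apply']
      have hlim := key_limit hd hc (u := fun m =>
        (fun v => (ρ ((1 / (m + 1 : ℝ)) * v + x₀) - ρ x₀) / (c * (1 / (m + 1 : ℝ))))^[k] s) ih
      exact Tendsto.congr (fun m => (this m).symm) hlim

lemma exists_li_family (Z : Submodule ℝ (ℝ → ℝ)) (hinf : ¬ FiniteDimensional ℝ Z) (k : ℕ) :
    ∃ g : Fin k → Z, LinearIndependent ℝ g := by
  classical
  obtain ⟨bb, _, hspan, hli⟩ := exists_linearIndependent ℝ (Set.univ : Set Z)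
  by_cases hb : bb.Finite
  · exfalso
    apply hinf
    have h1 : FiniteDimensional ℝ ↥(Submodule.span ℝ bb) :=
      FiniteDimensional.span_of_finite ℝ hb
    rw [hspan, Submodule.span_univ] at h1
    exact Module.Finite.equiv (Submodule.topEquiv (R := ℝ) (M := Z))
  · have hinfb : bb.Infinite := hb
    obtain ⟨e⟩ : Nonempty (ℕ ↪ bb) := ⟨Set.Infinite.natEmbedding bb hinfb⟩
    have h2 := hli.comp (fun i : Fin k => e i.val)
      (Function.Injective.comp e.injective Fin.val_injective)
    exact ⟨_, h2⟩

lemma fd_of_delta (ρ : ℝ → ℝ) (δ : ℝ) (hδ : 0 < δ) (W : Submodule ℝ (ℝ → ℝ))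
    [FiniteDimensional ℝ W]
    (hW : ∀ a b : ℝ, (fun t => if |t| < δ then ρ (a * t + b) else 0) ∈ W) :
    FiniteDimensional ℝ (Zmod ρ) := by
  classical
  by_contra hinf
  set n := Module.finrank ℝ W with hn
  obtain ⟨g, hgli⟩ := exists_li_family (Zmod ρ) hinf (n + 1)
  have hgli' : LinearIndependent ℝ (fun i => ((g i : Zmod ρ) : ℝ → ℝ)) :=
    hgli.map' (Zmod ρ).subtype (Submodule.ker_subtype _)
  set V' := Submodule.span ℝ (Set.range fun i => ((g i : Zmod ρ) : ℝ → ℝ)) with hV'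
  haveI : FiniteDimensional ℝ V' := FiniteDimensional.span_of_finite ℝ (Set.finite_range _)
  obtain ⟨T, hT⟩ := exists_finset_eval V'
  set Mb : ℝ := 1 + ∑ s ∈ T, |s| with hMb
  have hMpos : 0 < Mb := by
    have : (0:ℝ) ≤ ∑ s ∈ T, |s| := Finset.sum_nonneg fun i _ => abs_nonneg i
    rw [hMb]; linarith
  have hMbound : ∀ s ∈ T, |s| ≤ Mb := by
    intro s hs
    have := Finset.single_le_sum (f := fun s : ℝ => |s|) (fun i _ => abs_nonneg i) hs
    rw [hMb]; linarith
  set γ := 2 * Mb / δ with hγ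
  have hγpos : 0 < γ := by positivity
  have hCL : ∀ f ∈ Zmod ρ, (fun t => if |t| < δ then f (γ * t) else 0) ∈ W := by
    intro f hf
    induction hf using Submodule.span_induction with
    | mem q hq =>
        obtain ⟨a, b', rfl⟩ := hq
        have : (fun t => if |t| < δ then (fun u => ρ (a * u + b')) (γ * t) else 0)
            = (fun t => if |t| < δ then ρ ((a * γ) * t + b') else 0) := by
          funext t
          by_cases ht : |t| < δ
          · rw [if_pos ht, if_pos ht]
            congr 1
            ring
          · rw [if_neg ht, if_neg ht]
        rw [this]
        exact hW (a * γ) b'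
    | zero =>
        have : (fun t => if |t| < δ then (0 : ℝ → ℝ) (γ * t) else 0) = (0 : ℝ → ℝ) := by
          funext t
          by_cases ht : |t| < δ <;> simp [ht]
        rw [this]
        exact W.zero_mem
    | add f1 f2 h1 h2 ih1 ih2 =>
        have : (fun t => if |t| < δ then (f1 + f2) (γ * t) else 0)
            = (fun t => if |t| < δ then f1 (γ * t) else 0)
              + (fun t => if |t| < δ then f2 (γ * t) else 0) := by
          funext t
          by_cases ht : |t| < δ <;> simp [ht]
        rw [this]
        exact W.add_mem ih1 ih2
    | smul a f1 h1 ih1 =>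
        have : (fun t => if |t| < δ then (a • f1) (γ * t) else 0)
            = a • (fun t => if |t| < δ then f1 (γ * t) else 0) := by
          funext t
          by_cases ht : |t| < δ <;> simp [ht]
        rw [this]
        exact W.smul_mem a ih1
  set h : Fin (n + 1) → (ℝ → ℝ) := fun i => fun t =>
    if |t| < δ then ((g i : Zmod ρ) : ℝ → ℝ) (γ * t) else 0 with hh
  have hhW : ∀ i, h i ∈ W := fun i => hCL _ (g i).2
  have hhli : LinearIndependent ℝ h := by
    rw [Fintype.linearIndependent_iff]
    intro d hd
    have hF : (∑ i, d i • (fun u => ((g i : Zmod ρ) : ℝ → ℝ) u)) = (0 : ℝ → ℝ) := by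
      apply hT
      · apply Submodule.sum_mem
        intro i _
        apply Submodule.smul_mem
        apply Submodule.subset_span
        exact ⟨i, rfl⟩
      · intro s hs
        have hts : |s / γ| < δ := by
          rw [abs_div, abs_of_pos hγpos]
          have h1 : |s| / γ ≤ Mb / γ := by
            gcongr
            exact hMbound s hs
          have h2 : Mb / γ = δ / 2 := by
            rw [hγ]
            field_simp
          rw [h2] at h1
          linarith
        have hds := congrFun hd (s / γ)
        simp only [Finset.sum_apply, Pi.smul_apply, smul_eq_mul, Pi.zero_apply] at hds ⊢
        have hval : ∀ i, h i (s / γ) = ((g i : Zmod ρ) : ℝ → ℝ) s := by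
          intro i
          rw [hh]
          show (if |s / γ| < δ then _ else 0) = _
          rw [if_pos hts]
          congr 1
          field_simp
        rw [Finset.sum_congr rfl fun i _ => by rw [hval i]] at hds
        exact hds
    intro i
    exact Fintype.linearIndependent_iff.1 hgli' d hF i
  have hvecli : LinearIndependent ℝ (fun i => (⟨h i, hhW i⟩ : W)) := by
    apply LinearIndependent.of_comp W.subtype
    exact hhli
  have hcard := hvecli.fintype_card_le_finrank
  rw [Fintype.card_fin, ← hn] at hcard
  omega

lemma span_RNN_fd (L : ℕ) (N : ℕ → ℕ) (ρ : ℝ → ℝ) (Ω : Set (Fin (N 0) → ℝ))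
    (hfin : ¬ ∃ f : ℕ → (Ω → Fin (N L) → ℝ),
        (∀ k, f k ∈ RNNset ρ L N Ω) ∧ LinearIndependent ℝ f) :
    FiniteDimensional ℝ (Submodule.span ℝ (RNNset ρ L N Ω)) := by
  obtain ⟨bb, hsub, hspan, hli⟩ := exists_linearIndependent ℝ (RNNset ρ L N Ω)
  by_cases hb : bb.Finite
  · rw [← hspan]
    exact FiniteDimensional.span_of_finite ℝ hb
  · exfalso
    apply hfin
    have hinf : bb.Infinite := hb
    let e : ℕ ↪ bb := Set.Infinite.natEmbedding bb hinf
    refine ⟨fun k => ((e k : bb) : Ω → Fin (N L) → ℝ), fun k => hsub (e k).2, ?_⟩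
    exact hli.comp (fun k => e k) e.injective

end S15

/-- If the set of realizations does not contain an infinite linearly
independent family of functions, then the activation function is a polynomial. -/
theorem stmt15 (L : ℕ) (hL : 2 ≤ L) (N : ℕ → ℕ) (hN : ∀ ℓ ≤ L, 0 < N ℓ)
    (ρ : ℝ → ℝ) (hcont : Continuous ρ)
    (hderiv : ∃ x₀ c : ℝ, HasDerivAt ρ c x₀ ∧ c ≠ 0)
    (Ω : Set (Fin (N 0) → ℝ)) (hΩ : (interior Ω).Nonempty)
    (hfin : ¬ ∃ f : ℕ → (Ω → Fin (N L) → ℝ),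
        (∀ k, f k ∈ RNNset ρ L N Ω) ∧ LinearIndependent ℝ f) :
    ∃ p : Polynomial ℝ, ∀ x : ℝ, ρ x = Polynomial.eval x p := by
  classical
  obtain ⟨x₀, c, hd, hc⟩ := hderiv
  obtain ⟨M, rfl⟩ : ∃ M, L = M + 2 := ⟨L - 2, by omega⟩
  set V := Submodule.span ℝ (RNNset ρ (M + 2) N Ω) with hV
  haveI hVfd : FiniteDimensional ℝ V := S15.span_RNN_fd _ _ _ _ hfin
  obtain ⟨p, hp⟩ := hΩ
  obtain ⟨δ, hδpos, hball⟩ := Metric.isOpen_iff.1 isOpen_interior p hp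
  have hballΩ : Metric.ball p δ ⊆ Ω := fun z hz => interior_subset (hball hz)
  have hN0 : 0 < N 0 := hN 0 (by omega)
  set j₀ : Fin (N 0) := ⟨0, hN0⟩ with hj₀
  have hmem_line : ∀ t : ℝ, |t| < δ →
      (fun j => p j + (if j = j₀ then t else 0)) ∈ Ω := by
    intro t ht
    apply hballΩ
    rw [Metric.mem_ball, dist_pi_lt_iff hδpos]
    intro j
    by_cases hj : j = j₀
    · rw [if_pos hj, Real.dist_eq, show p j + t - p j = t by ring]
      exact ht
    · rw [if_neg hj, Real.dist_eq, show p j + 0 - p j = 0 by ring]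
      rwa [abs_zero]
  have hGmem : ∀ (w : Fin (N 0) → ℝ) (bb : ℝ),
      (fun (x : Ω) (_ : Fin (N (M + 2))) =>
        ρ ((∑ j, w j * (x : Fin (N 0) → ℝ) j) + bb)) ∈ V := by
    intro w bb
    have hclosed : IsClosed (V : Set (Ω → Fin (N (M + 2)) → ℝ)) :=
      Submodule.closed_of_finiteDimensional V
    have htend : Tendsto (fun m : ℕ => fun (x : Ω) (i : Fin (N (M + 2))) =>
          nnRealization ρ (M + 2) N
            (S15.Φnet N (M + 2) ρ x₀ c (1 / (m + 1 : ℝ)) w bb) x.val i)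
        atTop (𝓝 (fun (x : Ω) (_ : Fin (N (M + 2))) =>
          ρ ((∑ j, w j * (x : Fin (N 0) → ℝ) j) + bb))) := by
      rw [tendsto_pi_nhds]
      intro x
      rw [tendsto_pi_nhds]
      intro i
      have hre : ∀ m : ℕ,
          nnRealization ρ (M + 2) N
              (S15.Φnet N (M + 2) ρ x₀ c (1 / (m + 1 : ℝ)) w bb) x.val i
            = (fun v => (ρ ((1 / (m + 1 : ℝ)) * v + x₀) - ρ x₀)
                / (c * (1 / (m + 1 : ℝ))))^[M] (ρ ((∑ j, w j * x.val j) + bb)) :=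
        fun m => S15.realization_eq M N hN ρ x₀ c _ hc
          (by positivity) w bb x.val i
      exact Tendsto.congr (fun m => (hre m).symm)
        (S15.iter_limit hd hc M (ρ ((∑ j, w j * x.val j) + bb)))
    have hmemm : ∀ m : ℕ, (fun (x : Ω) (i : Fin (N (M + 2))) =>
        nnRealization ρ (M + 2) N
          (S15.Φnet N (M + 2) ρ x₀ c (1 / (m + 1 : ℝ)) w bb) x.val i) ∈ V := by
      intro m
      apply Submodule.subset_span
      exact ⟨S15.Φnet N (M + 2) ρ x₀ c (1 / (m + 1 : ℝ)) w bb, fun x => rfl⟩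
    have hcl := mem_closure_of_tendsto htend (Filter.Eventually.of_forall hmemm)
    rwa [hclosed.closure_eq] at hcl
  have hZfd : FiniteDimensional ℝ (S15.Zmod ρ) := by
    have hiL : 0 < N (M + 2) := hN (M + 2) le_rfl
    set i₀ : Fin (N (M + 2)) := ⟨0, hiL⟩ with hi₀
    let Rmap : (Ω → Fin (N (M + 2)) → ℝ) →ₗ[ℝ] (ℝ → ℝ) := {
      toFun := fun f => fun t =>
        if ht : |t| < δ then f ⟨_, hmem_line t ht⟩ i₀ else 0
      map_add' := by
        intro f g
        funext t
        by_cases ht : |t| < δ <;> simp [ht]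
      map_smul' := by
        intro a f
        funext t
        by_cases ht : |t| < δ <;> simp [ht] }
    apply S15.fd_of_delta ρ δ hδpos (Submodule.map Rmap V)
    intro a b
    apply Submodule.mem_map.2
    refine ⟨(fun (x : Ω) (_ : Fin (N (M + 2))) =>
      ρ ((∑ j, (if j = j₀ then a else 0) * (x : Fin (N 0) → ℝ) j) + (b - a * p j₀))),
      hGmem _ _, ?_⟩
    funext t
    show (if ht : |t| < δ then _ else 0) = _
    by_cases ht : |t| < δ
    · rw [dif_pos ht, if_pos ht]
      congr 1
      rw [Finset.sum_eq_single j₀]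
      · rw [if_pos rfl]
        show a * (p j₀ + if j₀ = j₀ then t else 0) + (b - a * p j₀) = a * t + b
        rw [if_pos rfl]
        ring
      · intro j _ hj
        rw [if_neg hj, zero_mul]
      · intro hj
        exact absurd (Finset.mem_univ _) hj
    · rw [dif_neg ht, if_neg ht]
  obtain ⟨q, hq⟩ := S15.poly_of_fd ρ hcont hZfd
  exact ⟨q, hq⟩
end
end

section
/- Let μ be a finite Borel measure on [-B,B]^d (B > 0) whose support is uncountable. For x* ∈ ℝ^d and v ∈ ℝ^d with |v| = 1, let H_+(x*, v) := { x ∈ ℝ^d : ⟨x - x*, v⟩ > 0 } and H_-(x*, v) := { x ∈ ℝ^d : ⟨x - x*, v⟩ < 0 }. Then there exist x* ∈ [-B,B]^d and a unit vector v ∈ ℝ^d such that: whenever f : [-B,B]^d → ℝ satisfies f(x) = c for all x ∈ [-B,B]^d ∩ H_+(x*, v) and f(x) = c' for all x ∈ [-B,B]^d ∩ H_-(x*, v) with constants c ≠ c', there is no continuous function g : [-B,B]^d → ℝ with f = g μ-almost everywhere. -/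
open MeasureTheory

/-- The (topological) support of a measure: points all of whose open neighbourhoods
have positive measure. -/
def measureSupport {α : Type*} [TopologicalSpace α] [MeasurableSpace α]
    (μ : Measure α) : Set α :=
  {x | ∀ U : Set α, IsOpen U → x ∈ U → 0 < μ U}

section Aux

open RealInnerProductSpace Bornology

set_option linter.unusedSectionVars false

variable {E : Type*} [NormedAddCommGroup E] [InnerProductSpace ℝ E] [ProperSpace E]
  [SecondCountableTopology E]



lemma finite_of_separated {S : Set E} {δ : ℝ} (hδ : 0 < δ)
    (hb : IsBounded S)
    (hsep : ∀ x ∈ S, ∀ y ∈ S, x ≠ y → δ ≤ dist x y) : S.Finite := by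
  have htb : TotallyBounded S :=
    (hb.isCompact_closure.totallyBounded).subset subset_closure
  obtain ⟨t, htf, hcov⟩ := (Metric.totallyBounded_iff.mp htb) (δ/2) (by linarith)
  have hsub : S ⊆ ⋃ y ∈ t, Metric.ball y (δ/2) ∩ S := by
    intro x hx
    obtain ⟨y, hy, hxy⟩ := Set.mem_iUnion₂.mp (hcov hx)
    exact Set.mem_iUnion₂.mpr ⟨y, hy, hxy, hx⟩
  refine Set.Finite.subset (Set.Finite.biUnion htf fun y _ => ?_) hsub
  refine Set.Subsingleton.finite ?_
  intro a ⟨ha, haS⟩ b ⟨hb', hbS⟩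
  by_contra hab
  have := hsep a haS b hbS hab
  have h1 : dist a b ≤ dist a y + dist y b := dist_triangle a y b
  rw [Metric.mem_ball] at ha hb'
  rw [dist_comm] at hb'
  linarith

lemma exists_accdir {S : Set E} (x : E) (P : E → Prop)
    (hfreq : ∀ ε : ℝ, 0 < ε → ∃ p ∈ S, p ≠ x ∧ dist p x < ε ∧ P p) :
    ∃ u : E, ‖u‖ = 1 ∧ ∀ ε : ℝ, 0 < ε → ∃ p ∈ S, p ≠ x ∧ dist p x < ε ∧ P p ∧
      ‖‖p - x‖⁻¹ • (p - x) - u‖ < ε := by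
  choose p hpS hpne hpd hpP using fun n : ℕ => hfreq (1/(n+1)) (by positivity)
  set w : ℕ → E := fun n => ‖p n - x‖⁻¹ • (p n - x) with hw_def
  have hw : ∀ n, w n ∈ Metric.sphere (0:E) 1 := by
    intro n
    have h0 : p n - x ≠ 0 := sub_ne_zero.mpr (hpne n)
    have : ‖p n - x‖ ≠ 0 := norm_ne_zero_iff.mpr h0
    simp [hw_def, norm_smul, inv_mul_cancel₀ this]
  obtain ⟨u, hu, φ, hφ, hconv⟩ := (isCompact_sphere (0:E) 1).tendsto_subseq hw
  refine ⟨u, by simpa using hu, ?_⟩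
  intro ε hε
  obtain ⟨N1, hN1⟩ := (Metric.tendsto_atTop.mp hconv) ε hε
  obtain ⟨N2, hN2⟩ := exists_nat_one_div_lt hε
  set n := max N1 N2 with hn
  have hφn : (N2 : ℝ) + 1 ≤ (φ n : ℝ) + 1 := by
    have : N2 ≤ φ n := le_trans (le_max_right _ _) hφ.le_apply
    exact_mod_cast Nat.succ_le_succ this
  refine ⟨p (φ n), hpS _, hpne _, ?_, hpP _, ?_⟩
  · calc dist (p (φ n)) x < 1/((φ n : ℝ)+1) := hpd _
      _ ≤ 1/((N2:ℝ)+1) := by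
          apply one_div_le_one_div_of_le (by positivity) hφn
      _ < ε := hN2
  · have := hN1 n (le_max_left _ _)
    simpa [dist_eq_norm] using this


lemma inner_pos_of_close {x p u v : E} (hpne : p ≠ x) (hv : ‖v‖ = 1) {a : ℝ}
    (hi : ⟪u, v⟫ = a) (hdir : ‖‖p - x‖⁻¹ • (p - x) - u‖ < a) :
    0 < ⟪p - x, v⟫ := by
  have hnp : (0:ℝ) < ‖p - x‖ := norm_pos_iff.mpr (sub_ne_zero.mpr hpne)
  have hpx : p - x = ‖p - x‖ • (‖p - x‖⁻¹ • (p - x)) := by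
    rw [smul_smul, mul_inv_cancel₀ hnp.ne', one_smul]
  have hinner : ⟪p - x, v⟫ = ‖p - x‖ * ⟪‖p - x‖⁻¹ • (p - x), v⟫ := by
    nth_rewrite 1 [hpx]; rw [real_inner_smul_left]
  have habs : |⟪‖p - x‖⁻¹ • (p - x) - u, v⟫| ≤ ‖‖p - x‖⁻¹ • (p - x) - u‖ := by
    have := abs_real_inner_le_norm (‖p - x‖⁻¹ • (p - x) - u) v
    rwa [hv, mul_one] at this
  have hwv : ⟪‖p - x‖⁻¹ • (p - x), v⟫
      = ⟪u, v⟫ + ⟪‖p - x‖⁻¹ • (p - x) - u, v⟫ := by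
    rw [inner_sub_left]; ring
  have habs' := abs_le.mp habs
  have : 0 < ⟪‖p - x‖⁻¹ • (p - x), v⟫ := by rw [hwv, hi]; linarith
  rw [hinner]; positivity

-- two distinct accumulation directions give instability in both half-spaces
lemma two_dirs_good {S : Set E} {x : E} {u1 u2 : E}
    (h1 : ‖u1‖ = 1) (h2 : ‖u2‖ = 1) (hne : u1 ≠ u2)
    (hA1 : ∀ ε : ℝ, 0 < ε → ∃ p ∈ S, p ≠ x ∧ dist p x < ε ∧ ‖‖p - x‖⁻¹ • (p - x) - u1‖ < ε)
    (hA2 : ∀ ε : ℝ, 0 < ε → ∃ p ∈ S, p ≠ x ∧ dist p x < ε ∧ ‖‖p - x‖⁻¹ • (p - x) - u2‖ < ε) :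
    ∃ v : E, ‖v‖ = 1 ∧ ∀ ε : ℝ, 0 < ε →
      (∃ p ∈ S, dist p x < ε ∧ 0 < ⟪p - x, v⟫) ∧
      (∃ q ∈ S, dist q x < ε ∧ ⟪q - x, v⟫ < 0) := by
  have hD : u1 - u2 ≠ 0 := sub_ne_zero.mpr hne
  have hnD : 0 < ‖u1 - u2‖ := norm_pos_iff.mpr hD
  have hv : ‖‖u1 - u2‖⁻¹ • (u1 - u2)‖ = 1 := by
    simp [norm_smul, inv_mul_cancel₀ hnD.ne']
  have ha : 0 < ‖u1 - u2‖/2 := by positivity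
  have hsq : ‖u1 - u2‖^2 = 2 - 2*⟪u1, u2⟫ := by
    have := norm_sub_sq_real u1 u2
    rw [h1, h2] at this; linarith
  have hi1 : ⟪u1, ‖u1 - u2‖⁻¹ • (u1 - u2)⟫ = ‖u1 - u2‖/2 := by
    rw [real_inner_smul_right, inner_sub_right, real_inner_self_eq_norm_sq, h1]
    field_simp
    nlinarith [hsq]
  have hi2 : ⟪u2, -(‖u1 - u2‖⁻¹ • (u1 - u2))⟫ = ‖u1 - u2‖/2 := by
    rw [inner_neg_right, real_inner_smul_right, inner_sub_right,
      real_inner_self_eq_norm_sq, h2, real_inner_comm]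
    field_simp
    nlinarith [hsq]
  refine ⟨‖u1 - u2‖⁻¹ • (u1 - u2), hv, fun ε hε => ⟨?_, ?_⟩⟩
  · obtain ⟨p, hpS, hpne, hpd, hpdir⟩ := hA1 (min ε (‖u1 - u2‖/2)) (lt_min hε ha)
    exact ⟨p, hpS, lt_of_lt_of_le hpd (min_le_left _ _),
      inner_pos_of_close hpne hv hi1 (lt_of_lt_of_le hpdir (min_le_right _ _))⟩
  · obtain ⟨p, hpS, hpne, hpd, hpdir⟩ := hA2 (min ε (‖u1 - u2‖/2)) (lt_min hε ha)
    have hvneg : ‖-(‖u1 - u2‖⁻¹ • (u1 - u2))‖ = 1 := by rwa [norm_neg]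
    have := inner_pos_of_close hpne hvneg hi2 (lt_of_lt_of_le hpdir (min_le_right _ _))
    rw [inner_neg_right] at this
    exact ⟨p, hpS, lt_of_lt_of_le hpd (min_le_left _ _), by linarith⟩


lemma key_lemma {S : Set E} (hb : IsBounded S) (hunc : ¬ S.Countable) :
    ∃ x ∈ S, ∃ v : E, ‖v‖ = 1 ∧ ∀ ε : ℝ, 0 < ε →
      (∃ p ∈ S, dist p x < ε ∧ 0 < ⟪p - x, v⟫) ∧
      (∃ q ∈ S, dist q x < ε ∧ ⟪q - x, v⟫ < 0) := by
  by_contra hcon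
  apply hunc
  -- every non-isolated point has a unique accumulation direction with 1/4-cone property
  have hL13 : ∀ x ∈ S, (∀ ε : ℝ, 0 < ε → ∃ p ∈ S, p ≠ x ∧ dist p x < ε) →
      ∃ u : E, ‖u‖ = 1 ∧ ∃ n : ℕ, ∀ p ∈ S, p ≠ x → dist p x < 1/(n+1) →
        ‖‖p - x‖⁻¹ • (p - x) - u‖ < 4⁻¹ := by
    intro x hx hlim
    obtain ⟨u1, hu1, hA1⟩ := exists_accdir x (fun _ => True)
      (fun ε hε => by obtain ⟨p, h1, h2, h3⟩ := hlim ε hε; exact ⟨p, h1, h2, h3, trivial⟩)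
    by_cases hc : ∃ n : ℕ, ∀ p ∈ S, p ≠ x → dist p x < 1/(n+1) →
        ‖‖p - x‖⁻¹ • (p - x) - u1‖ < 4⁻¹
    · exact ⟨u1, hu1, hc⟩
    push_neg at hc
    have hfreq : ∀ ε : ℝ, 0 < ε → ∃ p ∈ S, p ≠ x ∧ dist p x < ε ∧
        4⁻¹ ≤ ‖‖p - x‖⁻¹ • (p - x) - u1‖ := by
      intro ε hε
      obtain ⟨n, hn⟩ := exists_nat_one_div_lt hε
      obtain ⟨p, hpS, hpne, hpd, hpdir⟩ := hc n
      exact ⟨p, hpS, hpne, lt_trans hpd hn, hpdir⟩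
    obtain ⟨u2, hu2, hA2⟩ := exists_accdir x _ hfreq
    have hne : u1 ≠ u2 := by
      obtain ⟨p, _, _, _, hge, hlt⟩ := hA2 8⁻¹ (by norm_num)
      intro h; rw [h] at hge; linarith
    exfalso
    obtain ⟨v, hv, hprop⟩ := two_dirs_good hu1 hu2 hne
      (fun ε hε => by obtain ⟨p, h1, h2, h3, _, h5⟩ := hA1 ε hε; exact ⟨p, h1, h2, h3, h5⟩)
      (fun ε hε => by obtain ⟨p, h1, h2, h3, _, h5⟩ := hA2 ε hε; exact ⟨p, h1, h2, h3, h5⟩)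
    exact hcon ⟨x, hx, v, hv, hprop⟩
  -- countable dense set
  obtain ⟨Z, hZc, hZd⟩ := TopologicalSpace.exists_countable_dense E
  -- pieces
  set I : ℕ → Set E := fun n => {x | x ∈ S ∧ ∀ p ∈ S, dist p x < 1/(n+1) → p = x} with hI
  set P2 : E → ℕ → Set E := fun c n => {x | x ∈ S ∧ ∀ p ∈ S, p ≠ x → dist p x < 1/(n+1) →
      ‖‖p - x‖⁻¹ • (p - x) - c‖ < 3/8} with hP2
  have hn1 : ∀ n : ℕ, (0:ℝ) < 1/(n+1) := fun n => by positivity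
  have hIfin : ∀ n : ℕ, (I n).Finite := by
    intro n
    refine finite_of_separated (hn1 n) (hb.subset fun x hx => hx.1) ?_
    intro x hx y hy hxy
    by_contra hlt
    push_neg at hlt
    exact hxy ((hx.2 y hy.1 (by rwa [dist_comm])).symm)
  have hPfin : ∀ c, ∀ n : ℕ, (P2 c n).Finite := by
    intro c n
    refine finite_of_separated (hn1 n) (hb.subset fun x hx => hx.1) ?_
    intro x hx y hy hxy
    by_contra hlt
    push_neg at hlt
    have hyx : y - x ≠ 0 := sub_ne_zero.mpr (Ne.symm hxy)
    have hnyx : (0:ℝ) < ‖y - x‖ := norm_pos_iff.mpr hyx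
    have h1 : ‖‖y - x‖⁻¹ • (y - x) - c‖ < 3/8 :=
      hx.2 y hy.1 (Ne.symm hxy) (by rwa [dist_comm])
    have hflip : ‖x - y‖⁻¹ • (x - y) = -(‖y - x‖⁻¹ • (y - x)) := by
      rw [← neg_sub, norm_neg, ← smul_neg, neg_sub]
    have h2 : ‖-(‖y - x‖⁻¹ • (y - x)) - c‖ < 3/8 := by
      rw [← hflip]
      exact hy.2 x hx.1 hxy hlt
    set w := ‖y - x‖⁻¹ • (y - x) with hw
    have hwn : ‖w‖ = 1 := by
      simp [hw, norm_smul, inv_mul_cancel₀ hnyx.ne']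
    have hcc : (2:ℝ) * ‖c‖ ≤ ‖w - c‖ + ‖-w - c‖ := by
      have h3 : (-(c + c) : E) = (w - c) + (-w - c) := by abel
      have h4 : ‖c + c‖ ≤ ‖w - c‖ + ‖-w - c‖ := by
        rw [← norm_neg (c + c), h3]
        exact norm_add_le _ _
      have h5 : ‖c + c‖ = 2 * ‖c‖ := by
        rw [show (c + c : E) = (2:ℝ) • c from (two_smul ℝ c).symm, norm_smul]
        simp
      linarith
    have hclb : (5:ℝ)/8 < ‖c‖ := by
      have := norm_sub_norm_le w c
      linarith [h1, hwn]
    linarith [h1, h2, hcc, hclb]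
  -- coverage
  have hcov : S ⊆ (⋃ n, I n) ∪ ⋃ c ∈ Z, ⋃ n, P2 c n := by
    intro x hx
    by_cases hiso : ∃ n : ℕ, ∀ p ∈ S, dist p x < 1/(n+1) → p = x
    · obtain ⟨n, hn⟩ := hiso
      exact Or.inl (Set.mem_iUnion.mpr ⟨n, hx, hn⟩)
    push_neg at hiso
    have hlim : ∀ ε : ℝ, 0 < ε → ∃ p ∈ S, p ≠ x ∧ dist p x < ε := by
      intro ε hε
      obtain ⟨n, hn⟩ := exists_nat_one_div_lt hε
      obtain ⟨p, hpS, hpd, hpne⟩ := hiso n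
      exact ⟨p, hpS, hpne, lt_trans hpd hn⟩
    obtain ⟨u, hu, n, hcone⟩ := hL13 x hx hlim
    obtain ⟨c, hcZ, hcd⟩ := hZd.exists_dist_lt u (show (0:ℝ) < 8⁻¹ by norm_num)
    refine Or.inr (Set.mem_iUnion₂.mpr ⟨c, hcZ, Set.mem_iUnion.mpr ⟨n, hx, ?_⟩⟩)
    intro p hpS hpne hpd
    have h1 := hcone p hpS hpne hpd
    have h2 : ‖u - c‖ < 8⁻¹ := by rwa [dist_eq_norm] at hcd
    calc ‖‖p - x‖⁻¹ • (p - x) - c‖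
        ≤ ‖‖p - x‖⁻¹ • (p - x) - u‖ + ‖u - c‖ := norm_sub_le_norm_sub_add_norm_sub _ u _
      _ < 3/8 := by norm_num at h1 h2 ⊢; linarith
  exact Set.Countable.mono hcov
    ((Set.countable_iUnion fun n => (hIfin n).countable).union
      (Set.Countable.biUnion hZc fun c _ => Set.countable_iUnion fun n => (hPfin c n).countable))


end Aux

section Main
open RealInnerProductSpace Bornology

/-- For a finite Borel measure on `[-B,B]^d` with uncountable support there
are a point `x*` and a (Euclidean) unit vector `v` such that no function which is constant
`c` on the open half-space `⟨x - x*, v⟩ > 0` and constant `c' ≠ c` on the open half-space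
`⟨x - x*, v⟩ < 0` agrees `μ`-a.e. with a continuous function on `[-B,B]^d`. -/
theorem stmt18 (d : ℕ) (B : ℝ) (hB : 0 < B)
    (μ : Measure (Fin d → ℝ)) (hfin : IsFiniteMeasure μ)
    (hμsupp : μ (Set.Icc (fun _ => -B) (fun _ => B))ᶜ = 0)
    (huncount : ¬ (measureSupport μ).Countable) :
    ∃ xs ∈ Set.Icc (fun _ => -B : Fin d → ℝ) (fun _ => B), ∃ v : Fin d → ℝ,
      (∑ i, v i ^ 2) = 1 ∧
      ∀ (f : (Fin d → ℝ) → ℝ) (c c' : ℝ), c ≠ c' →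
        (∀ x ∈ Set.Icc (fun _ => -B : Fin d → ℝ) (fun _ => B),
          0 < (∑ i, (x i - xs i) * v i) → f x = c) →
        (∀ x ∈ Set.Icc (fun _ => -B : Fin d → ℝ) (fun _ => B),
          (∑ i, (x i - xs i) * v i) < 0 → f x = c') →
        ¬ ∃ g : (Fin d → ℝ) → ℝ,
            ContinuousOn g (Set.Icc (fun _ => -B) (fun _ => B)) ∧ f =ᵐ[μ] g := by
  classical
  set C : Set (Fin d → ℝ) := Set.Icc (fun _ => -B) (fun _ => B) with hC
  set S : Set (Fin d → ℝ) := measureSupport μ with hSdef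
  have hSC : S ⊆ C := by
    intro x hx
    by_contra hxC
    have := hx Cᶜ isClosed_Icc.isOpen_compl hxC
    rw [hμsupp] at this
    exact lt_irrefl 0 this
  set ψ : EuclideanSpace ℝ (Fin d) ≃ (Fin d → ℝ) := WithLp.equiv 2 (Fin d → ℝ) with hψ
  set S' : Set (EuclideanSpace ℝ (Fin d)) := ψ ⁻¹' S with hS'
  have hS'unc : ¬ S'.Countable := by
    intro h
    apply huncount
    have := h.image ψ
    rwa [Set.image_preimage_eq _ ψ.surjective] at this
  have hS'b : IsBounded S' := by
    rw [isBounded_iff_forall_norm_le]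
    refine ⟨Real.sqrt (d * B^2), fun x hx => ?_⟩
    rw [EuclideanSpace.norm_eq]
    have hxC := hSC hx
    rw [Set.mem_Icc] at hxC
    refine Real.sqrt_le_sqrt ?_
    have : ∀ i, ‖(x : EuclideanSpace ℝ (Fin d)) i‖^2 ≤ B^2 := by
      intro i
      have h1 : -B ≤ ψ x i := hxC.1 i
      have h2 : ψ x i ≤ B := hxC.2 i
      have : |ψ x i| ≤ B := abs_le.mpr ⟨h1, h2⟩
      have hx2 : ‖(x : EuclideanSpace ℝ (Fin d)) i‖ = |ψ x i| := by
        simp [hψ, Real.norm_eq_abs]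
      rw [hx2]
      nlinarith [abs_nonneg (ψ x i)]
    calc (∑ i, ‖(x : EuclideanSpace ℝ (Fin d)) i‖^2)
        ≤ ∑ _i : Fin d, B^2 := Finset.sum_le_sum (fun i _ => this i)
      _ = d * B^2 := by simp [Finset.sum_const, nsmul_eq_mul]
  obtain ⟨x', hx'S, v', hv', hkey⟩ := key_lemma hS'b hS'unc
  have hdist : ∀ a b : EuclideanSpace ℝ (Fin d), dist (ψ a) (ψ b) ≤ dist a b := by
    intro a b
    rw [dist_pi_le_iff dist_nonneg]
    intro i
    rw [EuclideanSpace.dist_eq]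
    have h1 : dist (ψ a i) (ψ b i) = Real.sqrt (dist (a i) (b i)^2) := by
      rw [Real.sqrt_sq dist_nonneg]
      simp [hψ]
    rw [h1]
    exact Real.sqrt_le_sqrt (Finset.single_le_sum
      (fun j _ => sq_nonneg (dist (a j) (b j))) (Finset.mem_univ i))
  have hinner : ∀ a b : EuclideanSpace ℝ (Fin d),
      ⟪a - x', b⟫ = ∑ i, (ψ a i - ψ x' i) * ψ b i := by
    intro a b
    rw [PiLp.inner_apply]
    refine Finset.sum_congr rfl (fun i _ => ?_)
    simp [hψ, RCLike.inner_apply]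
    ring
  refine ⟨ψ x', hSC hx'S, ψ v', ?_, ?_⟩
  · have := EuclideanSpace.norm_eq v'
    rw [hv'] at this
    have hsum : (∑ i, ‖v' i‖^2) = 1 := by
      have h0 : (0:ℝ) ≤ ∑ i, ‖v' i‖^2 := Finset.sum_nonneg fun i _ => sq_nonneg _
      nlinarith [Real.sq_sqrt h0]
    rw [← hsum]
    refine Finset.sum_congr rfl (fun i _ => ?_)
    simp [hψ, Real.norm_eq_abs, sq_abs]
  intro f c c' hcc' hplus hminus hex
  obtain ⟨g, hg, hae⟩ := hex
  have hbad : μ ({y | ¬ f y = g y} ∪ Cᶜ) = 0 :=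
    measure_union_null (ae_iff.mp hae) hμsupp
  have hval : ∀ (cc : ℝ) (sgn : Bool),
      (∀ y ∈ C, (if sgn then 0 < (∑ i, (y i - ψ x' i) * ψ v' i)
        else (∑ i, (y i - ψ x' i) * ψ v' i) < 0) → f y = cc) → g (ψ x') = cc := by
    intro cc sgn hside
    by_contra hne
    have hpos : 0 < dist (g (ψ x')) cc := dist_pos.mpr hne
    have hcw : ContinuousWithinAt g C (ψ x') := hg (ψ x') (hSC hx'S)
    rw [Metric.continuousWithinAt_iff] at hcw
    obtain ⟨η, hη, hcw⟩ := hcw _ hpos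
    have hget : ∃ p' ∈ S', dist (ψ p') (ψ x') < η ∧
        (if sgn then 0 < (∑ i, (ψ p' i - ψ x' i) * ψ v' i)
          else (∑ i, (ψ p' i - ψ x' i) * ψ v' i) < 0) := by
      cases sgn with
      | true =>
        obtain ⟨p', h1, h2, h3⟩ := (hkey η hη).1
        rw [hinner p' v'] at h3
        exact ⟨p', h1, lt_of_le_of_lt (hdist p' x') h2, by simpa using h3⟩
      | false =>
        obtain ⟨p', h1, h2, h3⟩ := (hkey η hη).2
        rw [hinner p' v'] at h3
        exact ⟨p', h1, lt_of_le_of_lt (hdist p' x') h2, by simpa using h3⟩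
    obtain ⟨p', hp'S, hp'd, hp'i⟩ := hget
    set U : Set (Fin d → ℝ) := Metric.ball (ψ x') η ∩
      {y | if sgn then 0 < (∑ i, (y i - ψ x' i) * ψ v' i)
        else (∑ i, (y i - ψ x' i) * ψ v' i) < 0} with hU
    have hcont : Continuous fun y : Fin d → ℝ => ∑ i, (y i - ψ x' i) * ψ v' i :=
      continuous_finset_sum _ fun i _ =>
        ((continuous_apply i).sub continuous_const).mul continuous_const
    have hUopen : IsOpen U := by
      refine Metric.isOpen_ball.inter ?_
      cases sgn with
      | true => simpa using isOpen_lt continuous_const hcont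
      | false => simpa using isOpen_lt hcont continuous_const
    have hpU : ψ p' ∈ U := ⟨Metric.mem_ball.mpr hp'd, hp'i⟩
    have hUpos : 0 < μ U := hp'S U hUopen hpU
    have hpos2 : μ (U \ ({y | ¬ f y = g y} ∪ Cᶜ)) ≠ 0 := by
      rw [measure_diff_null hbad]
      exact hUpos.ne'
    obtain ⟨y, hyU, hyg⟩ := nonempty_of_measure_ne_zero hpos2
    have hyC : y ∈ C := by
      by_contra h
      exact hyg (Or.inr h)
    have hyfg : f y = g y := by
      by_contra h
      exact hyg (Or.inl h)
    have hfy : f y = cc := hside y hyC hyU.2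
    have hlt := hcw hyC (Metric.mem_ball.mp hyU.1)
    rw [← hyfg, hfy, dist_comm] at hlt
    exact lt_irrefl _ hlt
  have hgc : g (ψ x') = c := hval c true (fun y hy h => hplus y hy (by simpa using h))
  have hgc' : g (ψ x') = c' := hval c' false (fun y hy h => hminus y hy (by simpa using h))
  exact hcc' (hgc ▸ hgc' ▸ rfl)


end Main
end

section
/- Let 0 ≤ a < 1 and let ρ_a : ℝ → ℝ, ρ_a(x) = max{x, ax} be the parametric ReLU. Let α ∈ ℝ^d with |α| = 1, β ∈ ℝ, and set S_{α,β} := { x ∈ ℝ^d : ⟨α, x⟩ + β = 0 }, W_{α,β}^+ := { x : ⟨α, x⟩ + β > 0 }, and W_{α,β}^- := { x : ⟨α, x⟩ + β < 0 }. Let U ⊆ ℝ^d be open with U ∩ S_{α,β} ≠ ∅, and let f : U → ℝ be continuous such that f is affine-linear on U ∩ W_{α,β}^+ and affine-linear on U ∩ W_{α,β}^-. Then there exist c, κ ∈ ℝ and ζ ∈ ℝ^d such that f(x) = c · ρ_a(⟨α, x⟩ + β) + ⟨ζ, x⟩ + κ for all x ∈ U. -/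
private lemma sum_lin_add (d : ℕ) (v ξ : Fin d → ℝ) (x : Fin d → ℝ) (t : ℝ) :
    (∑ i, ξ i * (x + t • v) i) = (∑ i, ξ i * x i) + t * ∑ i, ξ i * v i := by
  rw [Finset.mul_sum, ← Finset.sum_add_distrib]
  apply Finset.sum_congr rfl
  intro i _
  simp only [Pi.add_apply, Pi.smul_apply, smul_eq_mul]
  ring

/-- Boundary value lemma: if `f` agrees with an affine map on the side
`0 < σ * (⟨α,x⟩+β)` of the hyperplane within open `U`, and is continuous,
then it agrees with it at hyperplane points of `U`. -/
private lemma aux_boundary (d : ℕ) (α : Fin d → ℝ) (hα : (∑ i, α i ^ 2) = 1) (β : ℝ)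
    (U : Set (Fin d → ℝ)) (hU : IsOpen U)
    (f : (Fin d → ℝ) → ℝ) (hf : ContinuousOn f U)
    (σ : ℝ) (hσ : σ ≠ 0)
    (ξ : Fin d → ℝ) (ω : ℝ)
    (hξ : ∀ x ∈ U, 0 < σ * ((∑ i, α i * x i) + β) → f x = (∑ i, ξ i * x i) + ω)
    (x : Fin d → ℝ) (hx : x ∈ U) (hx0 : (∑ i, α i * x i) + β = 0) :
    f x = (∑ i, ξ i * x i) + ω := by
  set g : ℝ → (Fin d → ℝ) := fun ε => x + (σ * ε) • α with hg_def
  have hgc : Continuous g := by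
    apply Continuous.add continuous_const
    exact (continuous_const.mul continuous_id).smul continuous_const
  have hg0 : g 0 = x := by simp [hg_def]
  have htend : Filter.Tendsto g (nhdsWithin 0 (Set.Ioi 0)) (nhds x) := by
    have := hgc.tendsto 0
    rw [hg0] at this
    exact this.mono_left nhdsWithin_le_nhds
  have hmem : ∀ᶠ ε in nhdsWithin 0 (Set.Ioi 0), g ε ∈ U :=
    htend.eventually_mem (hU.mem_nhds hx)
  have hkey : ∀ᶠ ε in nhdsWithin 0 (Set.Ioi 0),
      f (g ε) = (∑ i, ξ i * (g ε) i) + ω := by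
    filter_upwards [hmem, self_mem_nhdsWithin] with ε hεU hεpos
    apply hξ _ hεU
    have hsum : (∑ i, α i * (g ε) i) = (∑ i, α i * x i) + (σ * ε) * 1 := by
      rw [hg_def]
      rw [sum_lin_add d α α x (σ * ε)]
      congr 1
      rw [← hα]
      congr 1
      apply Finset.sum_congr rfl
      intro i _
      ring
    rw [hsum]
    have h1 : σ * ((∑ i, α i * x i) + σ * ε * 1 + β)
        = σ ^ 2 * ε + σ * ((∑ i, α i * x i) + β) := by ring
    rw [h1, hx0, mul_zero, add_zero]
    have h2 : 0 < σ ^ 2 := by positivity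
    exact mul_pos h2 hεpos
  have hfc : ContinuousAt f x := hf.continuousAt (hU.mem_nhds hx)
  have h1 : Filter.Tendsto (fun ε => f (g ε)) (nhdsWithin 0 (Set.Ioi 0)) (nhds (f x)) :=
    hfc.tendsto.comp htend
  have h2 : Filter.Tendsto (fun ε => (∑ i, ξ i * (g ε) i) + ω)
      (nhdsWithin 0 (Set.Ioi 0)) (nhds ((∑ i, ξ i * x i) + ω)) := by
    have hc : Continuous (fun y : Fin d → ℝ => (∑ i, ξ i * y i) + ω) := by
      apply Continuous.add _ continuous_const
      exact continuous_finset_sum _ fun i _ => continuous_const.mul (continuous_apply i)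
    exact (hc.tendsto x).comp htend
  have h1' : Filter.Tendsto (fun ε => f (g ε)) (nhdsWithin 0 (Set.Ioi 0))
      (nhds ((∑ i, ξ i * x i) + ω)) :=
    Filter.Tendsto.congr' (Filter.EventuallyEq.symm hkey) h2
  exact tendsto_nhds_unique h1 h1'

theorem stmt19 (d : ℕ) (a : ℝ) (ha0 : 0 ≤ a) (ha1 : a < 1)
    (α : Fin d → ℝ) (hα : (∑ i, α i ^ 2) = 1) (β : ℝ)
    (U : Set (Fin d → ℝ)) (hU : IsOpen U)
    (hUS : ∃ x ∈ U, (∑ i, α i * x i) + β = 0)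
    (f : (Fin d → ℝ) → ℝ) (hf : ContinuousOn f U)
    (hplus : ∃ (ξ : Fin d → ℝ) (ω : ℝ), ∀ x ∈ U,
      0 < (∑ i, α i * x i) + β → f x = (∑ i, ξ i * x i) + ω)
    (hminus : ∃ (ξ : Fin d → ℝ) (ω : ℝ), ∀ x ∈ U,
      (∑ i, α i * x i) + β < 0 → f x = (∑ i, ξ i * x i) + ω) :
    ∃ (c κ : ℝ) (ζ : Fin d → ℝ), ∀ x ∈ U,
      f x = c * max ((∑ i, α i * x i) + β) (a * ((∑ i, α i * x i) + β))
            + (∑ i, ζ i * x i) + κ := by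
  obtain ⟨ξp, ωp, hp⟩ := hplus
  obtain ⟨ξm, ωm, hm⟩ := hminus
  have hbp : ∀ x ∈ U, (∑ i, α i * x i) + β = 0 → f x = (∑ i, ξp i * x i) + ωp := by
    intro x hx hx0
    apply aux_boundary d α hα β U hU f hf 1 one_ne_zero ξp ωp _ x hx hx0
    intro y hy hy0
    exact hp y hy (by linarith)
  have hbm : ∀ x ∈ U, (∑ i, α i * x i) + β = 0 → f x = (∑ i, ξm i * x i) + ωm := by
    intro x hx hx0
    apply aux_boundary d α hα β U hU f hf (-1) (by norm_num) ξm ωm _ x hx hx0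
    intro y hy hy0
    exact hm y hy (by linarith)
  obtain ⟨x₀, hx₀U, hx₀S⟩ := hUS
  obtain ⟨r, hr, hball⟩ := Metric.isOpen_iff.mp hU x₀ hx₀U
  -- tangential directions: the two affine maps have equal tangential derivatives
  have htang : ∀ v : Fin d → ℝ, (∑ i, α i * v i) = 0 →
      (∑ i, ξp i * v i) = (∑ i, ξm i * v i) := by
    intro v hv
    rcases eq_or_ne v 0 with rfl | hv0
    · simp
    · have hnv : 0 < ‖v‖ := norm_pos_iff.mpr hv0
      set s : ℝ := r / (2 * ‖v‖) with hs_def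
      have hs : 0 < s := by positivity
      have hmem : x₀ + s • v ∈ U := by
        apply hball
        rw [Metric.mem_ball, dist_eq_norm]
        have h1 : x₀ + s • v - x₀ = s • v := by abel
        rw [h1, norm_smul, Real.norm_eq_abs, abs_of_pos hs, hs_def]
        rw [div_mul_eq_mul_div, mul_comm r ‖v‖]
        rw [div_lt_iff₀ (by positivity)]
        nlinarith
      have hS : (∑ i, α i * (x₀ + s • v) i) + β = 0 := by
        rw [sum_lin_add d v α x₀ s, hv, mul_zero, add_zero]
        exact hx₀S
      have e1 := hbp _ hmem hS
      have e2 := hbm _ hmem hS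
      have e3 := hbp _ hx₀U hx₀S
      have e4 := hbm _ hx₀U hx₀S
      rw [sum_lin_add d v ξp x₀ s] at e1
      rw [sum_lin_add d v ξm x₀ s] at e2
      have h5 : s * (∑ i, ξp i * v i) = s * (∑ i, ξm i * v i) := by linarith
      exact mul_left_cancel₀ (ne_of_gt hs) h5
  set lam : ℝ := ∑ i, (ξp i - ξm i) * α i with hlam_def
  have hδ : ∀ i, ξp i - ξm i = lam * α i := by
    set v : Fin d → ℝ := fun i => (ξp i - ξm i) - lam * α i with hv_def
    have hαv : (∑ i, α i * v i) = 0 := by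
      have h1 : ∑ i, α i * v i
          = (∑ i, (ξp i - ξm i) * α i) - lam * ∑ i, α i ^ 2 := by
        rw [Finset.mul_sum, ← Finset.sum_sub_distrib]
        apply Finset.sum_congr rfl
        intro i _
        simp only [hv_def]
        ring
      rw [h1, hα, ← hlam_def]
      ring
    have h3 := htang v hαv
    have h4 : ∑ i, (ξp i - ξm i) * v i = 0 := by
      have : ∑ i, (ξp i - ξm i) * v i
          = (∑ i, ξp i * v i) - (∑ i, ξm i * v i) := by
        rw [← Finset.sum_sub_distrib]
        apply Finset.sum_congr rfl
        intro i _
        ring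
      rw [this, h3]
      ring
    have h5 : ∑ i, v i ^ 2 = 0 := by
      have heq : ∑ i, v i ^ 2
          = (∑ i, (ξp i - ξm i) * v i) - lam * ∑ i, α i * v i := by
        rw [Finset.mul_sum, ← Finset.sum_sub_distrib]
        apply Finset.sum_congr rfl
        intro i _
        simp only [hv_def]
        ring
      rw [heq, h4, hαv]
      ring
    intro i
    have h6 : v i ^ 2 = 0 :=
      (Finset.sum_eq_zero_iff_of_nonneg (fun j _ => sq_nonneg (v j))).mp h5 i
        (Finset.mem_univ i)
    have h7 : v i = 0 := by
      have := sq_eq_zero_iff.mp h6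
      exact this
    simp only [hv_def] at h7
    linarith
  have hδsum : ∀ y : Fin d → ℝ,
      (∑ i, ξp i * y i) - (∑ i, ξm i * y i) = lam * (∑ i, α i * y i) := by
    intro y
    rw [Finset.mul_sum, ← Finset.sum_sub_distrib]
    apply Finset.sum_congr rfl
    intro i _
    rw [← sub_mul, hδ i]
    ring
  have hω : ωp - ωm = lam * β := by
    have e3 := hbp _ hx₀U hx₀S
    have e4 := hbm _ hx₀U hx₀S
    have h1 := hδsum x₀
    have h2 : (∑ i, α i * x₀ i) = -β := by linarith
    rw [h2] at h1
    linarith [mul_neg lam β ▸ h1]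
  set c : ℝ := lam / (1 - a) with hc_def
  have h1a : (1 : ℝ) - a ≠ 0 := by linarith
  have hclam : c * (1 - a) = lam := div_mul_cancel₀ lam h1a
  refine ⟨c, ωp - c * β, fun i => ξp i - c * α i, ?_⟩
  intro x hx
  set L : ℝ := ∑ i, α i * x i with hL_def
  have hζsum : (∑ i, (ξp i - c * α i) * x i) = (∑ i, ξp i * x i) - c * L := by
    rw [hL_def, Finset.mul_sum, ← Finset.sum_sub_distrib]
    apply Finset.sum_congr rfl
    intro i _
    ring
  rw [hζsum]
  rcases lt_trichotomy (L + β) 0 with ht | ht | ht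
  · -- negative side
    have hmax : max (L + β) (a * (L + β)) = a * (L + β) := by
      apply max_eq_right
      nlinarith
    rw [hmax, hm x hx ht]
    have hd := hδsum x
    rw [← hL_def] at hd
    nlinarith [hd, hω, hclam]
  · -- on the hyperplane
    have hmax : max (L + β) (a * (L + β)) = 0 := by
      rw [ht, mul_zero, max_self]
    rw [hmax, hbp x hx ht]
    have : c * L + c * β = 0 := by
      have := mul_eq_zero_of_right c ht
      linarith [mul_add c L β ▸ this]
    linarith
  · -- positive side
    have hmax : max (L + β) (a * (L + β)) = L + β := by
      apply max_eq_left
      nlinarith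
    rw [hmax, hp x hx ht]
    ring
end
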